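/- arXiv:2101.08756 — 4 statements merged into one kernel-verified Lean document; each statement's English description precedes it below -/
import Mathlib

section
/- Let i ∈ {0,1} and i ≤ k. An ω-regular language L ⊆ Σ^ω is not DPW[i,k]-recognizable if and only if there exist finite words x ∈ Σ* and x_i, x_{i+1}, …, x_k ∈ Σ⁺ such that for every even ℓ with i ≤ ℓ ≤ k: x·{x_i,…,x_k}*·({x_i,…,x_{ℓ-1}}*·x_ℓ)^ω ⊆ L, and for every odd ℓ with i ≤ ℓ ≤ k: x·{x_i,…,x_k}*·({x_i,…,x_{ℓ-1}}*·x_ℓ)^ω ∩ L = ∅. -/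
structure DetAuto (α : Type) where
  Q : Type
  [fin : Fintype Q]
  init : Q
  δ : Q → α → Q

attribute [instance] DetAuto.fin

/-- The run of a deterministic automaton on an infinite word. -/
def DetAuto.run {α : Type} (M : DetAuto α) (x : ℕ → α) : ℕ → M.Q
  | 0 => M.init
  | n + 1 => M.δ (M.run x n) (x n)

/-- Parity acceptance: the maximal color occurring infinitely often in the run is odd. -/
def ParityAccept {α : Type} (M : DetAuto α) (c : M.Q → ℕ) (x : ℕ → α) : Prop :=
  ∃ m, Odd m ∧ (∃ᶠ n in Filter.atTop, c (M.run x n) = m) ∧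
    ∀ m', (∃ᶠ n in Filter.atTop, c (M.run x n) = m') → m' ≤ m

/-- A language is ω-regular iff it is recognized by some deterministic parity automaton. -/
def OmegaRegular {α : Type} (L : Set (ℕ → α)) : Prop :=
  ∃ (M : DetAuto α) (c : M.Q → ℕ), ∀ x, x ∈ L ↔ ParityAccept M c x

/-- `u` is a prefix of the infinite word `w`. -/
def HasPrefixWord {α : Type} (w : ℕ → α) (u : List α) : Prop :=
  ∀ i : Fin u.length, w i.1 = u.get i

/-- The ω-language `x·W*·(W'*·v)^ω`. -/
def LangFlower {α : Type} (x : List α) (W W' : Set (List α)) (v : List α) :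
    Set (ℕ → α) :=
  { w | ∃ u : List (List α), (∀ z ∈ u, z ∈ W) ∧
        ∃ g : ℕ → List (List α), (∀ i, ∀ z ∈ g i, z ∈ W') ∧
        ∀ n, HasPrefixWord w
          (x ++ u.flatten ++
            ((List.range n).map (fun i => (g i).flatten ++ v)).flatten) }

/-- `L` is recognizable by a DPW with colors in `{i, …, k}`. -/
def DPWRecognizable {α : Type} (i k : ℕ) (L : Set (ℕ → α)) : Prop :=
  ∃ (M : DetAuto α) (c : M.Q → ℕ), (∀ q, i ≤ c q ∧ c q ≤ k) ∧
    ∀ x, x ∈ L ↔ ParityAccept M c x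

section Aux
variable {σ : Type}

/-- fold of the transition function over a finite word -/
def dstar (M : DetAuto σ) (w : List σ) (q : M.Q) : M.Q := w.foldl M.δ q

@[simp] lemma dstar_nil (M : DetAuto σ) (q : M.Q) : dstar M [] q = q := rfl

lemma dstar_append (M : DetAuto σ) (w₁ w₂ : List σ) (q : M.Q) :
    dstar M (w₁ ++ w₂) q = dstar M w₂ (dstar M w₁ q) := List.foldl_append ..

lemma dstar_concat (M : DetAuto σ) (w : List σ) (a : σ) (q : M.Q) :
    dstar M (w ++ [a]) q = M.δ (dstar M w q) a := by
  rw [dstar_append]; rfl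

/-- the word of the first `n` letters of an infinite word -/
def wordOf (z : ℕ → σ) (n : ℕ) : List σ := (List.range n).map z

@[simp] lemma wordOf_length (z : ℕ → σ) (n : ℕ) : (wordOf z n).length = n := by
  simp [wordOf]

lemma wordOf_succ (z : ℕ → σ) (n : ℕ) :
    wordOf z (n + 1) = wordOf z n ++ [z n] := by
  simp [wordOf, List.range_succ]

lemma run_eq_dstar (M : DetAuto σ) (z : ℕ → σ) (n : ℕ) :
    M.run z n = dstar M (wordOf z n) M.init := by
  induction n with
  | zero => rfl
  | succ n ih => rw [DetAuto.run, wordOf_succ, dstar_concat, ih]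

lemma hpw_wordOf {z : ℕ → σ} {u : List σ} (h : HasPrefixWord z u) {n : ℕ}
    (hn : n ≤ u.length) : wordOf z n = u.take n := by
  apply List.ext_get
  · simp [hn]
  · intro t h1 h2
    simp only [wordOf, List.get_eq_getElem, List.getElem_map, List.getElem_range]
    rw [List.getElem_take]
    have ht : t < u.length := lt_of_lt_of_le (by simpa using h1) hn
    exact h ⟨t, ht⟩

/-- run, along a known finite prefix -/
lemma run_prefix (M : DetAuto σ) {z : ℕ → σ} {u : List σ} (h : HasPrefixWord z u)
    {n : ℕ} (hn : n ≤ u.length) : M.run z n = dstar M (u.take n) M.init := by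
  rw [run_eq_dstar, hpw_wordOf h hn]

lemma run_segment (M : DetAuto σ) (z : ℕ → σ) (n j : ℕ) :
    M.run z (n + j) = dstar M (wordOf (fun t => z (n + t)) j) (M.run z n) := by
  induction j with
  | zero => rfl
  | succ j ih => rw [← Nat.add_assoc, DetAuto.run, wordOf_succ, dstar_concat, ih]

open scoped Classical

section B
variable {σ : Type}

variable {σ : Type}

def vpow (v : List σ) (n : ℕ) : List σ := (List.replicate n v).flatten

@[simp] lemma vpow_zero (v : List σ) : vpow v 0 = [] := rfl

lemma vpow_succ (v : List σ) (n : ℕ) : vpow v (n+1) = v ++ vpow v n := by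
  simp [vpow, List.replicate_succ]

lemma vpow_succ' (v : List σ) (n : ℕ) : vpow v (n+1) = vpow v n ++ v := by
  simp [vpow, List.replicate_succ']

@[simp] lemma vpow_length (v : List σ) (n : ℕ) : (vpow v n).length = n * v.length := by
  induction n with
  | zero => simp
  | succ n ih => rw [vpow_succ]; simp [ih, Nat.succ_mul]; ring

lemma vpow_add (v : List σ) (a b : ℕ) : vpow v (a+b) = vpow v a ++ vpow v b := by
  induction a with
  | zero => simp
  | succ a ih => rw [Nat.succ_add, vpow_succ, vpow_succ, ih, List.append_assoc]

lemma vpow_mul (v : List σ) (a b : ℕ) : vpow v (a*b) = vpow (vpow v a) b := by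
  induction b with
  | zero => simp
  | succ b ih => rw [Nat.mul_succ, vpow_add, vpow_succ', ih]

lemma vpow_prefix (v : List σ) {a b : ℕ} (h : a ≤ b) :
    vpow v a <+: vpow v b := by
  obtain ⟨c, rfl⟩ := Nat.exists_eq_add_of_le h
  rw [vpow_add]; exact List.prefix_append _ _
/-- the infinite word `y · v^ω` (with junk default `d`) -/
def ipw (d : σ) (y v : List σ) (t : ℕ) : σ := (y ++ vpow v (t+1)).getD t d

lemma ipw_lt_len {v : List σ} (hv : v ≠ []) (y : List σ) (t : ℕ) :
    t < (y ++ vpow v (t+1)).length := by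
  have : 1 ≤ v.length := List.length_pos_iff.2 hv
  simp only [List.length_append, vpow_length]
  calc t < t + 1 := Nat.lt_succ_self t
  _ ≤ (t+1) * v.length := Nat.le_mul_of_pos_right _ (by omega)
  _ ≤ y.length + (t+1) * v.length := by omega

lemma ipw_get {v : List σ} (hv : v ≠ []) (d : σ) (y : List σ) {n t : ℕ}
    (ht : t < (y ++ vpow v n).length) : ipw d y v t = (y ++ vpow v n).get ⟨t, ht⟩ := by
  have h1 : (y ++ vpow v (t+1)) <+: (y ++ vpow v (max (t+1) n)) :=
    (List.prefix_append_right_inj y).2 (vpow_prefix v (le_max_left _ _))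
  have h2 : (y ++ vpow v n) <+: (y ++ vpow v (max (t+1) n)) :=
    (List.prefix_append_right_inj y).2 (vpow_prefix v (le_max_right _ _))
  have e1 := h1.getElem (ipw_lt_len hv y t)
  have e2 := h2.getElem ht
  rw [ipw, List.getD_eq_getElem _ d (ipw_lt_len hv y t), e1, List.get_eq_getElem, e2]

lemma ipw_hasPrefix {v : List σ} (hv : v ≠ []) (d : σ) (y : List σ) (n : ℕ) :
    HasPrefixWord (ipw d y v) (y ++ vpow v n) :=
  fun t => ipw_get hv d y t.2

end B


section D
variable {σ : Type} (M : DetAuto σ)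

/-- states visited while reading the loop `w` from `q` (excluding the endpoint) -/
noncomputable def cycSet (q : M.Q) (w : List σ) : Finset M.Q :=
  (Finset.range w.length).image (fun j => dstar M (w.take j) q)

lemma mem_cycSet {q s : M.Q} {w : List σ} :
    s ∈ cycSet M q w ↔ ∃ j, j < w.length ∧ dstar M (w.take j) q = s := by
  simp [cycSet, Finset.mem_image]

lemma self_mem_cycSet {q : M.Q} {w : List σ} (hw : w ≠ []) : q ∈ cycSet M q w :=
  mem_cycSet M |>.2 ⟨0, List.length_pos_iff.2 hw, rfl⟩

lemma cycSet_nonempty {q : M.Q} {w : List σ} (hw : w ≠ []) : (cycSet M q w).Nonempty :=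
  ⟨q, self_mem_cycSet M hw⟩

lemma cycSet_prefix {q : M.Q} (w₁ w₂ : List σ) :
    cycSet M q w₁ ⊆ cycSet M q (w₁ ++ w₂) := by
  intro s hs
  obtain ⟨j, hj, he⟩ := (mem_cycSet M).1 hs
  refine (mem_cycSet M).2 ⟨j, by simp; omega, ?_⟩
  rwa [List.take_append_of_le_length (le_of_lt hj)]

lemma cycSet_append {q : M.Q} {w₁ w₂ : List σ} (h1 : dstar M w₁ q = q) :
    cycSet M q (w₁ ++ w₂) = cycSet M q w₁ ∪ cycSet M q w₂ := by
  ext s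
  simp only [mem_cycSet, Finset.mem_union]
  constructor
  · rintro ⟨j, hj, rfl⟩
    rcases lt_or_ge j w₁.length with hc | hc
    · exact Or.inl ⟨j, hc, by rw [List.take_append_of_le_length (le_of_lt hc)]⟩
    · refine Or.inr ⟨j - w₁.length, by simp at hj; omega, ?_⟩
      rw [List.take_append, List.take_of_length_le hc, dstar_append, h1]
  · rintro (⟨j, hj, rfl⟩ | ⟨j, hj, rfl⟩)
    · exact ⟨j, by simp; omega, by rw [List.take_append_of_le_length (le_of_lt hj)]⟩
    · refine ⟨w₁.length + j, by simp; omega, ?_⟩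
      rw [List.take_append, List.take_of_length_le (by omega), dstar_append, h1]
      congr 2
      omega

end D

section Rot
variable {σ : Type} (M : DetAuto σ)

lemma rot_drop {q0 : M.Q} {w : List σ} (hw : dstar M w q0 = q0) (j : ℕ) :
    dstar M (w.drop j) (dstar M (w.take j) q0) = q0 := by
  rw [← dstar_append, List.take_append_drop, hw]

lemma rot_fix {q0 : M.Q} {w : List σ} (hw : dstar M w q0 = q0) (j : ℕ) :
    dstar M (w.drop j ++ w.take j) (dstar M (w.take j) q0) = dstar M (w.take j) q0 := by
  rw [dstar_append, rot_drop M hw]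

lemma rot_state_lo {q0 : M.Q} {w : List σ} {j j' : ℕ} (hj' : j' ≤ w.length - j) :
    dstar M ((w.drop j ++ w.take j).take j') (dstar M (w.take j) q0)
      = dstar M (w.take (j + j')) q0 := by
  have e : j' - (w.drop j).length = 0 := by simp; omega
  rw [List.take_append, e, List.take_zero, List.append_nil,
    ← dstar_append, ← List.take_add]

lemma rot_state_hi {q0 : M.Q} {w : List σ} (hw : dstar M w q0 = q0) {j j' : ℕ}
    (hj : j ≤ w.length) (h1 : w.length - j ≤ j') (h2 : j' - (w.length - j) ≤ j) :
    dstar M ((w.drop j ++ w.take j).take j') (dstar M (w.take j) q0)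
      = dstar M (w.take (j' - (w.length - j))) q0 := by
  rw [List.take_append, List.take_of_length_le (by simp; omega),
    dstar_append, rot_drop M hw, List.length_drop, List.take_take,
    min_eq_left h2]

lemma cycSet_rotate {q0 : M.Q} {w : List σ} (hw : dstar M w q0 = q0) {j : ℕ}
    (hj : j ≤ w.length) :
    cycSet M (dstar M (w.take j) q0) (w.drop j ++ w.take j) = cycSet M q0 w := by
  ext s
  simp only [mem_cycSet]
  constructor
  · rintro ⟨j', hj', rfl⟩
    have hj'w : j' < w.length := by
      rw [List.length_append, List.length_drop, List.length_take, min_eq_left hj] at hj'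
      omega
    rcases le_or_gt j' (w.length - j) with hc | hc
    · rw [rot_state_lo M hc]
      rcases lt_or_eq_of_le (show j + j' ≤ w.length by omega) with h | h
      · exact ⟨j + j', h, rfl⟩
      · refine ⟨0, by omega, ?_⟩
        rw [h, List.take_length, hw, List.take_zero]
        rfl
    · rw [rot_state_hi M hw hj (le_of_lt hc) (by omega)]
      exact ⟨j' - (w.length - j), by omega, rfl⟩
  · rintro ⟨t, ht, rfl⟩
    rcases le_or_gt j t with hc | hc
    · refine ⟨t - j, by
        rw [List.length_append, List.length_drop, List.length_take, min_eq_left hj]; omega, ?_⟩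
      rw [rot_state_lo M (by omega)]
      congr 2
      omega
    · refine ⟨w.length - j + t, by
        rw [List.length_append, List.length_drop, List.length_take, min_eq_left hj]; omega, ?_⟩
      rw [rot_state_hi M hw hj (by omega) (by omega)]
      congr 2
      omega

end Rot


section ACC
open Filter
variable {σ : Type} (M : DetAuto σ)

/-- `I` is the set of states of some cycle based at a reachable state. -/
def FSet (I : Finset M.Q) : Prop :=
  ∃ q y w, dstar M y M.init = q ∧ w ≠ [] ∧ dstar M w q = q ∧ cycSet M q w = I

lemma acc (c : M.Q → ℕ) (z : ℕ → σ) (I : Finset M.Q)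
    (h1 : ∀ᶠ n in atTop, M.run z n ∈ I)
    (h2 : ∀ s ∈ I, ∃ᶠ n in atTop, M.run z n = s)
    (hne : I.Nonempty) : ParityAccept M c z ↔ Odd (I.sup c) := by
  have hub : ∀ m', (∃ᶠ n in atTop, c (M.run z n) = m') → m' ≤ I.sup c := by
    intro m' hm'
    obtain ⟨n, hn1, hn2⟩ := (hm'.and_eventually h1).exists
    exact hn1 ▸ Finset.le_sup (f := c) hn2
  obtain ⟨s, hs, hcs⟩ := Finset.exists_mem_eq_sup I hne c
  have hfr : ∃ᶠ n in atTop, c (M.run z n) = I.sup c :=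
    (h2 s hs).mono (fun n hn => by rw [hn, ← hcs])
  constructor
  · rintro ⟨m, hodd, hm, hmax⟩
    have he : m = I.sup c := le_antisymm (hub m hm) (hmax _ hfr)
    exact he ▸ hodd
  · intro hodd
    exact ⟨I.sup c, hodd, hfr, hub⟩

lemma wordOf_take {σ : Type} (z : ℕ → σ) (a b : ℕ) (h : b ≤ a) :
    (wordOf z a).take b = wordOf z b := by
  simp [wordOf, List.take_range, ← List.map_take, min_eq_left h]

lemma gen (z : ℕ → σ) :
    ∃ I : Finset M.Q, FSet M I ∧ (∀ᶠ n in atTop, M.run z n ∈ I) ∧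
      (∀ s ∈ I, ∃ᶠ n in atTop, M.run z n = s) ∧ I.Nonempty := by
  set I : Finset M.Q := Finset.univ.filter (fun s => ∃ᶠ n in atTop, M.run z n = s) with hI
  have h2 : ∀ s ∈ I, ∃ᶠ n in atTop, M.run z n = s := by
    intro s hs; exact (Finset.mem_filter.1 hs).2
  have h1 : ∀ᶠ n in atTop, M.run z n ∈ I := by
    have hev : ∀ᶠ n in atTop, ∀ s ∈ Finset.univ.filter
        (fun s : M.Q => ¬ ∃ᶠ n in atTop, M.run z n = s), M.run z n ≠ s := by
      rw [Filter.eventually_all_finset]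
      intro s hs
      exact Filter.not_frequently.1 (Finset.mem_filter.1 hs).2
    refine hev.mono (fun n hn => ?_)
    by_contra hc
    exact hn (M.run z n) (Finset.mem_filter.2 ⟨Finset.mem_univ _, by
      intro hf; exact hc (Finset.mem_filter.2 ⟨Finset.mem_univ _, hf⟩)⟩) rfl
  have hne : I.Nonempty := by
    by_contra hc
    rw [Finset.not_nonempty_iff_eq_empty] at hc
    obtain ⟨n, hn⟩ := h1.exists
    rw [hc] at hn
    exact absurd hn (Finset.notMem_empty _)
  refine ⟨I, ?_, h1, h2, hne⟩
  obtain ⟨N, hN⟩ := Filter.eventually_atTop.1 h1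
  obtain ⟨s0, hs0⟩ := hne
  obtain ⟨n1, hn1N, hn1⟩ := Filter.frequently_atTop.1 (h2 s0 hs0) N
  have hocc : ∀ s, s ∈ I → ∃ m, n1 + 1 ≤ m ∧ M.run z m = s := by
    intro s hs
    obtain ⟨m, hm1, hm2⟩ := Filter.frequently_atTop.1 (h2 s hs) (n1 + 1)
    exact ⟨m, hm1, hm2⟩
  choose o ho1 ho2 using hocc
  set O : M.Q → ℕ := fun s => if h : s ∈ I then o s h else 0 with hO
  obtain ⟨n2, hn2B, hn2⟩ := Filter.frequently_atTop.1 (h2 s0 hs0) (Finset.univ.sup O + 1)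
  have hOle : ∀ s (h : s ∈ I), o s h ≤ Finset.univ.sup O := by
    intro s h
    have : O s = o s h := dif_pos h
    exact this ▸ Finset.le_sup (Finset.mem_univ s)
  have hn12 : n1 + 1 ≤ n2 := le_trans (le_trans (ho1 s0 hs0) (hOle s0 hs0)) (by omega)
  set q := M.run z n1 with hq
  set w := wordOf (fun t => z (n1 + t)) (n2 - n1) with hw
  have hkey : ∀ j, j ≤ n2 - n1 → dstar M (w.take j) q = M.run z (n1 + j) := by
    intro j hj
    rw [hw, wordOf_take _ _ _ hj, hq, ← run_segment]
  refine ⟨q, wordOf z n1, w, (run_eq_dstar M z n1).symm, ?_, ?_, ?_⟩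
  · rw [hw]
    intro hcon
    have := congrArg List.length hcon
    simp at this
    omega
  · have := hkey (n2 - n1) le_rfl
    rw [List.take_of_length_le (by simp [hw])] at this
    rw [this]
    have : n1 + (n2 - n1) = n2 := by omega
    rw [this, hn2]
    exact hn1.symm
  · ext s
    rw [mem_cycSet]
    constructor
    · rintro ⟨j, hj, rfl⟩
      rw [hkey j (by simp [hw] at hj; omega)]
      exact hN _ (by omega)
    · intro hs
      refine ⟨o s hs - n1, by simp [hw]; have := ho1 s hs; have := hOle s hs; omega, ?_⟩
      rw [hkey _ (by have := ho1 s hs; have := hOle s hs; omega)]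
      have : n1 + (o s hs - n1) = o s hs := by have := ho1 s hs; omega
      rw [this, ho2]

end ACC

section PER
open Filter
variable {σ : Type} (M : DetAuto σ)

lemma dstar_vpow {q : M.Q} {v : List σ} (hq : dstar M v q = q) (b : ℕ) :
    dstar M (vpow v b) q = q := by
  induction b with
  | zero => rfl
  | succ b ih => rw [vpow_succ, dstar_append, hq, ih]

lemma run_ipw (d : σ) {y v : List σ} {q : M.Q} (hv : v ≠ [])
    (hy : dstar M y M.init = q) (hq : dstar M v q = q) (b : ℕ) {r : ℕ}
    (hr : r ≤ v.length) :
    M.run (ipw d y v) (y.length + b * v.length + r) = dstar M (v.take r) q := by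
  have hvl : 1 ≤ v.length := List.length_pos_iff.2 hv
  have hT : y.length + b * v.length + r ≤ (y ++ vpow v (b+1)).length := by
    simp [Nat.succ_mul]
    omega
  rw [run_prefix M (ipw_hasPrefix hv d y (b+1)) hT]
  rw [List.take_append, List.take_of_length_le (by omega)]
  have e1 : y.length + b * v.length + r - y.length = b * v.length + r := by omega
  rw [e1]
  have e2 : (vpow v (b+1)).take (b * v.length + r) = vpow v b ++ v.take r := by
    rw [vpow_succ', List.take_append,
      List.take_of_length_le (by simp), vpow_length]
    congr 2
    omega
  rw [e2, ← List.append_assoc, dstar_append, dstar_append, hy, dstar_vpow M hq]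

lemma per (c : M.Q → ℕ) (d : σ) {y v : List σ} {q : M.Q} (hv : v ≠ [])
    (hy : dstar M y M.init = q) (hq : dstar M v q = q) :
    ParityAccept M c (ipw d y v) ↔ Odd ((cycSet M q v).sup c) := by
  have hvl : 1 ≤ v.length := List.length_pos_iff.2 hv
  apply acc
  · rw [eventually_atTop]
    refine ⟨y.length, fun T hT => ?_⟩
    obtain ⟨a, rfl⟩ : ∃ a, T = y.length + a := ⟨T - y.length, by omega⟩
    have hd : y.length + a = y.length + (a / v.length) * v.length + a % v.length := by
      have := Nat.div_add_mod a v.length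
      have h2 : v.length * (a / v.length) = (a / v.length) * v.length := Nat.mul_comm _ _
      omega
    rw [hd, run_ipw M d hv hy hq _ (le_of_lt (Nat.mod_lt _ (by omega)))]
    exact (mem_cycSet M).2 ⟨_, Nat.mod_lt _ (by omega), rfl⟩
  · intro s hs
    obtain ⟨j, hj, rfl⟩ := (mem_cycSet M).1 hs
    rw [frequently_atTop]
    intro N
    refine ⟨y.length + N * v.length + j, by nlinarith, ?_⟩
    rw [run_ipw M d hv hy hq _ (le_of_lt hj)]
  · exact cycSet_nonempty M hv

end PER

section CH
variable {σ : Type} (M : DetAuto σ)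

lemma fset_nonempty {I : Finset M.Q} (h : FSet M I) : I.Nonempty := by
  obtain ⟨q, y, w, hy, hw, hfix, hcyc⟩ := h
  exact ⟨q, hcyc ▸ self_mem_cycSet M hw⟩

lemma fset_rot {I : Finset M.Q} (h : FSet M I) {s : M.Q} (hs : s ∈ I) :
    ∃ y w, dstar M y M.init = s ∧ w ≠ [] ∧ dstar M w s = s ∧ cycSet M s w = I := by
  obtain ⟨q, y, w, hy, hw, hfix, hcyc⟩ := h
  obtain ⟨j, hj, he⟩ := (mem_cycSet M).1 (hcyc ▸ hs)
  refine ⟨y ++ w.take j, w.drop j ++ w.take j, ?_, ?_, ?_, ?_⟩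
  · rw [dstar_append, hy, he]
  · intro hcon
    have := congrArg List.length hcon
    simp [min_eq_left (le_of_lt hj)] at this
    omega
  · rw [← he, rot_fix M hfix]
  · rw [← he, cycSet_rotate M hfix (le_of_lt hj), hcyc]

lemma fset_union {I J : Finset M.Q} (hI : FSet M I) (hJ : FSet M J) {s : M.Q}
    (hsI : s ∈ I) (hsJ : s ∈ J) : FSet M (I ∪ J) := by
  obtain ⟨y1, w1, hy1, hw1, hf1, hc1⟩ := fset_rot M hI hsI
  obtain ⟨y2, w2, hy2, hw2, hf2, hc2⟩ := fset_rot M hJ hsJ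
  refine ⟨s, y1, w1 ++ w2, hy1, by simp [hw1], ?_, ?_⟩
  · rw [dstar_append, hf1, hf2]
  · rw [cycSet_append M hf1, hc1, hc2]

variable (c : M.Q → ℕ) (i : ℕ)

/-- base value of a chain starting with loop-set `I` -/
def bI (I : Finset M.Q) : ℕ := if (I.sup c) % 2 = i % 2 then i else i + 1

/-- `Ch I v` : there is an alternating chain of nested loop-sets of value `v` ending at `I` -/
inductive Ch : Finset M.Q → ℕ → Prop
  | base {I} : FSet M I → Ch I (bI M c i I)
  | step {J I v} : Ch J v → FSet M I → J ⊆ I → (I.sup c) % 2 ≠ v % 2 → Ch I (v + 1)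

lemma bI_le (I : Finset M.Q) : bI M c i I ≤ i + 1 := by
  unfold bI; split <;> omega

lemma bI_ge (I : Finset M.Q) : i ≤ bI M c i I := by
  unfold bI; split <;> omega

lemma bI_parity (I : Finset M.Q) : (bI M c i I) % 2 = (I.sup c) % 2 := by
  unfold bI; split <;> omega

lemma ch_ge {I : Finset M.Q} {v : ℕ} (h : Ch M c i I v) : i ≤ v := by
  induction h with
  | base hF => exact bI_ge M c i _
  | step hJ hF hsub hpar ih => omega

lemma ch_parity {I : Finset M.Q} {v : ℕ} (h : Ch M c i I v) : v % 2 = (I.sup c) % 2 := by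
  induction h with
  | base hF => exact bI_parity M c i _
  | step hJ hF hsub hpar ih => omega

lemma ch_fset {I : Finset M.Q} {v : ℕ} (h : Ch M c i I v) : FSet M I := by
  induction h with
  | base hF => exact hF
  | step hJ hF hsub hpar ih => exact hF

lemma ch_ext {I : Finset M.Q} {v : ℕ} (h : Ch M c i I v) :
    ∃ g : ℕ → Finset M.Q,
      (i + 1 ≤ v → g v = I) ∧
      (∀ t, i + 1 ≤ t → t ≤ v → FSet M (g t) ∧ ((g t).sup c) % 2 = t % 2) ∧
      (∀ t t', i + 1 ≤ t → t ≤ t' → t' ≤ v → g t ⊆ g t') := by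
  induction h with
  | @base I hF =>
    refine ⟨fun _ => I, fun _ => rfl, ?_, fun _ _ _ _ _ => le_refl I⟩
    intro t ht1 ht2
    have hble := bI_le M c i I
    have hbge := bI_ge M c i I
    have hbp := bI_parity M c i I
    have : t = bI M c i I := by omega
    refine ⟨hF, ?_⟩
    show (I.sup c) % 2 = t % 2
    omega
  | @step J I v hJ hF hsub hpar ih =>
    obtain ⟨g', hg1, hg2, hg3⟩ := ih
    have hvi : i ≤ v := ch_ge M c i hJ
    refine ⟨fun t => if t ≤ v then g' t else I, ?_, ?_, ?_⟩
    · intro _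
      simp
    · intro t ht1 ht2
      by_cases hc : t ≤ v
      · simpa [hc] using hg2 t ht1 hc
      · have : t = v + 1 := by omega
        simp only [if_neg hc]
        exact ⟨hF, by omega⟩
    · intro t t' ht1 htt ht2
      by_cases hc' : t' ≤ v
      · have hc : t ≤ v := le_trans htt hc'
        simpa [hc, hc'] using hg3 t t' ht1 htt hc'
      · by_cases hc : t ≤ v
        · have hv1 : i + 1 ≤ v := le_trans ht1 hc
          simp only [if_pos hc, if_neg hc']
          exact le_trans (hg3 t v ht1 hc le_rfl) (le_trans (le_of_eq (hg1 hv1)) hsub)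
        · simp [hc, hc']

lemma ch_bound {k : ℕ} (hik : i ≤ k) (hnf : ¬ ∃ I, Ch M c i I (k + 1)) :
    ∀ {I : Finset M.Q} {v : ℕ}, Ch M c i I v → v ≤ k := by
  intro I v h
  induction h with
  | @base I hF =>
    have := bI_le M c i I
    by_cases hc : bI M c i I = k + 1
    · exact absurd ⟨I, hc ▸ Ch.base hF⟩ hnf
    · omega
  | @step J I v hJ hF hsub hpar ih =>
    by_cases hc : v + 1 = k + 1
    · exact absurd ⟨I, hc ▸ Ch.step hJ hF hsub hpar⟩ hnf
    · omega

variable (k : ℕ)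

/-- the recoloring obtained from chain values -/
noncomputable def recolor (q : M.Q) : ℕ :=
  (insert i ((Finset.range (k+1)).filter
    (fun v => ∃ I, Ch M c i I v ∧ q ∈ I ∧ c q = I.sup c))).max' (Finset.insert_nonempty _ _)

lemma recolor_ge_i (q : M.Q) : i ≤ recolor M c i k q :=
  Finset.le_max' _ _ (Finset.mem_insert_self _ _)

lemma recolor_le (hik : i ≤ k) (q : M.Q) : recolor M c i k q ≤ k := by
  apply Finset.max'_le
  intro y hy
  rcases Finset.mem_insert.1 hy with h | h
  · omega
  · have := (Finset.mem_filter.1 h).1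
    rw [Finset.mem_range] at this
    omega

lemma recolor_ge_of {q : M.Q} {I : Finset M.Q} {v : ℕ} (h : Ch M c i I v)
    (hq : q ∈ I) (hcq : c q = I.sup c) (hv : v ≤ k) : v ≤ recolor M c i k q := by
  apply Finset.le_max'
  exact Finset.mem_insert.2 (Or.inr (Finset.mem_filter.2
    ⟨Finset.mem_range.2 (by omega), I, h, hq, hcq⟩))

lemma recolor_cases (q : M.Q) : recolor M c i k q = i ∨
    ∃ I, Ch M c i I (recolor M c i k q) ∧ q ∈ I ∧ c q = I.sup c := by
  have := Finset.max'_mem (insert i ((Finset.range (k+1)).filter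
    (fun v => ∃ I, Ch M c i I v ∧ q ∈ I ∧ c q = I.sup c))) (Finset.insert_nonempty _ _)
  rcases Finset.mem_insert.1 this with h | h
  · exact Or.inl h
  · exact Or.inr (Finset.mem_filter.1 h).2

lemma recolor_parity (hik : i ≤ k) (hnf : ¬ ∃ I, Ch M c i I (k + 1))
    {I : Finset M.Q} (hF : FSet M I) :
    (I.sup (recolor M c i k)) % 2 = (I.sup c) % 2 := by
  have hne := fset_nonempty M hF
  obtain ⟨qm, hqm, hcqm⟩ := Finset.exists_mem_eq_sup I hne c
  obtain ⟨qh, hqh, hch⟩ := Finset.exists_mem_eq_sup I hne (recolor M c i k)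
  rw [hch]
  have hbase : Ch M c i I (bI M c i I) := Ch.base hF
  have hlow : bI M c i I ≤ I.sup (recolor M c i k) := by
    refine le_trans (recolor_ge_of M c i k hbase hqm hcqm.symm
      (ch_bound M c i hik hnf hbase)) ?_
    exact Finset.le_sup hqm
  rw [hch] at hlow
  rcases recolor_cases M c i k qh with h | ⟨J, hJ, hqhJ, hcqh⟩
  · rw [h]
    have hge := bI_ge M c i I
    have h2 : bI M c i I = i := by omega
    have h3 := bI_parity M c i I
    omega
  · set v := recolor M c i k qh with hv
    by_cases hp : v % 2 = (I.sup c) % 2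
    · omega
    · exfalso
      have hKF : FSet M (I ∪ J) := fset_union M hF (ch_fset M c i hJ) hqh hqhJ
      have hsupK : (I ∪ J).sup c = I.sup c := by
        rw [Finset.sup_union]
        have hle : J.sup c ≤ I.sup c := by
          rw [← hcqh]
          exact Finset.le_sup hqh
        exact sup_eq_left.2 hle
      have hstep : Ch M c i (I ∪ J) (v + 1) :=
        Ch.step hJ hKF Finset.subset_union_right (by omega)
      have hb1 : v + 1 ≤ k := ch_bound M c i hik hnf hstep
      have : v + 1 ≤ recolor M c i k qm :=
        recolor_ge_of M c i k hstep (Finset.mem_union_left _ hqm)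
          (by rw [hsupK, hcqm]) hb1
      have hfin : v + 1 ≤ I.sup (recolor M c i k) := le_trans this (Finset.le_sup hqm)
      rw [hch] at hfin
      omega

end CH

section CORE
open Filter
variable {σ : Type} (M : DetAuto σ)

lemma flat_fix {q : M.Q} {σl : List (List σ)} (h : ∀ w ∈ σl, dstar M w q = q) :
    dstar M σl.flatten q = q := by
  induction σl with
  | nil => rfl
  | cons w σl ih =>
    rw [List.flatten_cons, dstar_append, h w (by simp)]
    exact ih (fun w' hw' => h w' (by simp [hw']))

lemma flat_states {q : M.Q} {S : Finset M.Q} {σl : List (List σ)} (hq : q ∈ S)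
    (hfix : ∀ w ∈ σl, dstar M w q = q)
    (hmid : ∀ w ∈ σl, ∀ j, j ≤ w.length → dstar M (w.take j) q ∈ S) :
    ∀ j, j ≤ σl.flatten.length → dstar M (σl.flatten.take j) q ∈ S := by
  induction σl with
  | nil =>
    intro j hj
    simp at hj
    subst hj
    simpa using hq
  | cons w σl ih =>
    intro j hj
    rw [List.flatten_cons, List.length_append] at hj
    rw [List.flatten_cons, List.take_append]
    by_cases hc : j ≤ w.length
    · have : j - w.length = 0 := by omega
      rw [this, List.take_zero, List.append_nil]
      exact hmid w (by simp) j hc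
    · rw [List.take_of_length_le (by omega), dstar_append, hfix w (by simp)]
      refine ih (fun w' hw' => hfix w' (by simp [hw']))
        (fun w' hw' => hmid w' (by simp [hw'])) _ ?_
      omega

lemma loc {Lf : ℕ → ℕ} (hmono : ∀ n, Lf n < Lf (n+1)) {t : ℕ} (ht : Lf 0 ≤ t) :
    ∃ n, Lf n ≤ t ∧ t < Lf (n+1) := by
  have hsm : StrictMono Lf := strictMono_nat_of_lt_succ hmono
  have hub : ∃ N, t < Lf N := ⟨t + 1, lt_of_lt_of_le (by omega) (hsm.le_apply)⟩
  classical
  set N := Nat.find hub with hN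
  have hNs : t < Lf N := Nat.find_spec hub
  have hN0 : N ≠ 0 := by
    intro hc
    rw [hc] at hNs
    omega
  have he : N - 1 + 1 = N := by omega
  refine ⟨N - 1, ?_, by rw [he]; exact hNs⟩
  have := Nat.find_min hub (m := N - 1) (by omega)
  omega

lemma core (c : M.Q → ℕ) {i k ℓ : ℕ} (hil : i ≤ ℓ) (hlk : ℓ ≤ k)
    {q : M.Q} {x : List σ} (hx : dstar M x M.init = q) (f : ℕ → List σ)
    (hfl : f ℓ ≠ []) {S : Finset M.Q} (hq : q ∈ S)
    (hfix : ∀ m, i ≤ m → m ≤ k → dstar M (f m) q = q)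
    (hsub : ∀ m, i ≤ m → m ≤ ℓ → ∀ j, j ≤ (f m).length → dstar M ((f m).take j) q ∈ S)
    (hcyc : cycSet M q (f ℓ) = S) {z : ℕ → σ}
    (hz : z ∈ LangFlower x {u | ∃ m, i ≤ m ∧ m ≤ k ∧ u = f m}
      {u | ∃ m, i ≤ m ∧ m < ℓ ∧ u = f m} (f ℓ)) :
    ParityAccept M c z ↔ Odd (S.sup c) := by
  obtain ⟨u, hu, g, hg, hpre⟩ := hz
  set B : ℕ → List σ := fun n => (g n).flatten ++ f ℓ with hB
  set pref : ℕ → List σ :=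
    fun n => x ++ u.flatten ++ ((List.range n).map B).flatten
    with hpref
  have hufix : ∀ w ∈ u, dstar M w q = q := by
    intro w hw
    obtain ⟨m, hm1, hm2, rfl⟩ := hu w hw
    exact hfix m hm1 hm2
  have hgfix : ∀ n, ∀ w ∈ g n, dstar M w q = q := by
    intro n w hw
    obtain ⟨m, hm1, hm2, rfl⟩ := hg n w hw
    exact hfix m hm1 (le_trans (le_of_lt hm2) hlk)
  have hBfix : ∀ n, dstar M (B n) q = q := by
    intro n
    rw [hB, dstar_append, flat_fix M (hgfix n), hfix ℓ hil hlk]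
  have hpref_succ : ∀ n, pref (n+1) = pref n ++ B n := by
    intro n
    simp only [hpref, hB, List.range_succ, List.map_append, List.flatten_append,
      List.map_cons, List.map_nil, List.flatten_cons, List.flatten_nil, List.append_nil,
      List.append_assoc]
  have hprefq : ∀ n, dstar M (pref n) M.init = q := by
    intro n
    induction n with
    | zero =>
      simp only [hpref, List.range_zero, List.map_nil, List.flatten_nil, List.append_nil]
      rw [dstar_append, hx, flat_fix M hufix]
    | succ n ih => rw [hpref_succ n, dstar_append, ih, hBfix n]
  have hBlen : ∀ n, 1 ≤ (B n).length := by
    intro n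
    have : (f ℓ).length ≠ 0 := fun hc => hfl (List.length_eq_zero_iff.1 hc)
    simp [hB]
    omega
  have hLmono : ∀ n, (pref n).length < (pref (n+1)).length := by
    intro n
    rw [hpref_succ n]
    have := hBlen n
    simp
    omega
  have hrun : ∀ n j, j ≤ (B n).length →
      M.run z ((pref n).length + j) = dstar M ((B n).take j) q := by
    intro n j hj
    have hle : (pref n).length + j ≤ (pref (n+1)).length := by
      rw [hpref_succ n]
      simp
      omega
    have h0' : M.run z ((pref n).length + j)
        = dstar M ((pref (n+1)).take ((pref n).length + j)) M.init :=
      run_prefix M (hpre (n+1)) hle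
    rw [h0', hpref_succ n, List.take_append,
      List.take_of_length_le (by omega), dstar_append, hprefq n]
    congr 2
    omega
  have hmidB : ∀ n j, j ≤ (B n).length → dstar M ((B n).take j) q ∈ S := by
    intro n j hj
    have hBflat : B n = (g n ++ [f ℓ]).flatten := by
      simp [hB]
    rw [hBflat] at hj ⊢
    refine flat_states M hq ?_ ?_ j hj
    · intro w hw
      rcases List.mem_append.1 hw with h | h
      · exact hgfix n w h
      · simp at h
        rw [h]
        exact hfix ℓ hil hlk
    · intro w hw j' hj'
      rcases List.mem_append.1 hw with h | h
      · obtain ⟨m, hm1, hm2, rfl⟩ := hg n w h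
        exact hsub m hm1 (le_of_lt hm2) j' hj'
      · simp at h
        subst h
        exact hsub ℓ hil le_rfl j' hj'
  apply acc
  · rw [eventually_atTop]
    refine ⟨(pref 0).length, fun T hT => ?_⟩
    obtain ⟨n, hn1, hn2⟩ := loc hLmono hT
    have hj : T - (pref n).length ≤ (B n).length := by
      have := hpref_succ n
      have : (pref (n+1)).length = (pref n).length + (B n).length := by
        rw [hpref_succ n]; simp
      omega
    have hTe : T = (pref n).length + (T - (pref n).length) := by omega
    rw [hTe, hrun n _ hj]
    exact hmidB n _ hj
  · intro s hs
    rw [← hcyc] at hs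
    obtain ⟨j, hj, rfl⟩ := (mem_cycSet M).1 hs
    rw [frequently_atTop]
    intro N
    have hsm : StrictMono (fun n => (pref n).length) := strictMono_nat_of_lt_succ hLmono
    refine ⟨(pref N).length + ((g N).flatten.length + j), le_trans hsm.le_apply (by omega), ?_⟩
    have hjB : (g N).flatten.length + j ≤ (B N).length := by
      simp [hB]
      omega
    rw [hrun N _ hjB, hB]
    rw [List.take_append, List.take_of_length_le (by omega)]
    have : (g N).flatten.length + j - (g N).flatten.length = j := by omega
    rw [this, dstar_append, flat_fix M (hgfix N)]
  · exact ⟨q, hq⟩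

end CORE

section T1
variable {σ : Type} (M : DetAuto σ)

lemma t1 (cA : M.Q → ℕ) (i k : ℕ) (hik : i ≤ k)
    (h : ∃ I, Ch M cA i I (k+1)) (L : Set (ℕ → σ))
    (hLrec : ∀ z, z ∈ L ↔ ParityAccept M cA z) :
    ∃ (x : List σ) (f : ℕ → List σ),
      (∀ ℓ, i ≤ ℓ → ℓ ≤ k → f ℓ ≠ []) ∧
      (∀ ℓ, i ≤ ℓ → ℓ ≤ k → Even ℓ →
        LangFlower x {u | ∃ m, i ≤ m ∧ m ≤ k ∧ u = f m}
          {u | ∃ m, i ≤ m ∧ m < ℓ ∧ u = f m} (f ℓ) ⊆ L) ∧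
      (∀ ℓ, i ≤ ℓ → ℓ ≤ k → Odd ℓ →
        LangFlower x {u | ∃ m, i ≤ m ∧ m ≤ k ∧ u = f m}
          {u | ∃ m, i ≤ m ∧ m < ℓ ∧ u = f m} (f ℓ) ∩ L = ∅) := by
  obtain ⟨I, hch⟩ := h
  obtain ⟨g, hg1, hg2, hg3⟩ := ch_ext M cA i hch
  set J : ℕ → Finset M.Q := fun ℓ => g (ℓ+1) with hJ
  have hJF : ∀ ℓ, i ≤ ℓ → ℓ ≤ k → FSet M (J ℓ) :=
    fun ℓ h1 h2 => (hg2 (ℓ+1) (by omega) (by omega)).1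
  have hJp : ∀ ℓ, i ≤ ℓ → ℓ ≤ k → ((J ℓ).sup cA) % 2 = (ℓ+1) % 2 := by
    intro ℓ h1 h2
    have := (hg2 (ℓ+1) (by omega) (by omega)).2
    simp only [hJ]
    omega
  have hJsub : ∀ m ℓ, i ≤ m → m ≤ ℓ → ℓ ≤ k → J m ⊆ J ℓ :=
    fun m ℓ h1 h2 h3 => hg3 (m+1) (ℓ+1) (by omega) (by omega) (by omega)
  obtain ⟨q, hq⟩ := fset_nonempty M (hJF i le_rfl hik)
  have hqJ : ∀ ℓ, i ≤ ℓ → ℓ ≤ k → q ∈ J ℓ :=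
    fun ℓ h1 h2 => hJsub i ℓ le_rfl h1 h2 hq
  have hloop : ∀ ℓ, ∃ w : List σ, i ≤ ℓ → ℓ ≤ k →
      w ≠ [] ∧ dstar M w q = q ∧ cycSet M q w = J ℓ := by
    intro ℓ
    by_cases hr : i ≤ ℓ ∧ ℓ ≤ k
    · obtain ⟨y, w, _, hw, hfx, hcs⟩ := fset_rot M (hJF ℓ hr.1 hr.2) (hqJ ℓ hr.1 hr.2)
      exact ⟨w, fun _ _ => ⟨hw, hfx, hcs⟩⟩
    · exact ⟨[], fun h1 h2 => absurd ⟨h1, h2⟩ hr⟩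
  choose f hf using hloop
  obtain ⟨x, w0, hx, _, _, _⟩ := fset_rot M (hJF i le_rfl hik) hq
  have hcore : ∀ ℓ, i ≤ ℓ → ℓ ≤ k → ∀ z,
      z ∈ LangFlower x {u | ∃ m, i ≤ m ∧ m ≤ k ∧ u = f m}
        {u | ∃ m, i ≤ m ∧ m < ℓ ∧ u = f m} (f ℓ) →
      (ParityAccept M cA z ↔ Odd ((J ℓ).sup cA)) := by
    intro ℓ h1 h2 z hz
    refine core M cA h1 h2 hx f ((hf ℓ h1 h2).1) (hqJ ℓ h1 h2) ?_ ?_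
      ((hf ℓ h1 h2).2.2) hz
    · exact fun m hm1 hm2 => (hf m hm1 hm2).2.1
    · intro m hm1 hm2 j hj
      rcases lt_or_eq_of_le hj with hlt | heq
      · refine hJsub m ℓ hm1 hm2 h2 ?_
        rw [← (hf m hm1 (le_trans hm2 h2)).2.2]
        exact (mem_cycSet M).2 ⟨j, hlt, rfl⟩
      · rw [heq, List.take_length, (hf m hm1 (le_trans hm2 h2)).2.1]
        exact hqJ ℓ h1 h2
  refine ⟨x, f, fun ℓ h1 h2 => (hf ℓ h1 h2).1, ?_, ?_⟩
  · intro ℓ h1 h2 hev z hz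
    rw [hLrec z, hcore ℓ h1 h2 z hz, Nat.odd_iff, hJp ℓ h1 h2]
    rcases Nat.even_iff.1 hev with he
    omega
  · intro ℓ h1 h2 hodd
    rw [Set.eq_empty_iff_forall_notMem]
    rintro z ⟨hz, hzL⟩
    have := (hcore ℓ h1 h2 z hz).1 ((hLrec z).1 hzL)
    rw [Nat.odd_iff, hJp ℓ h1 h2] at this
    rcases Nat.odd_iff.1 hodd with ho
    omega

end T1

section IDEM
variable {σ : Type} (M : DetAuto σ)

lemma dstar_vpow_iter (w : List σ) (n : ℕ) (q : M.Q) :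
    dstar M (vpow w n) q = (fun p => dstar M w p)^[n] q := by
  induction n generalizing q with
  | zero => rfl
  | succ n ih =>
    rw [vpow_succ, dstar_append, Function.iterate_succ_apply, ih]

lemma idem_exists (w : List σ) : ∃ m, 1 ≤ m ∧
    ∀ q, dstar M (vpow w m) (dstar M (vpow w m) q) = dstar M (vpow w m) q := by
  set g : M.Q → M.Q := fun p => dstar M w p with hg
  have hkey : ∀ a b : ℕ, a < b → g^[a] = g^[b] → ∃ m, 1 ≤ m ∧
      ∀ q, dstar M (vpow w m) (dstar M (vpow w m) q) = dstar M (vpow w m) q := by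
    intro a b hab heq
    have hper : ∀ s, g^[s + a + (b - a)] = g^[s + a] := by
      intro s
      have h1 : s + a + (b - a) = s + b := by omega
      rw [h1, Function.iterate_add, Function.iterate_add, heq]
    have hmul : ∀ cnt t, a ≤ t → g^[t + cnt * (b - a)] = g^[t] := by
      intro cnt
      induction cnt with
      | zero => intro t ht; rw [Nat.zero_mul, Nat.add_zero]
      | succ cnt ih =>
        intro t ht
        have h1 : t + (cnt + 1) * (b - a) = (t - a + cnt * (b - a)) + a + (b - a) := by
          have : cnt * (b-a) + (b-a) = (cnt+1) * (b-a) := by ring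
          omega
        rw [h1, hper, show t - a + cnt * (b-a) + a = t + cnt * (b-a) by omega, ih t ht]
    have hm1 : 1 ≤ (b - a) * (a + 1) := by
      have h := Nat.mul_le_mul (show 1 ≤ b - a by omega) (show 1 ≤ a + 1 by omega)
      simpa using h
    have hma : a + 1 ≤ (b - a) * (a + 1) := by
      have h := Nat.mul_le_mul (show 1 ≤ b - a by omega) (show a + 1 ≤ a + 1 by omega)
      simpa using h
    refine ⟨(b - a) * (a + 1), hm1, ?_⟩
    intro q
    rw [dstar_vpow_iter, dstar_vpow_iter, ← Function.iterate_add_apply]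
    have h2 : (b - a) * (a + 1) + (b - a) * (a + 1)
        = (b - a) * (a + 1) + (a + 1) * (b - a) := by ring
    rw [h2, hmul (a + 1) _ (by omega)]
  obtain ⟨a, b, hne, heq⟩ := Finite.exists_ne_map_eq_of_infinite (fun n : ℕ => g^[n])
  rcases hne.lt_or_gt with hab | hab
  · exact hkey a b hab heq
  · exact hkey b a hab heq.symm

end IDEM

section PSYM
variable {σ : Type} (M : DetAuto σ)

/-- chosen idempotent power exponent for the word `w` -/
noncomputable def pw (w : List σ) : ℕ := Classical.choose (idem_exists M w)

lemma pw_pos (w : List σ) : 1 ≤ pw M w := (Classical.choose_spec (idem_exists M w)).1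

lemma pw_idem (w : List σ) (q : M.Q) :
    dstar M (vpow w (pw M w)) (dstar M (vpow w (pw M w)) q) = dstar M (vpow w (pw M w)) q :=
  (Classical.choose_spec (idem_exists M w)).2 q

/-- symbol list `(pre · w · pre)^m` with `m` the idempotent exponent -/
noncomputable def psymAux (pre : List (List σ)) (w : List σ) : List (List σ) :=
  (List.replicate (pw M ((pre ++ [w] ++ pre).flatten)) (pre ++ [w] ++ pre)).flatten

variable (f : ℕ → List σ) (i : ℕ)

noncomputable def psym : ℕ → List (List σ)
  | 0 => psymAux M [] (f i)
  | (j+1) => psymAux M (psym j) (f (i+j+1))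

lemma flatten_replicate_flatten (m : ℕ) (H : List (List σ)) :
    ((List.replicate m H).flatten).flatten = vpow H.flatten m := by
  induction m with
  | zero => rfl
  | succ m ih =>
    rw [List.replicate_succ, List.flatten_cons, vpow_succ, List.flatten_append, ih]

lemma psymAux_flatten (pre : List (List σ)) (w : List σ) :
    (psymAux M pre w).flatten
      = vpow ((pre ++ [w] ++ pre).flatten) (pw M ((pre ++ [w] ++ pre).flatten)) :=
  flatten_replicate_flatten _ _

lemma psymAux_idem (pre : List (List σ)) (w : List σ) (q : M.Q) :
    dstar M (psymAux M pre w).flatten (dstar M (psymAux M pre w).flatten q)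
      = dstar M (psymAux M pre w).flatten q := by
  rw [psymAux_flatten]
  exact pw_idem M _ q

lemma flatten_triple (pre : List (List σ)) (w : List σ) :
    (pre ++ [w] ++ pre).flatten = pre.flatten ++ w ++ pre.flatten := by
  simp

lemma psymAux_ends (pre : List (List σ)) (w : List σ) :
    ∃ Z, (psymAux M pre w).flatten = Z ++ pre.flatten := by
  rw [psymAux_flatten]
  obtain ⟨m', hm'⟩ := Nat.exists_eq_add_of_le (pw_pos M ((pre ++ [w] ++ pre).flatten))
  refine ⟨vpow ((pre ++ [w] ++ pre).flatten) m' ++ pre.flatten ++ w, ?_⟩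
  rw [hm', Nat.add_comm, vpow_succ', flatten_triple]
  simp [List.append_assoc]

lemma psymAux_starts (pre : List (List σ)) (w : List σ) :
    ∃ Z, (psymAux M pre w).flatten = pre.flatten ++ Z := by
  rw [psymAux_flatten]
  obtain ⟨m', hm'⟩ := Nat.exists_eq_add_of_le (pw_pos M ((pre ++ [w] ++ pre).flatten))
  refine ⟨w ++ pre.flatten ++ vpow ((pre ++ [w] ++ pre).flatten) m', ?_⟩
  rw [hm', Nat.add_comm, vpow_succ, flatten_triple]
  simp [List.append_assoc]

lemma psym_idem (j : ℕ) (q : M.Q) :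
    dstar M (psym M f i j).flatten (dstar M (psym M f i j).flatten q)
      = dstar M (psym M f i j).flatten q := by
  cases j with
  | zero => exact psymAux_idem M [] (f i) q
  | succ j => exact psymAux_idem M (psym M f i j) (f (i+j+1)) q

lemma psym_ends (j : ℕ) :
    ∃ Z, (psym M f i (j+1)).flatten = Z ++ (psym M f i j).flatten :=
  psymAux_ends M (psym M f i j) (f (i+j+1))

lemma psym_starts (j : ℕ) :
    ∃ Z, (psym M f i (j+1)).flatten = (psym M f i j).flatten ++ Z :=
  psymAux_starts M (psym M f i j) (f (i+j+1))

lemma psym_absorb : ∀ j j', j' ≤ j → ∀ q,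
    dstar M (psym M f i j').flatten (dstar M (psym M f i j).flatten q)
      = dstar M (psym M f i j).flatten q := by
  intro j
  induction j with
  | zero =>
    intro j' hj' q
    have : j' = 0 := by omega
    rw [this]
    exact psym_idem M f i 0 q
  | succ j ih =>
    intro j' hj' q
    by_cases hc : j' = j + 1
    · rw [hc]
      exact psym_idem M f i (j+1) q
    · obtain ⟨Z, hZ⟩ := psym_ends M f i j
      rw [hZ, dstar_append, ih j' (by omega), ← dstar_append, ← hZ]

lemma psym_mem : ∀ j, ∀ w' ∈ psym M f i j, ∃ m, i ≤ m ∧ m ≤ i + j ∧ w' = f m := by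
  intro j
  induction j with
  | zero =>
    intro w' hw'
    obtain ⟨l, hl, hw⟩ := List.mem_flatten.1 hw'
    rw [List.eq_of_mem_replicate hl] at hw
    simp at hw
    exact ⟨i, le_rfl, le_rfl, hw⟩
  | succ j ih =>
    intro w' hw'
    obtain ⟨l, hl, hw⟩ := List.mem_flatten.1 hw'
    rw [List.eq_of_mem_replicate hl] at hw
    rcases List.mem_append.1 hw with h | h
    · rcases List.mem_append.1 h with h2 | h2
      · obtain ⟨m, hm1, hm2, hm3⟩ := ih w' h2
        exact ⟨m, hm1, by omega, hm3⟩
      · simp at h2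
        exact ⟨i+j+1, by omega, by omega, h2⟩
    · obtain ⟨m, hm1, hm2, hm3⟩ := ih w' h
      exact ⟨m, hm1, by omega, hm3⟩

lemma psym_has : ∀ j, f (i + j) ∈ psym M f i j := by
  intro j
  have hrep : ∀ (m : ℕ) (H : List (List σ)) (x : List σ), 1 ≤ m → x ∈ H →
      x ∈ (List.replicate m H).flatten := by
    intro m H x hm hx
    exact List.mem_flatten.2 ⟨H, by
      rcases Nat.exists_eq_add_of_le hm with ⟨m', rfl⟩
      rw [Nat.add_comm, List.replicate_succ]
      simp, hx⟩
  cases j with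
  | zero =>
    exact hrep _ _ _ (pw_pos M _) (by simp)
  | succ j =>
    exact hrep _ _ _ (pw_pos M _) (by
      refine List.mem_append.2 (Or.inl ?_)
      refine List.mem_append.2 (Or.inr ?_)
      simp [show i + (j+1) = i + j + 1 by omega])

lemma psym_flatten_ne {j : ℕ} (hne : f (i + j) ≠ []) :
    (psym M f i j).flatten ≠ [] := by
  intro hcon
  have := List.flatten_eq_nil_iff.1 hcon _ (psym_has M f i j)
  exact hne this

end PSYM

section PARSE
variable {σ : Type}

lemma hpw_mono {z : ℕ → σ} {u u' : List σ} (h : HasPrefixWord z u) (hp : u' <+: u) :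
    HasPrefixWord z u' := by
  intro t
  have h1 := h ⟨t.1, lt_of_lt_of_le t.2 hp.length_le⟩
  rw [h1]
  simp only [List.get_eq_getElem]
  exact (hp.getElem t.2).symm

lemma bfw_eq (A w : List σ) : ∀ n, 1 ≤ n →
    ((List.range n).map (fun nn => (if nn = 0 then A else A ++ A) ++ w)).flatten ++ A
      = vpow (A ++ w ++ A) n := by
  intro n
  induction n with
  | zero => omega
  | succ n ih =>
    intro _
    by_cases hn : n = 0
    · subst hn
      rw [show List.range 1 = [0] from rfl]
      simp [vpow, List.append_assoc]
    · rw [List.range_succ, List.map_append, List.flatten_append, vpow_succ']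
      rw [← ih (by omega)]
      simp [hn, List.append_assoc]

lemma flower_mem (M : DetAuto σ) (f : ℕ → List σ) (i k : ℕ)
    {j : ℕ} (hjk : i + j ≤ k) (hwne : f (i + j) ≠ []) (x : List σ) (d : σ) :
    ipw d (x ++ (psym M f i (k - i)).flatten) ((psym M f i j).flatten)
      ∈ LangFlower x {u' | ∃ m, i ≤ m ∧ m ≤ k ∧ u' = f m}
        {u' | ∃ m, i ≤ m ∧ m < i + j ∧ u' = f m} (f (i + j)) := by
  classical
  set pre : List (List σ) := (match j with | 0 => ([] : List (List σ)) | j'+1 => psym M f i j')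
    with hpre
  have hps : psym M f i j = psymAux M pre (f (i + j)) := by
    cases j <;> rfl
  set A := pre.flatten with hA
  set w := f (i + j) with hw
  set H := (pre ++ [w] ++ pre).flatten with hH
  have hHA : H = A ++ w ++ A := flatten_triple pre w
  have hv : (psym M f i j).flatten = vpow H (pw M H) := by
    rw [hps, psymAux_flatten]
  refine ⟨psym M f i (k - i), ?_, fun nn => if nn = 0 then pre else pre ++ pre, ?_, ?_⟩
  · intro w' hw'
    obtain ⟨m, hm1, hm2, hm3⟩ := psym_mem M f i (k - i) w' hw'
    exact ⟨m, hm1, by omega, hm3⟩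
  · intro nn w' hw'
    have hpremem : w' ∈ pre := by
      by_cases hc : nn = 0
      · simpa [hc] using hw'
      · simp only [if_neg hc] at hw'
        rcases List.mem_append.1 hw' with h | h <;> exact h
    cases j with
    | zero => simp [hpre] at hpremem
    | succ j' =>
      obtain ⟨m, hm1, hm2, hm3⟩ := psym_mem M f i j' w' (by simpa [hpre] using hpremem)
      exact ⟨m, hm1, by omega, hm3⟩
  · intro n
    have hgf : (fun nn => ((if nn = 0 then pre else pre ++ pre) : List (List σ)).flatten ++ w)
        = fun nn => (if nn = 0 then A else A ++ A) ++ w := by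
      funext nn
      by_cases hc : nn = 0 <;> simp [hc, hA]
    have key : ((List.range n).map (fun nn =>
        ((if nn = 0 then pre else pre ++ pre) : List (List σ)).flatten ++ w)).flatten
        <+: vpow ((psym M f i j).flatten) n := by
      rcases Nat.eq_zero_or_pos n with hn | hn
      · subst hn
        simp
      · rw [hgf, hv, ← vpow_mul]
        refine List.IsPrefix.trans ⟨A, bfw_eq A w n hn⟩ ?_
        rw [← hHA]
        refine vpow_prefix H ?_
        have := pw_pos M H
        exact Nat.le_mul_of_pos_left n (by omega)
    refine hpw_mono (ipw_hasPrefix ?_ d (x ++ (psym M f i (k-i)).flatten) n) ?_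
    · rw [hv]
      have hpwp := pw_pos M H
      have hHlen : 1 ≤ H.length := by
        rw [hHA]
        have h1 : 1 ≤ w.length := List.length_pos_iff.2 (hw ▸ hwne)
        simp
        omega
      intro hcon
      have hlen := congrArg List.length hcon
      rw [vpow_length] at hlen
      simp only [List.length_nil] at hlen
      rcases Nat.mul_eq_zero.1 hlen with h | h <;> omega
    · obtain ⟨t, ht⟩ := key
      refine ⟨t, ?_⟩
      simp only [List.append_assoc]
      rw [ht]

end PARSE

section T2
variable {σ : Type}

lemma t2 (B : DetAuto σ) (cB : B.Q → ℕ) (i k : ℕ) (hik : i ≤ k)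
    (hcol : ∀ q, i ≤ cB q ∧ cB q ≤ k) (L : Set (ℕ → σ))
    (hrec : ∀ z, z ∈ L ↔ ParityAccept B cB z)
    (x : List σ) (f : ℕ → List σ) (hfne : ∀ ℓ, i ≤ ℓ → ℓ ≤ k → f ℓ ≠ [])
    (heven : ∀ ℓ, i ≤ ℓ → ℓ ≤ k → Even ℓ →
      LangFlower x {u | ∃ m, i ≤ m ∧ m ≤ k ∧ u = f m}
        {u | ∃ m, i ≤ m ∧ m < ℓ ∧ u = f m} (f ℓ) ⊆ L)
    (hodd : ∀ ℓ, i ≤ ℓ → ℓ ≤ k → Odd ℓ →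
      LangFlower x {u | ∃ m, i ≤ m ∧ m ≤ k ∧ u = f m}
        {u | ∃ m, i ≤ m ∧ m < ℓ ∧ u = f m} (f ℓ) ∩ L = ∅) : False := by
  have hfne' : ∀ j, j ≤ k - i → f (i + j) ≠ [] :=
    fun j hj => hfne (i + j) (by omega) (by omega)
  have hPne : ∀ j, j ≤ k - i → (psym B f i j).flatten ≠ [] :=
    fun j hj => psym_flatten_ne B f i (hfne' j hj)
  set q0 : B.Q := dstar B x B.init with hq0
  set qs : B.Q := dstar B ((psym B f i (k - i)).flatten) q0 with hqs
  have hy : dstar B (x ++ (psym B f i (k - i)).flatten) B.init = qs := by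
    rw [dstar_append]
  have hfixv : ∀ j, j ≤ k - i → dstar B ((psym B f i j).flatten) qs = qs :=
    fun j hj => psym_absorb B f i (k - i) j hj q0
  set S : ℕ → Finset B.Q := fun j => cycSet B qs ((psym B f i j).flatten) with hS
  have hqS : ∀ j, j ≤ k - i → qs ∈ S j := fun j hj => self_mem_cycSet B (hPne j hj)
  set d : σ := (f i).head (hfne i le_rfl hik) with hd
  have hacc : ∀ j, j ≤ k - i →
      (ParityAccept B cB (ipw d (x ++ (psym B f i (k - i)).flatten)
        ((psym B f i j).flatten)) ↔ Odd ((S j).sup cB)) :=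
    fun j hj => per B cB d (hPne j hj) hy (hfixv j hj)
  have hmem : ∀ j, j ≤ k - i →
      ipw d (x ++ (psym B f i (k - i)).flatten) ((psym B f i j).flatten)
        ∈ LangFlower x {u' | ∃ m, i ≤ m ∧ m ≤ k ∧ u' = f m}
          {u' | ∃ m, i ≤ m ∧ m < i + j ∧ u' = f m} (f (i + j)) :=
    fun j hj => flower_mem B f i k (by omega) (hfne' j hj) x d
  have hpar : ∀ j, j ≤ k - i → ((S j).sup cB) % 2 = (i + j + 1) % 2 := by
    intro j hj
    by_cases hp : (i + j) % 2 = 0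
    · have hin := heven (i + j) (by omega) (by omega) (Nat.even_iff.2 hp) (hmem j hj)
      have := (hacc j hj).1 ((hrec _).1 hin)
      rw [Nat.odd_iff] at this
      omega
    · have hdisj := hodd (i + j) (by omega) (by omega) (Nat.odd_iff.2 (by omega))
      have hnin : ipw d (x ++ (psym B f i (k - i)).flatten)
          ((psym B f i j).flatten) ∉ L := by
        intro hc
        have : ipw d (x ++ (psym B f i (k - i)).flatten) ((psym B f i j).flatten)
            ∈ (∅ : Set (ℕ → σ)) := hdisj ▸ ⟨hmem j hj, hc⟩
        exact this
      have hnPA := fun hPAc => hnin ((hrec _).2 hPAc)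
      have : ¬ Odd ((S j).sup cB) := fun ho => hnPA ((hacc j hj).2 ho)
      rw [Nat.odd_iff] at this
      omega
  have hmono : ∀ j, S j ⊆ S (j + 1) := by
    intro j
    obtain ⟨Z, hZ⟩ := psym_starts B f i j
    rw [hS]
    simp only
    rw [hZ]
    exact cycSet_prefix B _ _
  have hgrow : ∀ j, j ≤ k - i → i + j + 1 ≤ (S j).sup cB := by
    intro j
    induction j with
    | zero =>
      intro hj
      have h1 : i ≤ (S 0).sup cB :=
        le_trans (hcol qs).1 (Finset.le_sup (hqS 0 hj))
      have h2 := hpar 0 hj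
      omega
    | succ j ih =>
      intro hj
      have h1 := ih (by omega)
      have h2 : (S j).sup cB ≤ (S (j+1)).sup cB := Finset.sup_mono (hmono j)
      have h3 := hpar j (by omega)
      have h4 := hpar (j+1) hj
      omega
  have hfin := hgrow (k - i) le_rfl
  have hbound : (S (k - i)).sup cB ≤ k := Finset.sup_le (fun q _ => (hcol q).2)
  omega

end T2

section T3
variable {σ : Type}

lemma t3 (M : DetAuto σ) (cA : M.Q → ℕ) (i k : ℕ) (hik : i ≤ k)
    (hnf : ¬ ∃ I, Ch M cA i I (k + 1)) (L : Set (ℕ → σ))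
    (hLrec : ∀ z, z ∈ L ↔ ParityAccept M cA z) : DPWRecognizable i k L := by
  refine ⟨M, recolor M cA i k,
    fun q => ⟨recolor_ge_i M cA i k q, recolor_le M cA i k hik q⟩, ?_⟩
  intro z
  rw [hLrec z]
  obtain ⟨I, hF, h1, h2, hne⟩ := gen M z
  rw [acc M cA z I h1 h2 hne, acc M (recolor M cA i k) z I h1 h2 hne,
    Nat.odd_iff, Nat.odd_iff, recolor_parity M cA i k hik hnf hF]

end T3

/-- An ω-regular `L` is not DPW[i,k]-recognizable iff there are `x ∈ Σ*` and
`x_i, …, x_k ∈ Σ⁺` such that for even `ℓ` the language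
`x·{x_i,…,x_k}*·({x_i,…,x_{ℓ-1}}*·x_ℓ)^ω` is contained in `L`, and for odd `ℓ` it is
disjoint from `L`. -/
theorem stmt_15 {Sig : Type} [Fintype Sig] (i k : ℕ) (hi : i = 0 ∨ i = 1) (hik : i ≤ k)
    (L : Set (ℕ → Sig)) (hL : OmegaRegular L) :
    ¬ DPWRecognizable i k L ↔
      ∃ (x : List Sig) (f : ℕ → List Sig),
        (∀ ℓ, i ≤ ℓ → ℓ ≤ k → f ℓ ≠ []) ∧
        (∀ ℓ, i ≤ ℓ → ℓ ≤ k → Even ℓ →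
          LangFlower x {u | ∃ m, i ≤ m ∧ m ≤ k ∧ u = f m}
            {u | ∃ m, i ≤ m ∧ m < ℓ ∧ u = f m} (f ℓ) ⊆ L) ∧
        (∀ ℓ, i ≤ ℓ → ℓ ≤ k → Odd ℓ →
          LangFlower x {u | ∃ m, i ≤ m ∧ m ≤ k ∧ u = f m}
            {u | ∃ m, i ≤ m ∧ m < ℓ ∧ u = f m} (f ℓ) ∩ L = ∅) := by
  
  obtain ⟨A, cA, hA⟩ := hL
  constructor
  · intro hnd
    by_contra hsf
    apply hnd
    refine t3 A cA i k hik ?_ L hA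
    intro hex
    exact hsf (t1 A cA i k hik hex L hA)
  · rintro ⟨x, f, hfne, heven, hodd⟩ hd
    obtain ⟨B, cB, hcol, hrec⟩ := hd
    exact t2 B cB i k hik hcol L hrec x f hfne heven hodd
end Aux
end

section
/- Let i ∈ {0,1} and i ≤ k. An ω-regular language L ⊆ Σ^ω is not DWW[i,k]-recognizable if and only if there exist finite words x̂_i, x̂_{i+1}, …, x̂_k ∈ Σ* and x_i, x_{i+1}, …, x_k ∈ Σ⁺ such that for every even ℓ with i ≤ ℓ ≤ k: x̂_i·x_i*·x̂_{i+1}·x_{i+1}*⋯x̂_ℓ·x_ℓ^ω ⊆ L, and for every odd ℓ with i ≤ ℓ ≤ k: x̂_i·x_i*·x̂_{i+1}·x_{i+1}*⋯x̂_ℓ·x_ℓ^ω ∩ L = ∅. -/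
/-- The ω-language `x̂_i·x_i*·x̂_{i+1}·x_{i+1}*⋯x̂_ℓ·x_ℓ^ω`. -/
def LangChain {α : Type} (xh xx : ℕ → List α) (i l : ℕ) : Set (ℕ → α) :=
  { w | ∃ e : ℕ → ℕ, ∀ m, HasPrefixWord w
      (((List.range (l - i)).map
          (fun j => xh (i + j) ++ (List.replicate (e (i + j)) (xx (i + j))).flatten)).flatten
        ++ xh l ++ (List.replicate m (xx l)).flatten) }

/-- `L` is recognizable by a weak DPW with colors in `{i, …, k}`: a DPW whose coloring is
monotonically nondecreasing along transitions. -/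
def DWWRecognizable' {α : Type} (i k : ℕ) (L : Set (ℕ → α)) : Prop :=
  ∃ (M : DetAuto α) (c : M.Q → ℕ), (∀ q, i ≤ c q ∧ c q ≤ k) ∧
    (∀ q σ, c q ≤ c (M.δ q σ)) ∧
    ∀ x, x ∈ L ↔ ParityAccept M c x

namespace Aux

variable {α : Type}

/-! ### runFrom -/

def runFrom (M : DetAuto α) (q : M.Q) (u : List α) : M.Q := u.foldl M.δ q

@[simp] lemma runFrom_nil (M : DetAuto α) (q : M.Q) : runFrom M q [] = q := rfl

@[simp] lemma runFrom_append (M : DetAuto α) (q : M.Q) (u v : List α) :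
    runFrom M q (u ++ v) = runFrom M (runFrom M q u) v := List.foldl_append ..

lemma runFrom_loop_pow (M : DetAuto α) {q : M.Q} {v : List α} (h : runFrom M q v = q) (n : ℕ) :
    runFrom M q (List.flatten (List.replicate n v)) = q := by
  induction n with
  | zero => rfl
  | succ n ih =>
      rw [List.replicate_succ, List.flatten_cons, runFrom_append, h, ih]

/-! ### segments of infinite words -/

def seg (x : ℕ → α) (n t : ℕ) : List α := List.ofFn (fun j : Fin t => x (n + j))

@[simp] lemma seg_length (x : ℕ → α) (n t : ℕ) : (seg x n t).length = t := by
  simp [seg]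

@[simp] lemma seg_zero (x : ℕ → α) (n : ℕ) : seg x n 0 = [] := rfl

lemma seg_succ (x : ℕ → α) (n t : ℕ) : seg x n (t + 1) = seg x n t ++ [x (n + t)] := by
  rw [seg, List.ofFn_succ', List.concat_eq_append]
  rfl

lemma seg_getElem (x : ℕ → α) (n t j : ℕ) (h : j < (seg x n t).length) :
    (seg x n t)[j] = x (n + j) := by
  simp [seg]

lemma run_seg (M : DetAuto α) (x : ℕ → α) (n t : ℕ) :
    M.run x (n + t) = runFrom M (M.run x n) (seg x n t) := by
  induction t with
  | zero => rfl
  | succ t ih =>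
      have : n + (t + 1) = (n + t) + 1 := by omega
      rw [this, DetAuto.run, ih, seg_succ, runFrom_append]
      rfl

lemma hasPrefix_iff {w : ℕ → α} {u : List α} :
    HasPrefixWord w u ↔ ∀ n (h : n < u.length), w n = u[n] := by
  constructor
  · intro h n hn; exact h ⟨n, hn⟩
  · intro h ⟨n, hn⟩; exact h n hn

lemma seg_of_prefix {w : ℕ → α} {u : List α} (h : HasPrefixWord w u) :
    seg w 0 u.length = u := by
  apply List.ext_getElem (by simp)
  intro n h1 h2
  rw [seg_getElem]
  simpa using (hasPrefix_iff.1 h) n h2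

lemma run_of_prefix (M : DetAuto α) {w : ℕ → α} {u : List α} (h : HasPrefixWord w u) :
    M.run w u.length = runFrom M M.init u := by
  have := run_seg M w 0 u.length
  rw [Nat.zero_add] at this
  rw [this, seg_of_prefix h]
  rfl

lemma seg_take (x : ℕ → α) (n t j : ℕ) (hj : j ≤ t) :
    (seg x n t).take j = seg x n j := by
  apply List.ext_getElem (by simp [hj])
  intro m h1 h2
  rw [List.getElem_take, seg_getElem, seg_getElem]

/-! ### flatten replicate -/

lemma flat_rep_length (m : ℕ) (v : List α) :
    (List.replicate m v).flatten.length = m * v.length := by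
  induction m with
  | zero => simp
  | succ m ih => simp [List.replicate_succ, ih]; ring

lemma flat_rep_getElem (m : ℕ) (v : List α) (hv : 0 < v.length) (t : ℕ)
    (h : t < (List.replicate m v).flatten.length) :
    (List.replicate m v).flatten[t] = v[t % v.length]'(Nat.mod_lt _ hv) := by
  induction m generalizing t with
  | zero => simp at h
  | succ m ih =>
      have hflat : (List.replicate (m + 1) v).flatten = v ++ (List.replicate m v).flatten := by
        rw [List.replicate_succ, List.flatten_cons]
      have h' : t < (v ++ (List.replicate m v).flatten).length := hflat ▸ h
      rw [List.getElem_of_eq hflat]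
      by_cases ht : t < v.length
      · rw [List.getElem_append_left ht]
        congr 1
        exact (Nat.mod_eq_of_lt ht).symm
      · push_neg at ht
        rw [List.getElem_append_right ht]
        rw [ih (t - v.length) (by simp [flat_rep_length] at h' ⊢; omega)]
        congr 1
        conv_rhs => rw [← Nat.sub_add_cancel ht]
        rw [Nat.add_mod_right]

/-! ### appendPer -/

def appendPer (u v : List α) (hv : 0 < v.length) : ℕ → α := fun n =>
  if hn : n < u.length then u[n] else v[(n - u.length) % v.length]'(Nat.mod_lt _ hv)

lemma appendPer_lt {u v : List α} (hv : 0 < v.length) {n : ℕ} (hn : n < u.length) :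
    appendPer u v hv n = u[n] := dif_pos hn

lemma appendPer_ge {u v : List α} (hv : 0 < v.length) (t : ℕ) :
    appendPer u v hv (u.length + t) = v[t % v.length]'(Nat.mod_lt _ hv) := by
  rw [appendPer, dif_neg (by omega)]
  congr 2
  omega

lemma appendPer_prefix_self (u v : List α) (hv : 0 < v.length) :
    HasPrefixWord (appendPer u v hv) u := by
  rw [hasPrefix_iff]
  intro n hn
  exact appendPer_lt hv hn

lemma appendPer_prefix (u0 : List α) (v : List α) (hv : 0 < v.length) (a m : ℕ) :
    HasPrefixWord (appendPer (u0 ++ (List.replicate a v).flatten) v hv)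
      (u0 ++ (List.replicate m v).flatten) := by
  have hlen : ∀ b : ℕ, (u0 ++ (List.replicate b v).flatten).length
      = u0.length + b * v.length := by
    intro b; rw [List.length_append, flat_rep_length]
  rw [hasPrefix_iff]
  intro n hn
  rw [hlen] at hn
  by_cases h0 : n < u0.length
  · rw [List.getElem_append_left h0,
      appendPer_lt hv (by rw [hlen]; omega), List.getElem_append_left h0]
  · push_neg at h0
    rw [List.getElem_append_right h0]
    rw [flat_rep_getElem _ _ hv _ (by rw [flat_rep_length]; omega)]
    set t := n - u0.length with hht
    by_cases h1 : n < u0.length + a * v.length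
    · rw [appendPer_lt hv (by rw [hlen]; omega),
        List.getElem_append_right h0, flat_rep_getElem _ _ hv _ (by rw [flat_rep_length]; omega)]
    · push_neg at h1
      have hn' : n = (u0 ++ (List.replicate a v).flatten).length
          + (t - a * v.length) := by rw [hlen]; omega
      rw [hn', appendPer_ge hv]
      congr 1
      have : t = (t - a * v.length) + a * v.length := by omega
      conv_rhs => rw [this]
      rw [Nat.add_mul_mod_self_right]

/-! ### periodic runs and acceptance -/

lemma per_eq_mod {Q : Type} (r : ℕ → Q) (N p : ℕ) (hp : 0 < p)
    (hper : ∀ t, r (N + t + p) = r (N + t)) :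
    ∀ t, r (N + t) = r (N + t % p) := by
  intro t
  induction t using Nat.strong_induction_on with
  | _ t ih =>
    by_cases ht : t < p
    · rw [Nat.mod_eq_of_lt ht]
    · push_neg at ht
      have h1 : t = (t - p) + p := by omega
      have h2 : r (N + t) = r (N + (t - p)) := by
        conv_lhs => rw [h1, ← Nat.add_assoc]
        exact hper (t - p)
      rw [h2, ih (t - p) (by omega)]
      congr 2
      exact (Nat.mod_eq_sub_mod ht).symm

lemma freq_iff_window {Q : Type} (r : ℕ → Q) (c : Q → ℕ) (N p : ℕ) (hp : 0 < p)
    (hper : ∀ t, r (N + t + p) = r (N + t)) (m : ℕ) :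
    (∃ᶠ n in Filter.atTop, c (r n) = m) ↔ ∃ j < p, c (r (N + j)) = m := by
  constructor
  · intro h
    obtain ⟨n, hn, he⟩ := (h.and_eventually (Filter.eventually_ge_atTop N)).exists
    refine ⟨(n - N) % p, Nat.mod_lt _ hp, ?_⟩
    have : r n = r (N + (n - N) % p) := by
      conv_lhs => rw [show n = N + (n - N) by omega]
      exact per_eq_mod r N p hp hper _
    rw [← this, hn]
  · rintro ⟨j, hj, he⟩
    rw [Filter.frequently_atTop]
    intro a
    have hap : a ≤ a * p := Nat.le_mul_of_pos_right a hp
    refine ⟨N + j + a * p, by omega, ?_⟩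
    have : ∀ s, r (N + (j + s * p)) = r (N + j) := by
      intro s
      induction s with
      | zero => simp
      | succ s ih =>
          have : j + (s + 1) * p = (j + s * p) + p := by ring
          rw [this, ← Nat.add_assoc, hper, ih]
    rw [show N + j + a * p = N + (j + a * p) by omega, this a, he]

lemma parity_of_periodic (M : DetAuto α) (c : M.Q → ℕ) (x : ℕ → α) (N p : ℕ) (hp : 0 < p)
    (hper : ∀ t, M.run x (N + t + p) = M.run x (N + t)) :
    (ParityAccept M c x ↔ Odd ((Finset.range p).sup (fun j => c (M.run x (N + j))))) := by
  set r := M.run x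
  set W := (Finset.range p).sup (fun j => c (r (N + j))) with hW
  have hfr := freq_iff_window r c N p hp hper
  have hWfreq : ∃ᶠ n in Filter.atTop, c (r n) = W := by
    rw [hfr]
    obtain ⟨j, hj, he⟩ := Finset.exists_mem_eq_sup (Finset.range p)
      ⟨0, Finset.mem_range.2 hp⟩ (fun j => c (r (N + j)))
    exact ⟨j, Finset.mem_range.1 hj, he.symm⟩
  constructor
  · rintro ⟨m, hodd, hfreq, hmax⟩
    obtain ⟨j, hj, he⟩ := hfr m |>.1 hfreq
    have h1 : m ≤ W := he ▸ Finset.le_sup (f := fun j => c (r (N + j))) (Finset.mem_range.2 hj)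
    have h2 : W ≤ m := hmax W hWfreq
    have : m = W := le_antisymm h1 h2
    exact this ▸ hodd
  · intro hodd
    refine ⟨W, hodd, hWfreq, ?_⟩
    intro m' hm'
    obtain ⟨j, hj, he⟩ := hfr m' |>.1 hm'
    exact he ▸ Finset.le_sup (f := fun j => c (r (N + j))) (Finset.mem_range.2 hj)

/-! ### pigeonhole and stabilization -/

lemma exists_freq_fiber {Q : Type} [Fintype Q] (f : ℕ → Q) {P : ℕ → Prop}
    (h : ∃ᶠ n in Filter.atTop, P n) : ∃ q, ∃ᶠ n in Filter.atTop, P n ∧ f n = q := by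
  by_contra hc
  push_neg at hc
  have : ∀ᶠ n in Filter.atTop, ∀ q : Q, ¬(P n ∧ f n = q) := by
    rw [Filter.eventually_all]
    intro q
    simpa using (hc q)
  have : ∀ᶠ n in Filter.atTop, ¬ P n := this.mono (fun n hn hP => hn (f n) ⟨hP, rfl⟩)
  exact (Filter.not_frequently.2 this) h

lemma exists_freq_state {Q : Type} [Fintype Q] (f : ℕ → Q) :
    ∃ q, ∃ᶠ n in Filter.atTop, f n = q := by
  obtain ⟨q, hq⟩ := exists_freq_fiber f (Filter.frequently_atTop.2 (fun a => ⟨a, le_refl a, trivial⟩) :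
    ∃ᶠ n in Filter.atTop, True)
  exact ⟨q, hq.mono (fun n hn => hn.2)⟩

lemma eventually_freq_state {Q : Type} [Fintype Q] (f : ℕ → Q) :
    ∃ N, ∀ n ≥ N, ∃ᶠ m in Filter.atTop, f m = f n := by
  have h : ∀ᶠ n in Filter.atTop, ∀ q : Q, ¬(∃ᶠ m in Filter.atTop, f m = q) → f n ≠ q := by
    rw [Filter.eventually_all]
    intro q
    by_cases hq : ∃ᶠ m in Filter.atTop, f m = q
    · exact Filter.Eventually.of_forall (fun n hn => absurd hq hn)
    · exact (Filter.not_frequently.1 hq).mono (fun n hn hq' => hn)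
  obtain ⟨N, hN⟩ := Filter.eventually_atTop.1 h
  refine ⟨N, fun n hn => ?_⟩
  by_contra hc
  exact hN n hn (f n) hc rfl

lemma mono_bdd_stable : ∀ (k : ℕ) (f : ℕ → ℕ), (∀ n, f n ≤ f (n + 1)) → (∀ n, f n ≤ k) →
    ∃ N, ∀ n ≥ N, f n = f N := by
  intro k
  induction k with
  | zero =>
      intro f hm hb
      exact ⟨0, fun n _ => by have := hb n; have := hb 0; omega⟩
  | succ k ih =>
      intro f hm hb
      have hmono : Monotone f := monotone_nat_of_le_succ hm
      by_cases hex : ∃ n, f n = k + 1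
      · obtain ⟨n0, hn0⟩ := hex
        exact ⟨n0, fun n hn => by have := hmono hn; have := hb n; omega⟩
      · push_neg at hex
        exact ih f hm (fun n => by have := hb n; have := hex n; omega)

end Aux

namespace Aux

variable {α : Type} (A : DetAuto α) (cc : A.Q → ℕ)

def Reach (q p : A.Q) : Prop := ∃ u : List α, runFrom A q u = p

lemma reach_refl (q : A.Q) : Reach A q q := ⟨[], rfl⟩

lemma reach_trans {q p s : A.Q} (h1 : Reach A q p) (h2 : Reach A p s) : Reach A q s := by
  obtain ⟨u, hu⟩ := h1; obtain ⟨v, hv⟩ := h2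
  exact ⟨u ++ v, by rw [runFrom_append, hu, hv]⟩

def IsLoop (q : A.Q) (v : List α) : Prop := v ≠ [] ∧ runFrom A q v = q

def loopSup (q : A.Q) (v : List α) : ℕ :=
  (Finset.range v.length).sup (fun j => cc (runFrom A q (v.take j)))

def LoopAcc (q : A.Q) (v : List α) : Prop := Odd (loopSup A cc q v)

def IsChain (s : ℕ → A.Q) (vs : ℕ → List α) (r : ℕ) : Prop :=
  (∀ j < r, IsLoop A (s j) (vs j)) ∧
  (∀ j, j + 1 < r → Reach A (s j) (s (j + 1))) ∧
  (∀ j, j + 1 < r → (LoopAcc A cc (s (j + 1)) (vs (j + 1)) ↔ ¬ LoopAcc A cc (s j) (vs j)))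

open Classical in
noncomputable def baseC (k : ℕ) (a : Prop) : ℕ := if Odd k ↔ a then k else k - 1

lemma baseC_le (k : ℕ) (a : Prop) : baseC k a ≤ k := by
  unfold baseC; split <;> omega

lemma baseC_ge (k : ℕ) (a : Prop) : k - 1 ≤ baseC k a := by
  unfold baseC; split <;> omega

lemma baseC_zero (a : Prop) : baseC 0 a = 0 := by
  unfold baseC; split <;> rfl

lemma odd_baseC {k : ℕ} (hk : 1 ≤ k) (a : Prop) : Odd (baseC k a) ↔ a := by
  unfold baseC
  split
  · tauto
  · next h =>
      have h1 : Odd (k - 1) ↔ (Odd k ↔ Even 1) := Nat.odd_sub hk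
      have h2 : ¬ Even 1 := by decide
      have h3 : Even k ↔ ¬ Odd k := Nat.not_odd_iff_even.symm
      tauto

lemma baseC_congr (k : ℕ) {a b : Prop} (h : a ↔ b) : baseC k a = baseC k b :=
  congrArg (baseC k) (propext h)

lemma aux_tauto1 (P E : Prop) : ((P ↔ E) ↔ E) ↔ P := by tauto

lemma aux_tauto2 (P E : Prop) (h : ¬(P ↔ E)) : ¬P ↔ E := by tauto

lemma aux_tauto3 (P E O : Prop) (hna : ¬P) (h4 : O ↔ ¬E) : (P ↔ E) ↔ O := by tauto

lemma aux_tauto4 (P Q : Prop) (h : ¬(P ↔ Q)) : Q ↔ ¬P := by tauto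

def Cand (k : ℕ) (q : A.Q) (v : List α) : Set ℕ :=
  { n | ∃ (r : ℕ) (s : ℕ → A.Q) (vs : ℕ → List α), 1 ≤ r ∧ IsChain A cc s vs r ∧ s 0 = q ∧ vs 0 = v ∧
      n = baseC k (LoopAcc A cc (s (r - 1)) (vs (r - 1))) - (r - 1) }

noncomputable def col (k : ℕ) (q : A.Q) (v : List α) : ℕ := sInf (Cand A cc k q v)

def Flower (i k : ℕ) : Prop :=
  ∃ (s : ℕ → A.Q) (vs : ℕ → List α), (∀ ℓ, i ≤ ℓ → ℓ ≤ k → IsLoop A (s ℓ) (vs ℓ)) ∧ Reach A A.init (s i) ∧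
    (∀ ℓ, i ≤ ℓ → ℓ < k → Reach A (s ℓ) (s (ℓ + 1))) ∧
    (∀ ℓ, i ≤ ℓ → ℓ ≤ k → (LoopAcc A cc (s ℓ) (vs ℓ) ↔ Even ℓ))

lemma chain_acc {s vs r} (h : IsChain A cc s vs r) :
    ∀ j < r, (LoopAcc A cc (s j) (vs j) ↔ (LoopAcc A cc (s 0) (vs 0) ↔ Even j)) := by
  intro j
  induction j with
  | zero => intro _; simp [Nat.even_iff]
  | succ j ih =>
      intro hj
      have h1 := h.2.2 j hj
      have h2 := ih (by omega)
      have h3 : Even (j + 1) ↔ ¬ Even j := by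
        rw [Nat.even_add_one]
      tauto

lemma chain_reach {s vs r} (h : IsChain A cc s vs r) :
    ∀ j < r, Reach A (s 0) (s j) := by
  intro j
  induction j with
  | zero => intro _; exact reach_refl A _
  | succ j ih =>
      intro hj
      exact reach_trans A (ih (by omega)) (h.2.1 j hj)

lemma cand_self {k : ℕ} {q : A.Q} {v : List α} (hl : IsLoop A q v) :
    baseC k (LoopAcc A cc q v) ∈ Cand A cc k q v := by
  refine ⟨1, fun _ => q, fun _ => v, le_refl _, ?_, rfl, rfl, by simp⟩
  refine ⟨fun j hj => hl, fun j hj => by omega, fun j hj => by omega⟩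

lemma cand_nonempty {k : ℕ} {q : A.Q} {v : List α} (hl : IsLoop A q v) :
    (Cand A cc k q v).Nonempty := ⟨_, cand_self A cc hl⟩

lemma flower_from_chain {i k : ℕ} (hik : i ≤ k) {s vs r} (h : IsChain A cc s vs r)
    (hr : k - i + 1 ≤ r) (hreach : Reach A A.init (s 0))
    (hacc : LoopAcc A cc (s 0) (vs 0) ↔ Even i) : Flower A cc i k := by
  refine ⟨fun ℓ => s (ℓ - i), fun ℓ => vs (ℓ - i), ?_, ?_, ?_, ?_⟩
  · intro ℓ h1 h2; exact h.1 (ℓ - i) (by omega)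
  · simpa using hreach
  · intro ℓ h1 h2
    show Reach A (s (ℓ - i)) (s (ℓ + 1 - i))
    have he : ℓ + 1 - i = (ℓ - i) + 1 := by omega
    rw [he]
    exact h.2.1 (ℓ - i) (by omega)
  · intro ℓ h1 h2
    have h3 := chain_acc A cc h (ℓ - i) (by omega)
    have h4 : Even (ℓ - i) ↔ (Even ℓ ↔ Even i) := Nat.even_sub h1
    tauto

lemma colSpec {i k : ℕ} (hi01 : i = 0 ∨ i = 1) (hik : i ≤ k) (hnf : ¬ Flower A cc i k)
    {q : A.Q} {v : List α} (hq : Reach A A.init q) (hl : IsLoop A q v) :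
    i ≤ col A cc k q v ∧ col A cc k q v ≤ k ∧ (Odd (col A cc k q v) ↔ LoopAcc A cc q v) := by
  have hne := cand_nonempty A cc (k := k) hl
  have hcolle : col A cc k q v ≤ k :=
    le_trans (Nat.sInf_le (cand_self A cc hl)) (baseC_le k _)
  obtain ⟨r, s, vs, hr1, hch, hs0, hv0, hn⟩ := Nat.sInf_mem hne
  have hn : col A cc k q v
      = baseC k (LoopAcc A cc (s (r - 1)) (vs (r - 1))) - (r - 1) := hn
  set n := col A cc k q v with hndef
  have ha0 : LoopAcc A cc (s 0) (vs 0) ↔ LoopAcc A cc q v := by rw [hs0, hv0]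
  have haj := chain_acc A cc hch
  have hreach0 : Reach A A.init (s 0) := hs0 ▸ hq
  have hb1 : (LoopAcc A cc q v ↔ Even i) → r + i ≤ k := by
    intro hma
    by_contra hc
    exact hnf (flower_from_chain A cc hik hch (by omega) hreach0 (ha0.trans hma))
  have hb2 : ¬(LoopAcc A cc q v ↔ Even i) → r + i ≤ k + 1 := by
    intro hma
    by_contra hc
    push_neg at hc
    have hr2 : 2 ≤ r := by omega
    have hch' : IsChain A cc (fun j => s (j + 1)) (fun j => vs (j + 1)) (r - 1) := by
      refine ⟨fun j hj => hch.1 (j + 1) (by omega), fun j hj => hch.2.1 (j + 1) (by omega),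
        fun j hj => hch.2.2 (j + 1) (by omega)⟩
    have hacc1 : LoopAcc A cc (s 1) (vs 1) ↔ ¬ LoopAcc A cc q v :=
      (hch.2.2 0 (by omega)).trans (not_congr ha0)
    refine hnf (flower_from_chain A cc hik hch' (by omega) ?_ ?_)
    · exact reach_trans A hq (hs0 ▸ hch.2.1 0 (by omega))
    · exact hacc1.trans (aux_tauto2 _ _ hma)
  set t := r - 1 with htdef
  have hAr : LoopAcc A cc (s t) (vs t) ↔ (LoopAcc A cc q v ↔ Even t) :=
    (haj t (by omega)).trans (iff_congr ha0 Iff.rfl)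
  rcases Nat.eq_zero_or_pos k with hk0 | hk
  · -- k = 0
    subst hk0
    have hi0 : i = 0 := by omega
    have hna : ¬ LoopAcc A cc q v := by
      intro ha
      have := hb1 (by rw [hi0]; exact iff_of_true ha Even.zero)
      omega
    have hzero : n = 0 := by rw [hn, baseC_zero]; omega
    rw [hzero]
    refine ⟨by omega, by omega, ?_⟩
    simp [Nat.odd_iff]
    exact hna
  · -- k ≥ 1
    have hOddBase := odd_baseC hk (LoopAcc A cc (s t) (vs t))
    by_cases hma : LoopAcc A cc q v ↔ Even i
    · -- matched head
      have hrk := hb1 hma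
      have htk : t ≤ k - i - 1 := by omega
      have htb : t ≤ baseC k (LoopAcc A cc (s t) (vs t)) := by
        have := baseC_ge k (LoopAcc A cc (s t) (vs t)); omega
      have hpar : Odd n ↔ LoopAcc A cc q v := by
        rw [hn, Nat.odd_sub htb, hOddBase, hAr]
        exact aux_tauto1 _ _
      refine ⟨?_, hcolle, hpar⟩
      rcases hi01 with h0 | h1
      · omega
      · have := baseC_ge k (LoopAcc A cc (s t) (vs t))
        omega
    · -- mismatched head
      have hrk := hb2 hma
      have htk : t ≤ k - i := by omega
      have htb : t ≤ baseC k (LoopAcc A cc (s t) (vs t)) := by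
        rcases hi01 with h0 | h1
        · -- i = 0, need to exclude t = k with base = k - 1
          by_cases hOB : Odd k ↔ LoopAcc A cc (s t) (vs t)
          · have : baseC k (LoopAcc A cc (s t) (vs t)) = k := if_pos hOB
            omega
          · have hbv : baseC k (LoopAcc A cc (s t) (vs t)) = k - 1 := if_neg hOB
            rcases Nat.lt_or_ge t k with hlt | hge
            · omega
            · exfalso
              have htek : t = k := by omega
              have hna : ¬ LoopAcc A cc q v := fun ha =>
                hma (iff_of_true ha (h0 ▸ Even.zero))
              have h4 : Odd k ↔ ¬ Even k := Nat.not_even_iff_odd.symm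
              have hArOdd : LoopAcc A cc (s t) (vs t) ↔ Odd k := by
                rw [hAr, htek]
                exact aux_tauto3 _ _ _ hna h4
              exact hOB hArOdd.symm
        · have := baseC_ge k (LoopAcc A cc (s t) (vs t)); omega
      have hpar : Odd n ↔ LoopAcc A cc q v := by
        rw [hn, Nat.odd_sub htb, hOddBase, hAr]
        exact aux_tauto1 _ _
      refine ⟨?_, hcolle, hpar⟩
      rcases hi01 with h0 | h1
      · omega
      · -- i = 1 : mismatched means LoopAcc, so n is odd
        have hacc : LoopAcc A cc q v := by
          by_contra hno
          exact hma (iff_of_false hno (by rw [h1]; decide))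
        have : n % 2 = 1 := Nat.odd_iff.1 (hpar.2 hacc)
        omega

end Aux
namespace Aux

variable {α : Type} (A : DetAuto α) (cc : A.Q → ℕ)

lemma col_mono {k : ℕ} {q q' : A.Q} {v v' : List α} (hl : IsLoop A q v)
    (hl' : IsLoop A q' v') (hr : Reach A q q') :
    col A cc k q v ≤ col A cc k q' v' := by
  obtain ⟨r, s, vs, hr1, hch, hs0, hv0, hn⟩ := Nat.sInf_mem (cand_nonempty A cc (k := k) hl')
  have hn : col A cc k q' v'
      = baseC k (LoopAcc A cc (s (r - 1)) (vs (r - 1))) - (r - 1) := hn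
  by_cases hacc : LoopAcc A cc q v ↔ LoopAcc A cc q' v'
  · -- replace the head of the chain
    set s2 : ℕ → A.Q := fun j => if j = 0 then q else s j with hs2
    set vs2 : ℕ → List α := fun j => if j = 0 then v else vs j with hvs2
    have hch2 : IsChain A cc s2 vs2 r := by
      refine ⟨?_, ?_, ?_⟩
      · intro j hj
        by_cases hj0 : j = 0
        · simp only [hs2, hvs2, hj0, if_pos rfl]; exact hl
        · simp only [hs2, hvs2, if_neg hj0]; exact hch.1 j hj
      · intro j hj
        by_cases hj0 : j = 0
        · subst hj0
          simp only [hs2, if_pos rfl, if_neg one_ne_zero]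
          exact reach_trans A hr (hs0 ▸ hch.2.1 0 hj)
        · simp only [hs2, if_neg hj0, if_neg (by omega : j + 1 ≠ 0)]
          exact hch.2.1 j hj
      · intro j hj
        by_cases hj0 : j = 0
        · subst hj0
          simp only [hs2, hvs2, if_pos rfl, if_neg one_ne_zero]
          have h1 := hch.2.2 0 hj
          rw [hs0, hv0] at h1
          exact h1.trans (not_congr hacc.symm)
        · simp only [hs2, hvs2, if_neg hj0, if_neg (by omega : j + 1 ≠ 0)]
          exact hch.2.2 j hj
    apply Nat.sInf_le
    refine ⟨r, s2, vs2, hr1, hch2, rfl, rfl, ?_⟩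
    by_cases hr2 : r = 1
    · subst hr2
      simp only [hs2, hvs2, if_pos rfl]
      rw [hn]
      congr 1
      apply baseC_congr
      rw [hs0, hv0]
      exact hacc.symm
    · have hne : r - 1 ≠ 0 := by omega
      simp only [hs2, hvs2, if_neg hne]
      exact hn
  · -- prepend to the chain
    set s2 : ℕ → A.Q := fun j => if j = 0 then q else s (j - 1) with hs2
    set vs2 : ℕ → List α := fun j => if j = 0 then v else vs (j - 1) with hvs2
    have hch2 : IsChain A cc s2 vs2 (r + 1) := by
      refine ⟨?_, ?_, ?_⟩
      · intro j hj
        by_cases hj0 : j = 0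
        · simp only [hs2, hvs2, hj0, if_pos rfl]; exact hl
        · simp only [hs2, hvs2, if_neg hj0]; exact hch.1 (j - 1) (by omega)
      · intro j hj
        by_cases hj0 : j = 0
        · subst hj0
          simp only [hs2, if_pos rfl, if_neg one_ne_zero]
          rw [show (1 : ℕ) - 1 = 0 from rfl, hs0]
          exact hr
        · simp only [hs2, if_neg hj0, if_neg (by omega : j + 1 ≠ 0)]
          have he : j + 1 - 1 = (j - 1) + 1 := by omega
          rw [he]
          exact hch.2.1 (j - 1) (by omega)
      · intro j hj
        by_cases hj0 : j = 0
        · subst hj0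
          simp only [hs2, hvs2, if_pos rfl, if_neg one_ne_zero]
          rw [show (1 : ℕ) - 1 = 0 from rfl, hs0, hv0]
          exact aux_tauto4 _ _ hacc
        · simp only [hs2, hvs2, if_neg hj0, if_neg (by omega : j + 1 ≠ 0)]
          have he : j + 1 - 1 = (j - 1) + 1 := by omega
          rw [he]
          exact hch.2.2 (j - 1) (by omega)
    have hmem : baseC k (LoopAcc A cc (s (r - 1)) (vs (r - 1))) - r ∈ Cand A cc k q v := by
      refine ⟨r + 1, s2, vs2, by omega, hch2, rfl, rfl, ?_⟩
      have he : r + 1 - 1 = r := by omega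
      rw [he]
      simp only [hs2, hvs2, if_neg (by omega : r ≠ 0)]
    calc col A cc k q v ≤ _ := Nat.sInf_le hmem
      _ ≤ col A cc k q' v' := by rw [hn]; exact Nat.sub_le_sub_left (by omega) _

lemma exists_reach_loop [Nonempty α] (q : A.Q) :
    ∃ p v, Reach A q p ∧ IsLoop A p v := by
  obtain ⟨σ⟩ := ‹Nonempty α›
  set f : ℕ → A.Q := fun t => runFrom A q (List.replicate t σ) with hf
  obtain ⟨a, b, hab, he⟩ := Finite.exists_ne_map_eq_of_infinite f
  rcases Nat.lt_or_ge a b with h | h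
  · refine ⟨f a, List.replicate (b - a) σ, ⟨List.replicate a σ, rfl⟩,
      by intro hnil; have := congrArg List.length hnil; simp at this; omega, ?_⟩
    have : List.replicate b σ = List.replicate a σ ++ List.replicate (b - a) σ := by
      rw [← List.replicate_add]; congr 1; omega
    calc runFrom A (f a) (List.replicate (b - a) σ)
        = runFrom A q (List.replicate b σ) := by rw [this, runFrom_append]
      _ = f a := he.symm
  · have hba : b < a := by omega
    refine ⟨f b, List.replicate (a - b) σ, ⟨List.replicate b σ, rfl⟩,
      by intro hnil; have := congrArg List.length hnil; simp at this; omega, ?_⟩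
    have : List.replicate a σ = List.replicate b σ ++ List.replicate (a - b) σ := by
      rw [← List.replicate_add]; congr 1; omega
    calc runFrom A (f b) (List.replicate (a - b) σ)
        = runFrom A q (List.replicate a σ) := by rw [this, runFrom_append]
      _ = f b := he

lemma run_window (w : ℕ → α) (q : A.Q) (v : List α) (N : ℕ) (hv : 0 < v.length)
    (hqN : A.run w N = q)
    (hper : ∀ t, w (N + t) = v[t % v.length]'(Nat.mod_lt _ hv)) :
    ∀ j ≤ v.length, A.run w (N + j) = runFrom A q (v.take j) := by
  intro j
  induction j with
  | zero => intro _; simpa using hqN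
  | succ j ih =>
      intro hj
      have e1 : A.run w (N + (j + 1)) = A.δ (A.run w (N + j)) (w (N + j)) := rfl
      rw [e1, ih (by omega), hper j]
      have hjlt : j < v.length := by omega
      have e2 : v.take (j + 1) = v.take j ++ [v[j]] := by
        rw [List.take_succ, List.getElem?_eq_getElem hjlt]
        rfl
      have e3 : v[j % v.length]'(Nat.mod_lt _ hv) = v[j] := by
        congr 1
        exact Nat.mod_eq_of_lt hjlt
      rw [e2, runFrom_append, e3]
      rfl

lemma accept_iff_loopSup (w : ℕ → α) (q : A.Q) (v : List α) (N : ℕ) (hv : 0 < v.length)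
    (hqN : A.run w N = q)
    (hper : ∀ t, w (N + t) = v[t % v.length]'(Nat.mod_lt _ hv))
    (hloop : runFrom A q v = q) :
    ParityAccept A cc w ↔ Odd (loopSup A cc q v) := by
  have hwin := run_window A w q v N hv hqN hper
  have hper' : ∀ t, A.run w (N + t + v.length) = A.run w (N + t) := by
    intro t
    induction t with
    | zero =>
        have h0 : A.run w (N + 0 + v.length) = A.run w (N + v.length) := by norm_num
        rw [h0, hwin v.length (le_refl _), List.take_length, hloop]
        exact hqN.symm
    | succ t ih =>
        have e0 : N + (t + 1) + v.length = (N + t + v.length) + 1 := by omega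
        have e1 : A.run w ((N + t + v.length) + 1)
            = A.δ (A.run w (N + t + v.length)) (w (N + t + v.length)) := rfl
        have e2 : A.run w (N + (t + 1)) = A.δ (A.run w (N + t)) (w (N + t)) := rfl
        rw [e0, e1, e2, ih]
        congr 1
        have e3 : N + t + v.length = N + (t + v.length) := by omega
        rw [e3, hper, hper]
        congr 1
        exact Nat.add_mod_right t v.length
  have he : ((Finset.range v.length).sup fun j => cc (A.run w (N + j)))
      = loopSup A cc q v := by
    apply Finset.sup_congr rfl
    intro j hj
    rw [hwin j (le_of_lt (Finset.mem_range.1 hj))]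
  rw [parity_of_periodic A cc w N v.length hv hper', he]

lemma weak_runFrom_le (hmono : ∀ q σ, cc q ≤ cc (A.δ q σ)) (q : A.Q) (u : List α) :
    cc q ≤ cc (runFrom A q u) := by
  induction u generalizing q with
  | nil => exact le_refl _
  | cons a u ih => exact le_trans (hmono q a) (ih (A.δ q a))

lemma weak_loopSup (hmono : ∀ q σ, cc q ≤ cc (A.δ q σ)) {q : A.Q} {v : List α}
    (hloop : runFrom A q v = q) (hv : 0 < v.length) :
    loopSup A cc q v = cc q := by
  apply le_antisymm
  · apply Finset.sup_le
    intro j hj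
    calc cc (runFrom A q (v.take j))
        ≤ cc (runFrom A (runFrom A q (v.take j)) (v.drop j)) :=
          weak_runFrom_le A cc hmono _ _
      _ = cc (runFrom A q v) := by rw [← runFrom_append, List.take_append_drop]
      _ = cc q := by rw [hloop]
  · have h0 : cc (runFrom A q (v.take 0)) ≤ loopSup A cc q v :=
      Finset.le_sup (f := fun j => cc (runFrom A q (v.take j))) (Finset.mem_range.2 hv)
    simpa using h0

end Aux
namespace Aux

variable {α : Type}

def BIG (xh xx : ℕ → List α) (i : ℕ) (e : ℕ → ℕ) (ℓ : ℕ) : List α :=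
  ((List.range (ℓ - i)).map
    (fun j => xh (i + j) ++ (List.replicate (e (i + j)) (xx (i + j))).flatten)).flatten

lemma BIG_self (xh xx : ℕ → List α) (i : ℕ) (e : ℕ → ℕ) : BIG xh xx i e i = [] := by
  simp [BIG]

lemma BIG_succ (xh xx : ℕ → List α) (i : ℕ) (e : ℕ → ℕ) {ℓ : ℕ} (h : i ≤ ℓ) :
    BIG xh xx i e (ℓ + 1)
      = BIG xh xx i e ℓ ++ (xh ℓ ++ (List.replicate (e ℓ) (xx ℓ)).flatten) := by
  unfold BIG
  rw [show ℓ + 1 - i = (ℓ - i) + 1 by omega, List.range_succ, List.map_append,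
    List.flatten_append]
  congr 1
  simp only [List.map_cons, List.map_nil, List.flatten_cons, List.flatten_nil,
    List.append_nil]
  rw [show i + (ℓ - i) = ℓ by omega]

lemma BIG_congr (xh xx : ℕ → List α) (i : ℕ) {e e' : ℕ → ℕ} (ℓ : ℕ)
    (h : ∀ j, i ≤ j → j < ℓ → e j = e' j) : BIG xh xx i e ℓ = BIG xh xx i e' ℓ := by
  unfold BIG
  congr 1
  apply List.map_congr_left
  intro j hj
  rw [List.mem_range] at hj
  rw [h (i + j) (by omega) (by omega)]

lemma mem_LangChain (xh xx : ℕ → List α) (i ℓ : ℕ) (hv : 0 < (xx ℓ).length)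
    (e : ℕ → ℕ) (a : ℕ) :
    appendPer ((BIG xh xx i e ℓ ++ xh ℓ) ++ (List.replicate a (xx ℓ)).flatten) (xx ℓ) hv
      ∈ LangChain xh xx i ℓ := by
  refine ⟨e, fun m => ?_⟩
  exact appendPer_prefix (BIG xh xx i e ℓ ++ xh ℓ) (xx ℓ) hv a m

lemma langchain_dest (xh xx : ℕ → List α) (i ℓ : ℕ) (hv : 0 < (xx ℓ).length)
    {w : ℕ → α} (hw : w ∈ LangChain xh xx i ℓ) :
    ∃ e, HasPrefixWord w (BIG xh xx i e ℓ ++ xh ℓ) ∧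
      ∀ t, w ((BIG xh xx i e ℓ ++ xh ℓ).length + t)
        = (xx ℓ)[t % (xx ℓ).length]'(Nat.mod_lt _ hv) := by
  obtain ⟨e, he⟩ := hw
  refine ⟨e, ?_, ?_⟩
  · have h0 := he 0
    simpa [BIG] using h0
  · intro t
    set u0 := BIG xh xx i e ℓ ++ xh ℓ with hu0
    have hm' : HasPrefixWord w (u0 ++ (List.replicate (t + 1) (xx ℓ)).flatten) :=
      he (t + 1)
    have hmul : t + 1 ≤ (t + 1) * (xx ℓ).length := Nat.le_mul_of_pos_right _ hv
    have hlt : u0.length + t < (u0 ++ (List.replicate (t + 1) (xx ℓ)).flatten).length := by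
      simp only [List.length_append, flat_rep_length]; omega
    have h1 := hasPrefix_iff.1 hm' _ hlt
    rw [h1, List.getElem_append_right (by omega)]
    simp only [Nat.add_sub_cancel_left]
    exact flat_rep_getElem _ _ hv _ (by rw [flat_rep_length]; omega)

lemma flower_to_RHS {i k : ℕ} (hik : i ≤ k) (A : DetAuto α) (cc : A.Q → ℕ)
    {L : Set (ℕ → α)} (hA : ∀ x, x ∈ L ↔ ParityAccept A cc x) (hf : Flower A cc i k) :
    ∃ (xh xx : ℕ → List α),
      (∀ ℓ, i ≤ ℓ → ℓ ≤ k → xx ℓ ≠ []) ∧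
      (∀ ℓ, i ≤ ℓ → ℓ ≤ k → Even ℓ → LangChain xh xx i ℓ ⊆ L) ∧
      (∀ ℓ, i ≤ ℓ → ℓ ≤ k → Odd ℓ → LangChain xh xx i ℓ ∩ L = ∅) := by
  obtain ⟨s, vs, hloops, hri, hrs, hacc⟩ := hf
  have hch : ∀ ℓ, ∃ u : List α, (ℓ = i → runFrom A A.init u = s i) ∧
      (i < ℓ → ℓ ≤ k → runFrom A (s (ℓ - 1)) u = s ℓ) := by
    intro ℓ
    by_cases h1 : ℓ = i
    · obtain ⟨u, hu⟩ := hri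
      exact ⟨u, fun _ => hu, fun h2 _ => absurd h1 (by omega)⟩
    · by_cases h2 : i < ℓ ∧ ℓ ≤ k
      · obtain ⟨u, hu⟩ := hrs (ℓ - 1) (by omega) (by omega)
        refine ⟨u, fun h => absurd h h1, fun _ _ => ?_⟩
        rw [show ℓ - 1 + 1 = ℓ by omega] at hu
        exact hu
      · exact ⟨[], fun h => absurd h h1, fun ha hb => absurd ⟨ha, hb⟩ h2⟩
  choose xh hxh1 hxh2 using hch
  have hmem : ∀ ℓ, i ≤ ℓ → ℓ ≤ k → ∀ w ∈ LangChain xh vs i ℓ, (w ∈ L ↔ Even ℓ) := by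
    intro ℓ h1 h2 w hw
    have hv : 0 < (vs ℓ).length := List.length_pos_iff.2 (hloops ℓ h1 h2).1
    obtain ⟨e, hpre, hper⟩ := langchain_dest xh vs i ℓ hv hw
    have hrun : ∀ j, j ≤ ℓ - i →
        runFrom A A.init (BIG xh vs i e (i + j) ++ xh (i + j)) = s (i + j) := by
      intro j
      induction j with
      | zero =>
          intro _
          rw [Nat.add_zero, BIG_self, List.nil_append]
          exact hxh1 i rfl
      | succ j ih =>
          intro hj
          have hik2 : i ≤ i + j := by omega
          rw [show i + (j + 1) = (i + j) + 1 by omega, BIG_succ xh vs i e hik2]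
          simp only [runFrom_append]
          have ih' := ih (by omega)
          simp only [runFrom_append] at ih'
          rw [ih']
          rw [runFrom_loop_pow A (hloops (i + j) (by omega) (by omega)).2]
          exact hxh2 (i + j + 1) (by omega) (by omega)
    have hstem : runFrom A A.init (BIG xh vs i e ℓ ++ xh ℓ) = s ℓ := by
      have := hrun (ℓ - i) (le_refl _)
      rwa [show i + (ℓ - i) = ℓ by omega] at this
    have hqN : A.run w (BIG xh vs i e ℓ ++ xh ℓ).length = s ℓ :=
      (run_of_prefix A hpre).trans hstem
    have hPA := accept_iff_loopSup A cc w (s ℓ) (vs ℓ) _ hv hqN hper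
      (hloops ℓ h1 h2).2
    exact (hA w).trans (hPA.trans (hacc ℓ h1 h2))
  refine ⟨xh, vs, fun ℓ h1 h2 => (hloops ℓ h1 h2).1, ?_, ?_⟩
  · intro ℓ h1 h2 hev w hw
    exact (hmem ℓ h1 h2 w hw).2 hev
  · intro ℓ h1 h2 hodd
    rw [Set.eq_empty_iff_forall_notMem]
    rintro w ⟨hw1, hw2⟩
    exact (Nat.not_even_iff_odd.2 hodd) ((hmem ℓ h1 h2 w hw1).1 hw2)

end Aux
namespace Aux

variable {α : Type}

/-- Pumping step inside a weak automaton: from a state reached by a stem of level `ℓ`,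
find a pumped stem reaching a state `q` looping on a power of `xx ℓ`, whose color parity
matches `Even ℓ`. -/
lemma pump (M : DetAuto α) (c : M.Q → ℕ) (hmono : ∀ q σ, c q ≤ c (M.δ q σ))
    {L : Set (ℕ → α)} (hrec : ∀ x, x ∈ L ↔ ParityAccept M c x)
    (xh xx : ℕ → List α) (i ℓ : ℕ) (hv : 0 < (xx ℓ).length)
    (hLC : ∀ w ∈ LangChain xh xx i ℓ, (w ∈ L ↔ Even ℓ))
    (e0 : ℕ → ℕ) :
    ∃ (e : ℕ → ℕ) (q : M.Q),
      runFrom M M.init ((BIG xh xx i e ℓ ++ xh ℓ) ++ (List.replicate (e ℓ) (xx ℓ)).flatten)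
        = q ∧
      (∃ per, 1 ≤ per ∧ runFrom M q ((List.replicate per (xx ℓ)).flatten) = q) ∧
      (Odd (c q) ↔ Even ℓ) ∧ (∀ j, j ≠ ℓ → e j = e0 j) := by
  set f : ℕ → M.Q := fun n =>
    runFrom M M.init ((BIG xh xx i e0 ℓ ++ xh ℓ) ++ (List.replicate n (xx ℓ)).flatten)
    with hf
  have hcol : ∃ a b, a < b ∧ f a = f b := by
    obtain ⟨a, b, hab, he⟩ := Finite.exists_ne_map_eq_of_infinite f
    rcases Nat.lt_or_ge a b with h | h
    · exact ⟨a, b, h, he⟩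
    · exact ⟨b, a, by omega, he.symm⟩
  obtain ⟨a, b, hab, hfab⟩ := hcol
  set e : ℕ → ℕ := fun j => if j = ℓ then a else e0 j with he
  have hBIG : BIG xh xx i e ℓ = BIG xh xx i e0 ℓ :=
    BIG_congr xh xx i ℓ (fun j _ hj => by simp only [he, if_neg (by omega : j ≠ ℓ)])
  have heℓ : e ℓ = a := by simp [he]
  set q : M.Q := f a with hq
  have hreach : runFrom M M.init
      ((BIG xh xx i e ℓ ++ xh ℓ) ++ (List.replicate (e ℓ) (xx ℓ)).flatten) = q := by
    rw [hBIG, heℓ]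
  have hflat : (List.replicate b (xx ℓ)).flatten
      = (List.replicate a (xx ℓ)).flatten ++ (List.replicate (b - a) (xx ℓ)).flatten := by
    rw [← List.flatten_append, ← List.replicate_add]
    congr 2
    omega
  have hloop : runFrom M q ((List.replicate (b - a) (xx ℓ)).flatten) = q := by
    have h2 : f b = runFrom M (f a) ((List.replicate (b - a) (xx ℓ)).flatten) := by
      rw [hf]
      simp only [hflat, runFrom_append]
    calc runFrom M q ((List.replicate (b - a) (xx ℓ)).flatten) = f b := h2.symm
      _ = q := hfab.symm
  -- the pumped ultimately periodic word
  set u : List α := (BIG xh xx i e0 ℓ ++ xh ℓ) ++ (List.replicate a (xx ℓ)).flatten with hu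
  set W : ℕ → α := appendPer u (xx ℓ) hv with hW
  have hWmem : W ∈ LangChain xh xx i ℓ := by
    rw [hW, hu, ← hBIG]
    exact mem_LangChain xh xx i ℓ hv e a
  set v2 : List α := (List.replicate (b - a) (xx ℓ)).flatten with hv2
  have hv2len : 0 < v2.length := by
    rw [hv2, flat_rep_length]
    have : 1 * (xx ℓ).length ≤ (b - a) * (xx ℓ).length :=
      Nat.mul_le_mul_right _ (by omega)
    omega
  have hdvd : (xx ℓ).length ∣ v2.length := by
    rw [hv2, flat_rep_length]
    exact dvd_mul_left _ _
  have hqN : M.run W u.length = q :=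
    (run_of_prefix M (appendPer_prefix_self u (xx ℓ) hv)).trans rfl
  have hper : ∀ t, W (u.length + t) = v2[t % v2.length]'(Nat.mod_lt _ hv2len) := by
    intro t
    rw [hW, appendPer_ge hv t]
    rw [flat_rep_getElem _ _ hv _ (Nat.mod_lt _ hv2len)]
    congr 1
    rw [Nat.mod_mod_of_dvd t hdvd]
  have hPA : ParityAccept M c W ↔ Odd (loopSup M c q v2) :=
    accept_iff_loopSup M c W q v2 u.length hv2len hqN hper hloop
  have hsup : loopSup M c q v2 = c q := weak_loopSup M c hmono hloop hv2len
  have hparity : Odd (c q) ↔ Even ℓ := by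
    rw [← hsup, ← hPA, ← hrec W]
    exact hLC W hWmem
  exact ⟨e, q, hreach, ⟨b - a, by omega, hloop⟩, hparity,
    fun j hj => by simp only [he, if_neg hj]⟩

set_option maxHeartbeats 2000000 in
lemma notDWW_of_RHS {i k : ℕ} (hi01 : i = 0 ∨ i = 1) (hik : i ≤ k)
    {L : Set (ℕ → α)} (xh xx : ℕ → List α)
    (hne : ∀ ℓ, i ≤ ℓ → ℓ ≤ k → xx ℓ ≠ [])
    (heven : ∀ ℓ, i ≤ ℓ → ℓ ≤ k → Even ℓ → LangChain xh xx i ℓ ⊆ L)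
    (hodd : ∀ ℓ, i ≤ ℓ → ℓ ≤ k → Odd ℓ → LangChain xh xx i ℓ ∩ L = ∅) :
    ¬ DWWRecognizable' i k L := by
  rintro ⟨M, c, hbnd, hmono, hrec⟩
  have hLC : ∀ ℓ, i ≤ ℓ → ℓ ≤ k → ∀ w ∈ LangChain xh xx i ℓ, (w ∈ L ↔ Even ℓ) := by
    intro ℓ h1 h2 w hw
    rcases Nat.even_or_odd ℓ with hev | hod
    · exact iff_of_true (heven ℓ h1 h2 hev hw) hev
    · refine iff_of_false ?_ (Nat.not_even_iff_odd.2 hod)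
      intro hwL
      have := hodd ℓ h1 h2 hod
      rw [Set.eq_empty_iff_forall_notMem] at this
      exact this w ⟨hw, hwL⟩
  have key : ∀ d, d ≤ k - i → ∃ (e : ℕ → ℕ) (q : M.Q),
      runFrom M M.init ((BIG xh xx i e (i + d) ++ xh (i + d))
        ++ (List.replicate (e (i + d)) (xx (i + d))).flatten) = q ∧
      (Odd (c q) ↔ Even (i + d)) ∧ i + d + 1 ≤ c q := by
    intro d
    induction d with
    | zero =>
        intro _
        have hv : 0 < (xx i).length := List.length_pos_iff.2 (hne i (le_refl _) hik)
        obtain ⟨e, q, hreach, hloop, hpar, hagree⟩ := pump M c hmono hrec xh xx i i hv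
          (hLC i (le_refl _) hik) (fun _ => 0)
        refine ⟨e, q, by simpa using hreach, by simpa using hpar, ?_⟩
        rcases hi01 with h0 | h1
        · have := Nat.odd_iff.1 (hpar.2 (by rw [h0]; exact Even.zero))
          omega
        · have h2 : ¬ Odd (c q) := fun ho => by
            have h5 := hpar.1 ho
            rw [h1, Nat.even_iff] at h5
            omega
          have h3 : c q % 2 = 0 := Nat.even_iff.1 (Nat.not_odd_iff_even.1 h2)
          have h4 := (hbnd q).1
          omega
    | succ d ih =>
        intro hd
        obtain ⟨e, q, hreach, hpar, hbound⟩ := ih (by omega)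
        set ℓ := i + d with hℓ
        set ℓ' := i + d + 1 with hℓ'
        have hℓk : ℓ < k := by omega
        have hv' : 0 < (xx ℓ').length := List.length_pos_iff.2 (hne ℓ' (by omega) (by omega))
        obtain ⟨e2, q2, hreach2, hloop2, hpar2, hagree2⟩ := pump M c hmono hrec xh xx i ℓ' hv'
          (hLC ℓ' (by omega) (by omega)) e
        have hBIGe2 : BIG xh xx i e2 ℓ' = BIG xh xx i e ℓ' :=
          BIG_congr xh xx i ℓ' (fun j _ hj => hagree2 j (by omega))
        have hBIGsucc : BIG xh xx i e ℓ'
            = BIG xh xx i e ℓ ++ (xh ℓ ++ (List.replicate (e ℓ) (xx ℓ)).flatten) :=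
          BIG_succ xh xx i e (by omega)
        have hq2 : q2 = runFrom M q ((xh ℓ' ++ (List.replicate (e2 ℓ') (xx ℓ')).flatten)) := by
          rw [← hreach2, hBIGe2, hBIGsucc, ← hreach]
          simp only [runFrom_append]
        have hcle : c q ≤ c q2 := by
          rw [hq2]
          exact weak_runFrom_le M c hmono _ _
        have hstep : c q + 1 ≤ c q2 := by
          have hx : (c q % 2 = 1) ↔ (ℓ % 2 = 0) := by
            rw [← Nat.odd_iff, ← Nat.even_iff]; exact hpar
          have hy : (c q2 % 2 = 1) ↔ (ℓ' % 2 = 0) := by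
            rw [← Nat.odd_iff, ← Nat.even_iff]; exact hpar2
          have hx' : (c q % 2 = 1 ∧ ℓ % 2 = 0) ∨ (¬ (c q % 2 = 1) ∧ ¬ (ℓ % 2 = 0)) := by
            tauto
          have hy' : (c q2 % 2 = 1 ∧ ℓ' % 2 = 0) ∨ (¬ (c q2 % 2 = 1) ∧ ¬ (ℓ' % 2 = 0)) := by
            tauto
          have hll : ℓ' = ℓ + 1 := by omega
          omega
        exact ⟨e2, q2, hreach2, hpar2, by omega⟩
  obtain ⟨e, q, _, _, hbound⟩ := key (k - i) (le_refl _)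
  have := (hbnd q).2
  omega

end Aux
namespace Aux

variable {α : Type}

open Classical in
noncomputable def restrAuto (A : DetAuto α) : DetAuto α where
  Q := {p : A.Q // Reach A A.init p}
  fin := @Subtype.fintype _ _ (Classical.decPred _) _
  init := ⟨A.init, reach_refl A _⟩
  δ := fun q σ => ⟨A.δ q.1 σ, reach_trans A q.2 ⟨[σ], rfl⟩⟩

lemma restr_run (A : DetAuto α) (x : ℕ → α) :
    ∀ n, ((restrAuto A).run x n).1 = A.run x n := by
  intro n
  induction n with
  | zero => rfl
  | succ n ih =>
      show (A.δ ((restrAuto A).run x n).1 (x n)) = A.δ (A.run x n) (x n)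
      rw [ih]

set_option maxHeartbeats 2000000 in
lemma dww_of_noflower [Nonempty α] {i k : ℕ} (hi01 : i = 0 ∨ i = 1) (hik : i ≤ k)
    (A : DetAuto α) (cc : A.Q → ℕ) {L : Set (ℕ → α)}
    (hA : ∀ x, x ∈ L ↔ ParityAccept A cc x) (hnf : ¬ Flower A cc i k) :
    DWWRecognizable' i k L := by
  classical
  set M := restrAuto A with hM
  set S : M.Q → Set ℕ :=
    fun q => {n | ∃ p v, Reach A q.1 p ∧ IsLoop A p v ∧ col A cc k p v = n} with hS
  have hSne : ∀ q, (S q).Nonempty := by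
    intro q
    obtain ⟨p, v, hqp, hl⟩ := exists_reach_loop A q.1
    exact ⟨col A cc k p v, p, v, hqp, hl, rfl⟩
  set c' : M.Q → ℕ := fun q => sInf (S q) with hc'
  have hspec : ∀ q : M.Q, ∃ p v, Reach A q.1 p ∧ IsLoop A p v ∧ col A cc k p v = c' q :=
    fun q => Nat.sInf_mem (hSne q)
  have hbounds : ∀ q : M.Q, i ≤ c' q ∧ c' q ≤ k := by
    intro q
    obtain ⟨p, v, hqp, hl, hcol⟩ := hspec q
    have hreach : Reach A A.init p := reach_trans A q.2 hqp
    have h2 := colSpec A cc hi01 hik hnf hreach hl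
    rw [← hcol]
    exact ⟨h2.1, h2.2.1⟩
  have hmono : ∀ (q : M.Q) σ, c' q ≤ c' (M.δ q σ) := by
    intro q σ
    obtain ⟨p, v, hqp, hl, hcol⟩ := hspec (M.δ q σ)
    have h2 : Reach A q.1 p := reach_trans A ⟨[σ], rfl⟩ hqp
    exact hcol ▸ Nat.sInf_le ⟨p, v, h2, hl, rfl⟩
  have hrecog : ∀ x, x ∈ L ↔ ParityAccept M c' x := by
    intro x
    rw [hA x]
    set g : ℕ → ℕ := fun n => c' (M.run x n) with hg
    have hgmono : ∀ n, g n ≤ g (n + 1) := fun n => hmono (M.run x n) (x n)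
    have hgbdd : ∀ n, g n ≤ k := fun n => (hbounds _).2
    obtain ⟨N1, hstab⟩ := mono_bdd_stable k g hgmono hgbdd
    set V := g N1 with hV
    have hPA' : ParityAccept M c' x ↔ Odd V := by
      constructor
      · rintro ⟨m, hodd, hfreq, hmax⟩
        obtain ⟨n, hm, hn⟩ := (hfreq.and_eventually (Filter.eventually_ge_atTop N1)).exists
        have h5 : V = m := (hstab n hn).symm.trans hm
        exact h5 ▸ hodd
      · intro hodd
        refine ⟨V, hodd, ?_, ?_⟩
        · exact (Filter.eventually_atTop.2 ⟨N1, fun n hn => hstab n hn⟩).frequently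
        · intro m' hm'
          obtain ⟨n, hm, hn⟩ := (hm'.and_eventually (Filter.eventually_ge_atTop N1)).exists
          exact le_of_eq (hm.symm.trans (hstab n hn))
    set r := A.run x with hr
    obtain ⟨N0, hN0⟩ := eventually_freq_state r
    set F : Finset A.Q := Finset.univ.filter (fun p => ∃ᶠ n in Filter.atTop, r n = p) with hF
    set mstar := F.sup cc with hmstar
    have hub : ∀ p, (∃ᶠ n in Filter.atTop, r n = p) → cc p ≤ mstar := by
      intro p hp
      exact Finset.le_sup (Finset.mem_filter.2 ⟨Finset.mem_univ _, hp⟩)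
    have hFne : F.Nonempty := by
      obtain ⟨p, hp⟩ := exists_freq_state r
      exact ⟨p, Finset.mem_filter.2 ⟨Finset.mem_univ _, hp⟩⟩
    obtain ⟨qs, hqsmem, hqscc⟩ := Finset.exists_mem_eq_sup F hFne cc
    have hqsfreq : ∃ᶠ n in Filter.atTop, r n = qs := (Finset.mem_filter.1 hqsmem).2
    have hmfreq : ∃ᶠ n in Filter.atTop, cc (r n) = mstar :=
      hqsfreq.mono (fun n h => by rw [h, ← hqscc])
    have hPAA : ParityAccept A cc x ↔ Odd mstar := by
      constructor
      · rintro ⟨m, hodd, hfreq, hmax⟩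
        obtain ⟨p, hp⟩ := exists_freq_fiber r hfreq
        have hple : cc p ≤ mstar := hub p (hp.mono fun n h => h.2)
        obtain ⟨n, hcn, hrn⟩ := hp.exists
        rw [← hr] at hcn
        rw [hrn] at hcn
        have hm1 : m ≤ mstar := hcn ▸ hple
        have hm2 : mstar ≤ m := hmax mstar hmfreq
        have h6 : m = mstar := le_antisymm hm1 hm2
        exact h6 ▸ hodd
      · intro hodd
        refine ⟨mstar, hodd, hmfreq, ?_⟩
        intro m' hm'
        obtain ⟨p, hp⟩ := exists_freq_fiber r hm'
        have hple := hub p (hp.mono fun n h => h.2)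
        obtain ⟨n, hcn, hrn⟩ := hp.exists
        rw [← hr] at hcn
        rw [hrn] at hcn
        exact hcn ▸ hple
    obtain ⟨n1, hn1r, hn1ge⟩ :=
      (hqsfreq.and_eventually (Filter.eventually_ge_atTop (max N0 N1))).exists
    obtain ⟨n3, hn3r, hn3ge⟩ :=
      (hqsfreq.and_eventually (Filter.eventually_ge_atTop (n1 + 1))).exists
    set v := seg x n1 (n3 - n1) with hv
    have hvlen : v.length = n3 - n1 := seg_length x n1 (n3 - n1)
    have hvne : v ≠ [] := by
      intro h
      have h7 := congrArg List.length h
      rw [hvlen] at h7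
      simp at h7
      omega
    have hrunseg : ∀ t, runFrom A (r n1) (seg x n1 t) = r (n1 + t) :=
      fun t => (run_seg A x n1 t).symm
    have hloop : runFrom A qs v = qs := by
      have h10 : runFrom A (r n1) v = r n3 := by
        rw [hv, hrunseg, show n1 + (n3 - n1) = n3 by omega]
      rw [hn1r, hn3r] at h10
      exact h10
    have hIsLoop : IsLoop A qs v := ⟨hvne, hloop⟩
    have hreachqs : Reach A A.init qs := by
      refine ⟨seg x 0 n1, ?_⟩
      have h8 := run_seg A x 0 n1
      rw [Nat.zero_add] at h8
      have h9 : A.run x 0 = A.init := rfl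
      rw [h9] at h8
      rw [← h8, ← hr, hn1r]
    have hvpos : 0 < v.length := by rw [hvlen]; omega
    have hsup : loopSup A cc qs v = mstar := by
      apply le_antisymm
      · apply Finset.sup_le
        intro j hj
        have hjlt : j < n3 - n1 := by rw [← hvlen]; exact Finset.mem_range.1 hj
        rw [hv, seg_take x n1 (n3 - n1) j (by omega), ← hn1r, hrunseg]
        exact hub _ (hN0 (n1 + j) (by omega))
      · have h0 : cc (runFrom A qs (v.take 0)) ≤ loopSup A cc qs v :=
          Finset.le_sup (f := fun j => cc (runFrom A qs (v.take j)))
            (Finset.mem_range.2 hvpos)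
        simp only [List.take_zero, runFrom_nil] at h0
        rw [hmstar, hqscc]
        exact h0
    have hproj : ∀ n, (M.run x n).1 = r n := restr_run A x
    have hgn1 : V = c' (M.run x n1) := (hstab n1 (by omega)).symm
    have hcol_mem : col A cc k qs v ∈ S (M.run x n1) := by
      refine ⟨qs, v, ?_, hIsLoop, rfl⟩
      rw [hproj n1, hn1r]
      exact reach_refl A qs
    have hVcol : V = col A cc k qs v := by
      rw [hgn1]
      apply le_antisymm
      · exact Nat.sInf_le hcol_mem
      · apply le_csInf (hSne _)
        rintro n ⟨p, v', hqp, hl', rfl⟩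
        have hq2 : Reach A qs p := by
          rw [← hn1r, ← hproj n1]
          exact hqp
        exact col_mono A cc hIsLoop hl' hq2
    have hparity := (colSpec A cc hi01 hik hnf hreachqs hIsLoop).2.2
    have hfin : Odd V ↔ Odd mstar := by
      rw [hVcol]
      refine hparity.trans ?_
      show Odd (loopSup A cc qs v) ↔ Odd mstar
      rw [hsup]
    exact hPAA.trans (hfin.symm.trans hPA'.symm)
  exact ⟨M, c', hbounds, hmono, hrecog⟩

lemma dww_empty (hSig : IsEmpty α) (i k : ℕ) (hik : i ≤ k) (L : Set (ℕ → α)) :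
    DWWRecognizable' i k L := by
  refine ⟨⟨PUnit, PUnit.unit, fun _ _ => PUnit.unit⟩, fun _ => i,
    fun q => ⟨le_refl _, hik⟩, fun q σ => le_refl _, fun x => (hSig.false (x 0)).elim⟩

end Aux

/-- An ω-regular `L` is not DWW[i,k]-recognizable iff there are `x̂_i, …, x̂_k ∈ Σ*` and
`x_i, …, x_k ∈ Σ⁺` such that for even `ℓ` (with `i ≤ ℓ ≤ k`) the language
`x̂_i·x_i*·x̂_{i+1}·x_{i+1}*⋯x̂_ℓ·x_ℓ^ω` is contained in `L`, and for odd `ℓ` it is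
disjoint from `L`. -/
theorem stmt_16 {Sig : Type} [Fintype Sig] (i k : ℕ) (hi : i = 0 ∨ i = 1) (hik : i ≤ k)
    (L : Set (ℕ → Sig)) (hL : OmegaRegular L) :
    ¬ DWWRecognizable' i k L ↔
      ∃ (xh xx : ℕ → List Sig),
        (∀ ℓ, i ≤ ℓ → ℓ ≤ k → xx ℓ ≠ []) ∧
        (∀ ℓ, i ≤ ℓ → ℓ ≤ k → Even ℓ → LangChain xh xx i ℓ ⊆ L) ∧
        (∀ ℓ, i ≤ ℓ → ℓ ≤ k → Odd ℓ → LangChain xh xx i ℓ ∩ L = ∅) := by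
  obtain ⟨A, cc, hA⟩ := hL
  constructor
  · intro hnd
    by_cases hα : Nonempty Sig
    · haveI := hα
      by_contra hR
      apply hnd
      refine Aux.dww_of_noflower hi hik A cc hA ?_
      intro hf
      exact hR (Aux.flower_to_RHS hik A cc hA hf)
    · exact absurd (Aux.dww_empty (not_nonempty_iff.1 hα) i k hik L) hnd
  · rintro ⟨xh, xx, h1, h2, h3⟩
    exact Aux.notDWW_of_RHS hi hik xh xx h1 h2 h3
end

section
/- An ω-regular language L ⊆ Σ^ω is not DWW-recognizable if and only if there exist finite words x, x₂, x₄ ∈ Σ* and x₁, x₃ ∈ Σ⁺ such that, writing W = {x₁} ∪ {x₂·x₃ⁿ·x₄ : n ≥ 0}: x·W*·x₁^ω ⊆ L and x·W*·x₂·x₃^ω ∩ L = ∅. -/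
/-- The ω-language `x·W*·p·t^ω`. -/
def LangWStar {α : Type} (x : List α) (W : Set (List α)) (p t : List α) :
    Set (ℕ → α) :=
  { w | ∃ u : List (List α), (∀ z ∈ u, z ∈ W) ∧
        ∀ n, HasPrefixWord w (x ++ u.flatten ++ p ++ (List.replicate n t).flatten) }

/-- `L` is recognizable by a deterministic weak automaton: every run is eventually
homogeneous w.r.t. `acc`, and acceptance is Büchi acceptance. -/
def DWWRecognizable {α : Type} (L : Set (ℕ → α)) : Prop :=
  ∃ (M : DetAuto α) (acc : Set M.Q),
    (∀ x : ℕ → α, (∀ᶠ n in Filter.atTop, M.run x n ∈ acc) ∨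
      (∀ᶠ n in Filter.atTop, M.run x n ∉ acc)) ∧
    ∀ x, x ∈ L ↔ ∃ᶠ n in Filter.atTop, M.run x n ∈ acc

section Helpers

lemma exists_frequently_eq {Q : Type} [Finite Q] (f : ℕ → Q) (S : Set Q)
    (h : ∃ᶠ n in Filter.atTop, f n ∈ S) : ∃ q ∈ S, ∃ᶠ n in Filter.atTop, f n = q := by
  by_contra hc
  push_neg at hc
  have hev : ∀ᶠ n in Filter.atTop, ∀ q ∈ S, f n ≠ q :=
    (Filter.eventually_all_finite (Set.toFinite S)).2 fun q hq => by
      have := hc q hq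
      exact this
  obtain ⟨n, hn1, hn2⟩ := (h.and_eventually hev).exists
  exact hn2 (f n) hn1 rfl

lemma freq_exists_ge {p : ℕ → Prop} (h : ∃ᶠ n in Filter.atTop, p n) (N : ℕ) :
    ∃ n, N ≤ n ∧ p n := by
  obtain ⟨n, hn, hp⟩ := Filter.frequently_atTop.mp h N
  exact ⟨n, hn, hp⟩

lemma flatten_replicate_length {α : Type} (t : List α) (n : ℕ) :
    ((List.replicate n t).flatten).length = n * t.length := by
  induction n with
  | zero => simp
  | succ n ih => simp [List.replicate_succ, ih, Nat.succ_mul]; ring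

lemma flatten_replicate_getElem {α : Type} (t : List α) (ht : t ≠ []) (n j : ℕ)
    (hj : j < n * t.length) :
    ((List.replicate n t).flatten)[j]'(by rw [flatten_replicate_length]; exact hj) =
      t[j % t.length]'(Nat.mod_lt _ (List.length_pos_iff.mpr ht)) := by
  have htpos : 0 < t.length := List.length_pos_iff.mpr ht
  induction n generalizing j with
  | zero => omega
  | succ n ih =>
    simp only [List.replicate_succ, List.flatten_cons]
    by_cases h : j < t.length
    · rw [List.getElem_append_left h]
      congr 1
      exact (Nat.mod_eq_of_lt h).symm
    · push_neg at h
      rw [List.getElem_append_right h]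
      have hj' : j - t.length < n * t.length := by
        rw [Nat.succ_mul] at hj; omega
      rw [ih _ hj']
      congr 1
      conv_rhs => rw [show j = (j - t.length) + t.length by omega]
      rw [Nat.add_mod_right]

lemma HasPrefixWord.getElem {α : Type} {w : ℕ → α} {u : List α} (h : HasPrefixWord w u)
    (i : ℕ) (hi : i < u.length) : w i = u[i] := h ⟨i, hi⟩

lemma HasPrefixWord.getElem_right {α : Type} {w : ℕ → α} {P F : List α}
    (h : HasPrefixWord w (P ++ F)) (j : ℕ) (hj : j < F.length) :
    w (P.length + j) = F[j] := by
  have := h.getElem (P.length + j) (by simp; omega)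
  rw [this, List.getElem_append_right (by omega)]
  congr 1
  omega

end Helpers

namespace DetAuto
variable {α : Type} (M : DetAuto α)

def steps (q : M.Q) (u : List α) : M.Q := u.foldl M.δ q

@[simp] lemma steps_nil (q : M.Q) : M.steps q [] = q := rfl
@[simp] lemma steps_cons (q : M.Q) (a : α) (u : List α) :
    M.steps q (a :: u) = M.steps (M.δ q a) u := rfl
@[simp] lemma steps_append (q : M.Q) (u v : List α) :
    M.steps q (u ++ v) = M.steps (M.steps q u) v := List.foldl_append ..

def visited : M.Q → List α → List M.Q
  | _, [] => []
  | q, a :: u => q :: visited (M.δ q a) u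

@[simp] lemma visited_nil (q : M.Q) : M.visited q [] = [] := rfl
@[simp] lemma visited_cons (q : M.Q) (a : α) (u : List α) :
    M.visited q (a :: u) = q :: M.visited (M.δ q a) u := rfl

@[simp] lemma visited_append (q : M.Q) (u v : List α) :
    M.visited q (u ++ v) = M.visited q u ++ M.visited (M.steps q u) v := by
  induction u generalizing q with
  | nil => simp
  | cons a u ih => simp [ih]

@[simp] lemma visited_length (q : M.Q) (u : List α) :
    (M.visited q u).length = u.length := by
  induction u generalizing q with
  | nil => rfl
  | cons a u ih => simp [ih]

def seg (x : ℕ → α) (n k : ℕ) : List α := (List.range k).map fun i => x (n + i)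

@[simp] lemma seg_zero (x : ℕ → α) (n : ℕ) : seg x n 0 = [] := rfl
@[simp] lemma seg_length (x : ℕ → α) (n k : ℕ) : (seg x n k).length = k := by
  simp [seg]
lemma seg_succ (x : ℕ → α) (n k : ℕ) :
    seg x n (k+1) = seg x n k ++ [x (n + k)] := by
  simp [seg, List.range_succ]
lemma seg_getElem (x : ℕ → α) (n k i : ℕ) (h : i < k) :
    (seg x n k)[i]'(by simpa using h) = x (n + i) := by
  simp [seg]

lemma run_add (x : ℕ → α) (n k : ℕ) :
    M.run x (n + k) = M.steps (M.run x n) (seg x n k) := by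
  induction k with
  | zero => simp
  | succ k ih => rw [← Nat.add_assoc, seg_succ]; simp [run, ih]

lemma run_eq (x : ℕ → α) (n : ℕ) :
    M.run x n = M.steps M.init (seg x 0 n) := by
  have h := M.run_add x 0 n; rw [Nat.zero_add] at h; exact h

lemma visited_run (x : ℕ → α) (n k : ℕ) :
    M.visited (M.run x n) (seg x n k) = (List.range k).map fun i => M.run x (n + i) := by
  induction k with
  | zero => simp
  | succ k ih =>
      rw [seg_succ, visited_append, ih, List.range_succ]
      simp [← M.run_add x n k]

lemma seg_eq_take {w : ℕ → α} {L : List α} (h : HasPrefixWord w L) {n : ℕ}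
    (hn : n ≤ L.length) : seg w 0 n = L.take n := by
  apply List.ext_getElem (by simp [List.length_take, Nat.min_eq_left hn])
  intro i h1 h2
  have h1' : i < n := by simpa using h1
  rw [seg_getElem _ _ _ _ h1', List.getElem_take]
  simpa using h.getElem i (lt_of_lt_of_le h1' hn)

def lmax (c : M.Q → ℕ) (q : M.Q) (u : List α) : ℕ :=
  ((M.visited q u).map c).toFinset.sup id

lemma le_lmax (c : M.Q → ℕ) {q s : M.Q} {u : List α} (hs : s ∈ M.visited q u) :
    c s ≤ M.lmax c q u :=
  Finset.le_sup (f := id) (by simp; exact ⟨s, hs, rfl⟩)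

lemma exists_lmax (c : M.Q → ℕ) (q : M.Q) {u : List α} (hu : u ≠ []) :
    ∃ s ∈ M.visited q u, c s = M.lmax c q u := by
  have hne : ((M.visited q u).map c).toFinset.Nonempty := by
    match u with
    | a :: u => exact ⟨c q, by simp⟩
  obtain ⟨b, hb, hbe⟩ := Finset.exists_mem_eq_sup _ hne id
  simp only [List.mem_toFinset, List.mem_map] at hb
  obtain ⟨s, hs, rfl⟩ := hb
  exact ⟨s, hs, hbe.symm⟩

lemma lmax_rotate (c : M.Q → ℕ) {q s : M.Q} {u v : List α}
    (hu : M.steps q u = s) (hv : M.steps s v = q) :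
    M.lmax c q (u ++ v) = M.lmax c s (v ++ u) := by
  unfold lmax
  rw [visited_append, visited_append, hu, hv]
  congr 1
  exact List.toFinset_eq_of_perm _ _ (List.Perm.map c List.perm_append_comm)

lemma steps_flatten {q : M.Q} {u : List (List α)} (h : ∀ z ∈ u, M.steps q z = q) :
    M.steps q u.flatten = q := by
  induction u with
  | nil => rfl
  | cons z u ih =>
      rw [List.flatten_cons, steps_append, h z (by simp)]
      exact ih fun z hz => h z (by simp [hz])

lemma steps_flatten_replicate {q : M.Q} {v : List α} (h : M.steps q v = q) (n : ℕ) :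
    M.steps q ((List.replicate n v).flatten) = q :=
  M.steps_flatten fun z hz => by rw [List.eq_of_mem_replicate hz]; exact h

end DetAuto

/-- Lemma B : parity acceptance on `x·W*·p·t^ω` words is determined by the `t`-loop. -/
lemma lemB {α : Type} (M : DetAuto α) (c : M.Q → ℕ) (x p t : List α) (W : Set (List α))
    (q q' : M.Q) (hx : M.steps M.init x = q) (hW : ∀ z ∈ W, M.steps q z = q)
    (hp : M.steps q p = q') (ht : M.steps q' t = q') (htne : t ≠ [])
    (w : ℕ → α) (hw : w ∈ LangWStar x W p t) :
    ParityAccept M c w ↔ Odd (M.lmax c q' t) := by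
  have htpos : 0 < t.length := List.length_pos_iff.mpr htne
  obtain ⟨u, hu, hpref⟩ := hw
  set P : List α := x ++ u.flatten ++ p with hP
  have hPq : M.steps M.init P = q' := by
    rw [hP, M.steps_append, M.steps_append, hx, M.steps_flatten fun z hz => hW z (hu z hz), hp]
  have hpref' : ∀ n, HasPrefixWord w (P ++ (List.replicate n t).flatten) := by
    intro n
    have := hpref n
    simpa [hP, List.append_assoc] using this
  have hP0 : HasPrefixWord w P := by
    have := hpref' 0
    simpa using this
  have hseg : ∀ k, DetAuto.seg w (P.length + k * t.length) t.length = t := by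
    intro k
    apply List.ext_getElem (by simp)
    intro i h1 h2
    rw [DetAuto.seg_getElem _ _ _ _ (by simpa using h1)]
    have hidx : k * t.length + i < ((List.replicate (k+1) t).flatten).length := by
      rw [flatten_replicate_length, Nat.succ_mul]; omega
    have := (hpref' (k+1)).getElem_right (k * t.length + i) hidx
    rw [← Nat.add_assoc] at this
    rw [this, flatten_replicate_getElem t htne (k+1) _ (by rw [Nat.succ_mul]; omega)]
    congr 1
    rw [Nat.mul_comm k, Nat.mul_add_mod, Nat.mod_eq_of_lt h2]
  have h2 : ∀ k, M.run w (P.length + k * t.length) = q' := by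
    intro k
    induction k with
    | zero =>
        simp only [Nat.zero_mul, Nat.add_zero]
        rw [M.run_eq, DetAuto.seg_eq_take hP0 (le_refl _), List.take_length, hPq]
    | succ k ih =>
        rw [Nat.succ_mul, ← Nat.add_assoc, M.run_add, ih, hseg, ht]
  have hvis : ∀ k, M.visited q' t =
      (List.range t.length).map fun i => M.run w (P.length + k * t.length + i) := by
    intro k
    have hv := M.visited_run w (P.length + k * t.length) t.length
    rw [h2 k, hseg k] at hv
    exact hv
  have hget : ∀ k i (hi : i < t.length),
      M.run w (P.length + k * t.length + i) = (M.visited q' t)[i]'(by simp [hi]) := by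
    intro k i hi
    simp only [hvis k, List.getElem_map, List.getElem_range]
  set m := M.lmax c q' t with hm
  obtain ⟨s, hs, hcs⟩ := M.exists_lmax c q' htne
  obtain ⟨i₀, hi₀, hgi⟩ := List.getElem_of_mem hs
  rw [M.visited_length] at hi₀
  have f1 : ∃ᶠ n in Filter.atTop, c (M.run w n) = m := by
    rw [Filter.frequently_atTop]
    intro N
    refine ⟨P.length + N * t.length + i₀, by nlinarith, ?_⟩
    rw [hget N i₀ hi₀, hgi, hcs]
  have f2 : ∀ m', (∃ᶠ n in Filter.atTop, c (M.run w n) = m') → m' ≤ m := by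
    intro m' hm'
    obtain ⟨n, hn, hcn⟩ := freq_exists_ge hm' P.length
    set j := n - P.length with hj
    have hn' : n = P.length + (j / t.length * t.length + j % t.length) := by
      rw [Nat.div_add_mod']
      omega
    have hi : j % t.length < t.length := Nat.mod_lt _ htpos
    have hrn : M.run w n = (M.visited q' t)[j % t.length]'(by simp [hi]) := by
      rw [hn', ← Nat.add_assoc]
      exact hget (j / t.length) (j % t.length) hi
    rw [← hcn, hrn]
    exact M.le_lmax c (List.getElem_mem _)
  constructor
  · rintro ⟨m₁, hodd, hf, hmax⟩
    have e1 : m₁ ≤ m := f2 m₁ hf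
    have e2 : m ≤ m₁ := hmax m f1
    have : m = m₁ := le_antisymm e2 e1
    rwa [this]
  · intro hodd
    exact ⟨m, hodd, f1, f2⟩

lemma DetAuto.self_mem_visited {α : Type} (M : DetAuto α) (q : M.Q) {u : List α}
    (hu : u ≠ []) : q ∈ M.visited q u := by
  cases u with
  | nil => exact absurd rfl hu
  | cons a u => simp

lemma seg_ne_nil {α : Type} {x : ℕ → α} {n k : ℕ} (hk : 0 < k) :
    DetAuto.seg x n k ≠ [] := by
  apply List.ne_nil_of_length_pos
  simpa using hk

/-- Lemma A : if no reachable state carries loops of both parities, then L is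
DWW-recognizable. -/
lemma lemA {α : Type} (M : DetAuto α) (c : M.Q → ℕ) (L : Set (ℕ → α))
    (hMc : ∀ x, x ∈ L ↔ ParityAccept M c x)
    (H : ∀ (pl u v : List α), u ≠ [] → v ≠ [] →
      M.steps (M.steps M.init pl) u = M.steps M.init pl →
      M.steps (M.steps M.init pl) v = M.steps M.init pl →
      Odd (M.lmax c (M.steps M.init pl) u) → Odd (M.lmax c (M.steps M.init pl) v)) :
    DWWRecognizable L := by
  classical
  have H' : ∀ (q : M.Q) (pl : List α), M.steps M.init pl = q → ∀ u v : List α,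
      u ≠ [] → v ≠ [] → M.steps q u = q → M.steps q v = q →
      Odd (M.lmax c q u) → Odd (M.lmax c q v) := by
    rintro q pl rfl
    exact H pl
  set acc : Set M.Q := {q | ∃ u, u ≠ [] ∧ M.steps q u = q ∧ Odd (M.lmax c q u)} with hacc
  refine ⟨M, acc, ?_, ?_⟩
  · -- homogeneity
    intro x
    have htriv : ∃ᶠ n in Filter.atTop, M.run x n ∈ (Set.univ : Set M.Q) :=
      Filter.Eventually.frequently (by filter_upwards with n; trivial)
    obtain ⟨q, -, hq⟩ := exists_frequently_eq (M.run x) Set.univ htriv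
    obtain ⟨n₀, -, hn₀⟩ := freq_exists_ge hq 0
    have key : ∀ n, n₀ ≤ n → (M.run x n ∈ acc ↔ q ∈ acc) := by
      intro n hn
      rcases eq_or_lt_of_le hn with heq | hlt
      · rw [← heq, hn₀]
      · obtain ⟨n', hn', hqn'⟩ := freq_exists_ge hq (n + 1)
        set s := M.run x n with hs
        set U := DetAuto.seg x n₀ (n - n₀) with hU
        set V := DetAuto.seg x n (n' - n) with hV
        have hu : M.steps q U = s := by
          rw [← hn₀, ← M.run_add]; congr 1; omega
        have hv : M.steps s V = q := by
          rw [hs, ← M.run_add, ← hqn']; congr 1; omega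
        have hUne : U ≠ [] := seg_ne_nil (by omega)
        have hUVne : U ++ V ≠ [] := fun hc => hUne (List.append_eq_nil_iff.mp hc).1
        have hVUne : V ++ U ≠ [] := fun hc => hUne (List.append_eq_nil_iff.mp hc).2
        have hloopq : M.steps q (U ++ V) = q := by rw [M.steps_append, hu, hv]
        have hloops : M.steps s (V ++ U) = s := by rw [M.steps_append, hv, hu]
        have hrot := M.lmax_rotate c hu hv
        have hreachq : M.steps M.init (DetAuto.seg x 0 n₀) = q := by
          rw [← M.run_eq, hn₀]
        have hreachs : M.steps M.init (DetAuto.seg x 0 n) = s := (M.run_eq x n).symm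
        constructor
        · rintro ⟨z, hzne, hzl, hzo⟩
          refine ⟨U ++ V, hUVne, hloopq, ?_⟩
          rw [hrot]
          exact H' s _ hreachs z (V ++ U) hzne hVUne hzl hloops hzo
        · rintro ⟨z, hzne, hzl, hzo⟩
          refine ⟨V ++ U, hVUne, hloops, ?_⟩
          rw [← hrot]
          exact H' q _ hreachq z (U ++ V) hzne hUVne hzl hloopq hzo
    by_cases hqa : q ∈ acc
    · exact Or.inl (Filter.eventually_atTop.mpr ⟨n₀, fun n hn => (key n hn).mpr hqa⟩)
    · exact Or.inr (Filter.eventually_atTop.mpr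
        ⟨n₀, fun n hn => fun hmem => hqa ((key n hn).mp hmem)⟩)
  · -- acceptance
    intro x
    rw [hMc x]
    constructor
    · rintro ⟨m, hodd, hf, hmax⟩
      obtain ⟨qm, hqm, hqmf⟩ := exists_frequently_eq (M.run x) {s | c s = m} hf
      have hev : ∀ᶠ n in Filter.atTop, c (M.run x n) ≤ m := by
        by_contra hc
        rw [Filter.not_eventually] at hc
        have hc' : ∃ᶠ n in Filter.atTop, M.run x n ∈ {s | m < c s} :=
          hc.mono fun n hn => lt_of_not_ge hn
        obtain ⟨s, hsmem, hsf⟩ := exists_frequently_eq _ _ hc'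
        have : c s ≤ m := hmax (c s) (hsf.mono fun n hn => by rw [hn])
        exact absurd this (not_le.mpr hsmem)
      obtain ⟨N, hN⟩ := Filter.eventually_atTop.mp hev
      obtain ⟨n₀, hn₀N, hn₀⟩ := freq_exists_ge hqmf N
      obtain ⟨n', hn', hqn'⟩ := freq_exists_ge hqmf (n₀ + 1)
      set U := DetAuto.seg x n₀ (n' - n₀) with hU
      have hUne : U ≠ [] := seg_ne_nil (by omega)
      have hloop : M.steps qm U = qm := by
        rw [← hn₀, ← M.run_add]
        rw [← hn₀] at hqn'
        rw [← hqn']; congr 1; omega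
      have hvisU : M.visited qm U = (List.range (n' - n₀)).map fun i => M.run x (n₀ + i) := by
        rw [← hn₀]; exact M.visited_run x n₀ (n' - n₀)
      have hlm : M.lmax c qm U = m := by
        apply le_antisymm
        · obtain ⟨s, hsmem, hcs⟩ := M.exists_lmax c qm hUne
          rw [← hcs]
          rw [hvisU] at hsmem
          obtain ⟨i, hi, rfl⟩ := List.mem_map.mp hsmem
          exact hN _ (by omega)
        · rw [← hqm]
          exact M.le_lmax c (M.self_mem_visited qm hUne)
      have hqmacc : qm ∈ acc := ⟨U, hUne, hloop, by rw [hlm]; exact hodd⟩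
      exact hqmf.mono fun n hn => by rw [hn]; exact hqmacc
    · intro hfa
      obtain ⟨q, hqacc, hqf⟩ := exists_frequently_eq (M.run x) acc hfa
      set F : Finset ℕ :=
        (Finset.univ.image c).filter (fun m => ∃ᶠ n in Filter.atTop, c (M.run x n) = m)
        with hF
      have hFne : F.Nonempty := by
        refine ⟨c q, Finset.mem_filter.mpr ⟨?_, hqf.mono fun n hn => by rw [hn]⟩⟩
        exact Finset.mem_image.mpr ⟨q, Finset.mem_univ _, rfl⟩
      set m := F.max' hFne with hm
      have hmf : ∃ᶠ n in Filter.atTop, c (M.run x n) = m :=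
        (Finset.mem_filter.mp (F.max'_mem hFne)).2
      have hmax : ∀ m', (∃ᶠ n in Filter.atTop, c (M.run x n) = m') → m' ≤ m := by
        intro m' hm'
        apply F.le_max'
        rw [Finset.mem_filter]
        refine ⟨?_, hm'⟩
        obtain ⟨n, -, hn⟩ := freq_exists_ge hm' 0
        exact Finset.mem_image.mpr ⟨M.run x n, Finset.mem_univ _, hn⟩
      have hev : ∀ᶠ n in Filter.atTop, c (M.run x n) ≤ m := by
        by_contra hc
        rw [Filter.not_eventually] at hc
        have hc' : ∃ᶠ n in Filter.atTop, M.run x n ∈ {s | m < c s} :=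
          hc.mono fun n hn => lt_of_not_ge hn
        obtain ⟨s, hsmem, hsf⟩ := exists_frequently_eq _ _ hc'
        have : c s ≤ m := hmax (c s) (hsf.mono fun n hn => by rw [hn])
        exact absurd this (not_le.mpr hsmem)
      obtain ⟨N, hN⟩ := Filter.eventually_atTop.mp hev
      obtain ⟨n₀, hn₀N, hn₀⟩ := freq_exists_ge hqf N
      obtain ⟨n₁, hn₁, hcn₁⟩ := freq_exists_ge hmf n₀
      obtain ⟨n₂, hn₂, hqn₂⟩ := freq_exists_ge hqf (n₁ + 1)
      set U := DetAuto.seg x n₀ (n₂ - n₀) with hU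
      have hUne : U ≠ [] := seg_ne_nil (by omega)
      have hloop : M.steps q U = q := by
        rw [← hn₀, ← M.run_add]
        rw [show n₀ + (n₂ - n₀) = n₂ by omega, hqn₂, hn₀]
      have hvisU : M.visited q U = (List.range (n₂ - n₀)).map fun i => M.run x (n₀ + i) := by
        rw [← hn₀]; exact M.visited_run x n₀ (n₂ - n₀)
      have hlm : M.lmax c q U = m := by
        apply le_antisymm
        · obtain ⟨s, hsmem, hcs⟩ := M.exists_lmax c q hUne
          rw [← hcs]
          rw [hvisU] at hsmem
          obtain ⟨i, hi, rfl⟩ := List.mem_map.mp hsmem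
          exact hN _ (by omega)
        · rw [← hcn₁]
          apply M.le_lmax c
          rw [hvisU]
          refine List.mem_map.mpr ⟨n₁ - n₀, ?_, ?_⟩
          · rw [List.mem_range]; omega
          · congr 1; omega
      have hreachq : M.steps M.init (DetAuto.seg x 0 n₀) = q := by rw [← M.run_eq, hn₀]
      have hodd : Odd m := by
        obtain ⟨z, hzne, hzl, hzo⟩ := hqacc
        have := H' q _ hreachq z U hzne hUne hzl hloop hzo
        rwa [hlm] at this
      exact ⟨m, hodd, hmf, hmax⟩

def extW {α : Type} (p t : List α) (ht : t ≠ []) : ℕ → α := fun i =>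
  if h : i < p.length then p[i]
  else t[(i - p.length) % t.length]'(Nat.mod_lt _ (List.length_pos_iff.mpr ht))

lemma extW_prefix {α : Type} (p t : List α) (ht : t ≠ []) (n : ℕ) :
    HasPrefixWord (extW p t ht) (p ++ (List.replicate n t).flatten) := by
  rintro ⟨i, hi⟩
  rw [List.get_eq_getElem]
  have hi' : i < p.length + n * t.length := by
    simpa [flatten_replicate_length] using hi
  show extW p t ht i = _
  unfold extW
  by_cases h : i < p.length
  · rw [dif_pos h, List.getElem_append_left h]
  · push_neg at h
    rw [dif_neg (not_lt.mpr h), List.getElem_append_right h,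
      flatten_replicate_getElem t ht n (i - p.length) (by omega)]

lemma lemC {α : Type} (L : Set (ℕ → α)) (x x₂ x₄ x₁ x₃ : List α)
    (h1 : x₁ ≠ []) (h3 : x₃ ≠ [])
    (hsub : LangWStar x
      (insert x₁ {u | ∃ n : ℕ, u = x₂ ++ (List.replicate n x₃).flatten ++ x₄}) [] x₁ ⊆ L)
    (hdis : LangWStar x
      (insert x₁ {u | ∃ n : ℕ, u = x₂ ++ (List.replicate n x₃).flatten ++ x₄}) x₂ x₃ ∩ L = ∅) :
    ¬ DWWRecognizable L := by
  classical
  rintro ⟨M, acc, hhom, haccL⟩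
  set W : Set (List α) :=
    insert x₁ {u | ∃ n : ℕ, u = x₂ ++ (List.replicate n x₃).flatten ++ x₄} with hW
  have h1p : 1 ≤ x₁.length := List.length_pos_iff.mpr h1
  have h3p : 1 ≤ x₃.length := List.length_pos_iff.mpr h3
  set Inv : List α → Prop :=
    fun l => ∃ u : List (List α), (∀ z ∈ u, z ∈ W) ∧ l = x ++ u.flatten with hInv
  have key : ∀ l, Inv l → ∀ N : ℕ, ∃ l', Inv l' ∧ l <+: l' ∧
      (∃ n₁, N ≤ n₁ ∧ n₁ ≤ l'.length ∧ M.steps M.init (l'.take n₁) ∈ acc) ∧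
      (∃ n₂, N ≤ n₂ ∧ n₂ ≤ l'.length ∧ M.steps M.init (l'.take n₂) ∉ acc) := by
    rintro l ⟨u, hu, rfl⟩ N
    set w₁ := extW (x ++ u.flatten) x₁ h1 with hw₁
    have hpre1 := extW_prefix (x ++ u.flatten) x₁ h1
    have hw₁L : w₁ ∈ L := by
      apply hsub
      refine ⟨u, hu, fun n => ?_⟩
      have := hpre1 n
      simpa [List.append_assoc] using this
    have hfr1 := (haccL w₁).mp hw₁L
    obtain ⟨n₁, hn₁ge, hn₁acc⟩ := freq_exists_ge hfr1 (N + (x ++ u.flatten).length + 1)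
    set l₁ := (x ++ u.flatten) ++ (List.replicate n₁ x₁).flatten with hl₁
    have hmul1 : n₁ * 1 ≤ n₁ * x₁.length := Nat.mul_le_mul_left _ h1p
    have hlen₁ : n₁ ≤ l₁.length := by
      rw [hl₁]
      simp only [List.length_append, flatten_replicate_length]
      omega
    have hInv₁ : Inv l₁ := by
      refine ⟨u ++ List.replicate n₁ x₁, ?_, ?_⟩
      · intro z hz
        rcases List.mem_append.mp hz with h | h
        · exact hu z h
        · rw [List.eq_of_mem_replicate h]; exact Set.mem_insert _ _
      · simp [hl₁, List.flatten_append, List.append_assoc]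
    have hstep1 : M.steps M.init (l₁.take n₁) ∈ acc := by
      have hrun : M.run w₁ n₁ = M.steps M.init (l₁.take n₁) := by
        rw [M.run_eq, DetAuto.seg_eq_take (hpre1 n₁) hlen₁]
      rwa [hrun] at hn₁acc
    set base₂ := l₁ ++ x₂ with hbase₂
    set w₂ := extW base₂ x₃ h3 with hw₂
    have hpre2 := extW_prefix base₂ x₃ h3
    have hw₂mem : w₂ ∈ LangWStar x W x₂ x₃ := by
      refine ⟨u ++ List.replicate n₁ x₁, ?_, fun n => ?_⟩
      · intro z hz
        rcases List.mem_append.mp hz with h | h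
        · exact hu z h
        · rw [List.eq_of_mem_replicate h]; exact Set.mem_insert _ _
      · have harg : x ++ (u ++ List.replicate n₁ x₁).flatten ++ x₂ ++
            (List.replicate n x₃).flatten = base₂ ++ (List.replicate n x₃).flatten := by
          simp [hbase₂, hl₁, List.flatten_append, List.append_assoc]
        rw [harg]
        exact hpre2 n
    have hw₂L : w₂ ∉ L := by
      intro hL
      have : w₂ ∈ LangWStar x W x₂ x₃ ∩ L := ⟨hw₂mem, hL⟩
      rw [hdis] at this
      exact this
    have hnf : ∀ᶠ n in Filter.atTop, M.run w₂ n ∉ acc := by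
      have : ¬ ∃ᶠ n in Filter.atTop, M.run w₂ n ∈ acc := fun h => hw₂L ((haccL w₂).mpr h)
      rwa [Filter.not_frequently] at this
    obtain ⟨N₂, hN₂⟩ := Filter.eventually_atTop.mp hnf
    set n₂ := N₂ + N + base₂.length with hn₂
    set l₂ := base₂ ++ (List.replicate n₂ x₃).flatten with hl₂
    have hmul2 : n₂ * 1 ≤ n₂ * x₃.length := Nat.mul_le_mul_left _ h3p
    have hlen₂ : n₂ ≤ l₂.length := by
      rw [hl₂]
      simp only [List.length_append, flatten_replicate_length]
      omega
    set l' := l₂ ++ x₄ with hl'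
    have hInv' : Inv l' := by
      refine ⟨(u ++ List.replicate n₁ x₁) ++ [x₂ ++ (List.replicate n₂ x₃).flatten ++ x₄],
        ?_, ?_⟩
      · intro z hz
        rcases List.mem_append.mp hz with h | h
        · rcases List.mem_append.mp h with h' | h'
          · exact hu z h'
          · rw [List.eq_of_mem_replicate h']; exact Set.mem_insert _ _
        · rw [List.mem_singleton.mp h]
          exact Set.mem_insert_of_mem _ ⟨n₂, rfl⟩
      · simp [hl', hl₂, hbase₂, hl₁, List.flatten_append, List.append_assoc]
    have hpref' : (x ++ u.flatten) <+: l' :=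
      ⟨(List.replicate n₁ x₁).flatten ++ x₂ ++ (List.replicate n₂ x₃).flatten ++ x₄,
        by simp [hl', hl₂, hbase₂, hl₁, List.append_assoc]⟩
    have hl'len : l'.length = l₂.length + x₄.length := by simp [hl']
    have htake1 : l'.take n₁ = l₁.take n₁ := by
      have : l' = l₁ ++ (x₂ ++ (List.replicate n₂ x₃).flatten ++ x₄) := by
        simp [hl', hl₂, hbase₂, List.append_assoc]
      rw [this, List.take_append_of_le_length hlen₁]
    have htake2 : l'.take n₂ = l₂.take n₂ := by
      rw [hl', List.take_append_of_le_length hlen₂]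
    have hstep2 : M.steps M.init (l'.take n₂) ∉ acc := by
      have hrun : M.run w₂ n₂ = M.steps M.init (l₂.take n₂) := by
        rw [M.run_eq, DetAuto.seg_eq_take (hpre2 n₂) hlen₂]
      rw [htake2, ← hrun]
      exact hN₂ n₂ (by omega)
    have hlen₂' : l₂.length ≤ l'.length := by rw [hl'len]; omega
    have hlen₁' : l₁.length ≤ l₂.length := by
      rw [hl₂, hbase₂]; simp only [List.length_append]; omega
    refine ⟨l', hInv', hpref', ⟨n₁, by omega, by omega, by rw [htake1]; exact hstep1⟩,
      ⟨n₂, by omega, by omega, hstep2⟩⟩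
  -- build the limit word
  have hInv0 : Inv x := ⟨[], by simp, by simp⟩
  let seqn : ℕ → {l : List α // Inv l} :=
    fun k => Nat.rec ⟨x, hInv0⟩
      (fun k ih => ⟨Classical.choose (key ih.1 ih.2 (k + 1)),
        (Classical.choose_spec (key ih.1 ih.2 (k + 1))).1⟩) k
  have hspec : ∀ k, (seqn k).1 <+: (seqn (k+1)).1 ∧
      (∃ n₁, k + 1 ≤ n₁ ∧ n₁ ≤ (seqn (k+1)).1.length ∧
        M.steps M.init ((seqn (k+1)).1.take n₁) ∈ acc) ∧
      (∃ n₂, k + 1 ≤ n₂ ∧ n₂ ≤ (seqn (k+1)).1.length ∧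
        M.steps M.init ((seqn (k+1)).1.take n₂) ∉ acc) := by
    intro k
    exact (Classical.choose_spec (key (seqn k).1 (seqn k).2 (k + 1))).2
  have hchain : ∀ j k, j ≤ k → (seqn j).1 <+: (seqn k).1 := by
    intro j k hjk
    induction hjk with
    | refl => exact List.prefix_refl _
    | @step m hm ih => exact ih.trans (hspec m).1
  have hglen : ∀ k, k ≤ (seqn k).1.length := by
    intro k
    cases k with
    | zero => omega
    | succ k =>
        obtain ⟨n₁, hn₁, hn₁le, -⟩ := (hspec k).2.1
        omega
  set d : α := x₁.head h1 with hd
  set winf : ℕ → α := fun i => (seqn (i+1)).1.getD i d with hwinf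
  have hwval : ∀ k i, ∀ h : i < (seqn k).1.length, winf i = (seqn k).1[i]'h := by
    intro k i h
    have hi1 : i < (seqn (i+1)).1.length := lt_of_lt_of_le (Nat.lt_succ_self i) (hglen (i+1))
    have : winf i = (seqn (i+1)).1[i]'hi1 := List.getD_eq_getElem _ _ hi1
    rw [this]
    rcases le_total k (i+1) with hk | hk
    · exact (List.IsPrefix.getElem (hchain k (i+1) hk) h).symm
    · exact List.IsPrefix.getElem (hchain (i+1) k hk) hi1
  have hrunw : ∀ k n, n ≤ (seqn k).1.length →
      M.run winf n = M.steps M.init ((seqn k).1.take n) := by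
    intro k n hn
    rw [M.run_eq, DetAuto.seg_eq_take (L := (seqn k).1) ?_ hn]
    rintro ⟨i, hi⟩
    rw [List.get_eq_getElem]
    exact hwval k i hi
  have hfacc : ∃ᶠ n in Filter.atTop, M.run winf n ∈ acc := by
    rw [Filter.frequently_atTop]
    intro N
    obtain ⟨n₁, hn₁, hn₁le, hn₁acc⟩ := (hspec N).2.1
    refine ⟨n₁, by omega, ?_⟩
    rw [hrunw (N+1) n₁ hn₁le]
    exact hn₁acc
  have hfnacc : ∃ᶠ n in Filter.atTop, M.run winf n ∉ acc := by
    rw [Filter.frequently_atTop]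
    intro N
    obtain ⟨n₂, hn₂, hn₂le, hn₂acc⟩ := (hspec N).2.2
    refine ⟨n₂, by omega, ?_⟩
    rw [hrunw (N+1) n₂ hn₂le]
    exact hn₂acc
  rcases hhom winf with hev | hev
  · obtain ⟨n, hn1, hn2⟩ := (hfnacc.and_eventually hev).exists
    exact hn1 hn2
  · obtain ⟨n, hn1, hn2⟩ := (hfacc.and_eventually hev).exists
    exact hn2 hn1


/-- An ω-regular `L` is not DWW-recognizable iff there are words
`x, x₂, x₄ ∈ Σ*`, `x₁, x₃ ∈ Σ⁺` such that, with `W = {x₁} ∪ {x₂·x₃ⁿ·x₄ : n ≥ 0}`,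
`x·W*·x₁^ω ⊆ L` and `x·W*·x₂·x₃^ω ∩ L = ∅`. -/
theorem stmt_17 {Sig : Type} [Fintype Sig] (L : Set (ℕ → Sig)) (hL : OmegaRegular L) :
    ¬ DWWRecognizable L ↔
      ∃ x x₂ x₄ x₁ x₃ : List Sig, x₁ ≠ [] ∧ x₃ ≠ [] ∧
        LangWStar x
          (insert x₁ {u | ∃ n : ℕ, u = x₂ ++ (List.replicate n x₃).flatten ++ x₄})
          [] x₁ ⊆ L ∧
        LangWStar x
          (insert x₁ {u | ∃ n : ℕ, u = x₂ ++ (List.replicate n x₃).flatten ++ x₄})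
          x₂ x₃ ∩ L = ∅ := by
  obtain ⟨M, c, hMc⟩ := hL
  constructor
  · intro hnd
    by_contra hR
    apply hnd
    apply lemA M c L hMc
    intro pl u v hune hvne hul hvl hou
    by_contra hov
    apply hR
    set q := M.steps M.init pl with hq
    have hWloop : ∀ z ∈
        insert u {z | ∃ n : ℕ, z = [] ++ (List.replicate n v).flatten ++ []},
        M.steps q z = q := by
      rintro z hz
      rcases hz with rfl | ⟨n, rfl⟩
      · exact hul
      · simp only [List.nil_append, List.append_nil]
        exact M.steps_flatten_replicate hvl n
    refine ⟨pl, [], [], u, v, hune, hvne, ?_, ?_⟩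
    · intro w hw
      rw [hMc w]
      rw [lemB M c pl [] u _ q q rfl hWloop (M.steps_nil q) hul hune w hw]
      exact hou
    · rw [Set.eq_empty_iff_forall_notMem]
      rintro w ⟨hw, hwL⟩
      rw [hMc w, lemB M c pl [] v _ q q rfl hWloop (M.steps_nil q) hvl hvne w hw] at hwL
      exact hov hwL
  · rintro ⟨x, x₂, x₄, x₁, x₃, hx1, hx3, hsub, hdis⟩
    exact lemC L x x₂ x₄ x₁ x₃ hx1 hx3 hsub hdis
end

section
/- An ω-regular language L ⊆ Σ^ω is not bounded if and only if there exist finite words x̂₀, x̂₁, x̂₂ ∈ Σ* and x₀, x₁, x₂ ∈ Σ⁺ such that x̂₀·x₀*·x̂₁·x₁^ω ⊆ L and x̂₀·x₀*·x̂₂·x₂^ω ∩ L = ∅. -/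
/-- The ω-language `a·b*·c·d^ω`. -/
def LangStarOmega {α : Type} (a b c d : List α) : Set (ℕ → α) :=
  { w | ∃ n : ℕ, ∀ m, HasPrefixWord w
      (a ++ (List.replicate n b).flatten ++ c ++ (List.replicate m d).flatten) }

/-- `L` is bounded: every infinite word has a finite prefix all of whose infinite
extensions are in `L`, or none of whose infinite extensions are in `L`. -/
def BoundedLang {α : Type} (L : Set (ℕ → α)) : Prop :=
  ∀ w : ℕ → α, ∃ n : ℕ,
    (∀ w' : ℕ → α, (∀ i < n, w' i = w i) → w' ∈ L) ∨
    (∀ w' : ℕ → α, (∀ i < n, w' i = w i) → w' ∉ L)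

namespace Aux

variable {α : Type}
open Filter

/-- segment of an infinite word: start `a`, length `n`. -/
def sega (x : ℕ → α) (a n : ℕ) : List α := List.ofFn fun i : Fin n => x (a + i)

@[simp] lemma sega_length (x : ℕ → α) (a n : ℕ) : (sega x a n).length = n := by
  simp [sega]

@[simp] lemma sega_zero (x : ℕ → α) (a) : sega x a 0 = [] := rfl

lemma sega_succ (x : ℕ → α) (a n) : sega x a (n+1) = x a :: sega x (a+1) n := by
  simp only [sega, List.ofFn_succ, Fin.val_zero, Nat.add_zero, List.cons.injEq, true_and]
  congr 1
  funext i
  congr 1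
  simp [Fin.val_succ]
  omega

lemma sega_add (x : ℕ → α) (a m n : ℕ) :
    sega x a (m + n) = sega x a m ++ sega x (a + m) n := by
  induction m generalizing a with
  | zero => simp
  | succ k ih =>
    have h1 : k + 1 + n = (k + n) + 1 := by omega
    rw [h1, sega_succ, sega_succ, ih]
    simp only [List.cons_append, List.cons.injEq, true_and]
    congr 2
    omega

lemma sega_getElem (x : ℕ → α) (a n i : ℕ) (h : i < n) :
    (sega x a n)[i]'(by simpa using h) = x (a + i) := by
  simp [sega]

lemma sega_congr {x y : ℕ → α} {a n : ℕ} (h : ∀ i, a ≤ i → i < a + n → x i = y i) :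
    sega x a n = sega y a n := by
  simp only [sega]
  congr 1; funext i; exact h _ (by omega) (by omega)

lemma run_add (M : DetAuto α) (x : ℕ → α) (a n : ℕ) :
    M.run x (a + n) = (sega x a n).foldl M.δ (M.run x a) := by
  induction n with
  | zero => simp
  | succ k ih =>
    have : a + (k+1) = (a + k) + 1 := rfl
    rw [this]
    show M.δ (M.run x (a+k)) (x (a+k)) = _
    rw [ih]
    have : sega x a (k+1) = sega x a k ++ [x (a+k)] := by
      have := sega_add x a k 1
      simpa [sega_succ] using this
    rw [this, List.foldl_append]
    rfl

lemma run_eq (M : DetAuto α) (x : ℕ → α) (n : ℕ) :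
    M.run x n = (sega x 0 n).foldl M.δ M.init := by
  have := run_add M x 0 n
  simpa [DetAuto.run] using this

lemma run_congr (M : DetAuto α) {x y : ℕ → α} {n : ℕ} (h : ∀ i < n, x i = y i)
    {k : ℕ} (hk : k ≤ n) : M.run x k = M.run y k := by
  rw [run_eq, run_eq]
  congr 1
  exact sega_congr fun i _ h2 => h i (by omega)

/-- prefix list then infinite tail -/
noncomputable def wordOf [Inhabited α] (l : List α) (y : ℕ → α) : ℕ → α :=
  fun i => if h : i < l.length then l[i] else y (i - l.length)

/-- periodic word -/
noncomputable def perWord [Inhabited α] (d : List α) : ℕ → α :=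
  fun i => d[i % d.length]!

lemma perWord_eq [Inhabited α] (d : List α) (hd : d ≠ []) (i : ℕ) :
    perWord d i = d[i % d.length]'(Nat.mod_lt _ (List.length_pos_iff.mpr hd)) := by
  simp [perWord, getElem!_pos, Nat.mod_lt _ (List.length_pos_iff.mpr hd)]

lemma perWord_period [Inhabited α] (d : List α) (i : ℕ) :
    perWord d (i + d.length) = perWord d i := by
  simp [perWord, Nat.add_mod_right]

lemma wordOf_lt [Inhabited α] (l : List α) (y : ℕ → α) (i : ℕ) (h : i < l.length) :
    wordOf l y i = l[i] := by simp [wordOf, h]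

lemma wordOf_ge [Inhabited α] (l : List α) (y : ℕ → α) (i : ℕ) (h : l.length ≤ i) :
    wordOf l y i = y (i - l.length) := by
  simp [wordOf]; omega

@[simp] lemma flatten_replicate_length (m : ℕ) (d : List α) :
    ((List.replicate m d).flatten).length = m * d.length := by
  simp [List.length_flatten, List.map_replicate, List.sum_replicate, smul_eq_mul]

lemma flatten_replicate_getElem (m : ℕ) (d : List α) (hd : d ≠ []) (j : ℕ) (h : j < m * d.length) :
    ((List.replicate m d).flatten)[j]'(by simpa using h) =
      d[j % d.length]'(Nat.mod_lt _ (List.length_pos_iff.mpr hd)) := by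
  induction m generalizing j with
  | zero => omega
  | succ k ih =>
    have hrep : (List.replicate (k+1) d).flatten = d ++ (List.replicate k d).flatten := by
      simp [List.replicate_succ]
    by_cases hj : j < d.length
    · have : j % d.length = j := Nat.mod_eq_of_lt hj
      simp only [hrep]
      rw [List.getElem_append_left hj]
      congr 1
      omega
    · push_neg at hj
      simp only [hrep]
      rw [List.getElem_append_right (by simpa using hj)]
      have h2 : j - d.length < k * d.length := by
        have h3 : (k+1) * d.length = k * d.length + d.length := by ring
        omega
      rw [ih (j - d.length) h2]
      congr 1
      conv_rhs => rw [Nat.mod_eq_sub_mod hj]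

noncomputable def canonW [Inhabited α] (a b c d : List α) (n : ℕ) : ℕ → α :=
  wordOf (a ++ (List.replicate n b).flatten ++ c) (perWord d)

lemma hasPrefix_wordOf [Inhabited α] (p s : List α) (y : ℕ → α)
    (hs : ∀ j (h : j < s.length), s[j] = y j) : HasPrefixWord (wordOf p y) (p ++ s) := by
  intro i
  have hi : (i : ℕ) < p.length + s.length := by have := i.2; simpa using this
  simp only [List.get_eq_getElem]
  by_cases h : (i : ℕ) < p.length
  · rw [wordOf_lt _ _ _ h, List.getElem_append_left h]
  · push_neg at h
    rw [wordOf_ge _ _ _ h, List.getElem_append_right (by simpa using h), hs]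

lemma mem_lso_iff [Inhabited α] (a b c d : List α) (hd : d ≠ []) (w : ℕ → α) :
    w ∈ LangStarOmega a b c d ↔ ∃ n, w = canonW a b c d n := by
  have hD : 0 < d.length := List.length_pos_iff.mpr hd
  constructor
  · rintro ⟨n, hw⟩
    refine ⟨n, funext fun i => ?_⟩
    set p := a ++ (List.replicate n b).flatten ++ c with hp
    by_cases h : i < p.length
    · have h0 := hw 0 ⟨i, by simpa using h⟩
      simp only [List.get_eq_getElem, List.replicate, List.flatten_nil, List.append_nil] at h0
      rw [canonW, wordOf_lt _ _ _ h]
      simpa using h0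
    · push_neg at h
      set j := i - p.length with hj
      have hmul : j + 1 ≤ (j+1) * d.length := Nat.le_mul_of_pos_right (j+1) hD
      have hilt : i < p.length + (j+1) * d.length := by omega
      have h1 := hw (j+1) ⟨i, by simpa using hilt⟩
      simp only [List.get_eq_getElem] at h1
      rw [h1, canonW, wordOf_ge _ _ _ h]
      rw [List.getElem_append_right (by simpa using h)]
      rw [perWord_eq d hd]
      rw [flatten_replicate_getElem (j+1) d hd (i - p.length) (by omega)]
  · rintro ⟨n, rfl⟩
    refine ⟨n, fun m => ?_⟩
    apply hasPrefix_wordOf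
    intro j hj
    have hj' : j < m * d.length := by simpa using hj
    rw [flatten_replicate_getElem m d hd j hj', perWord_eq d hd]

lemma freq_fiber {Q : Type} [Finite Q] (r : ℕ → Q) (P : ℕ → Prop)
    (h : ∃ᶠ n in atTop, P n) : ∃ q, ∃ᶠ n in atTop, P n ∧ r n = q := by
  by_contra hc
  push_neg at hc
  have h2 : ∀ q, ∀ᶠ n in atTop, ¬(P n ∧ r n = q) :=
    fun q => (hc q).mono fun n hn h => hn h.1 h.2
  have h3 : ∀ᶠ n in atTop, ∀ q, ¬(P n ∧ r n = q) := Filter.eventually_all.mpr h2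
  obtain ⟨n, hP, hall⟩ := (h.and_eventually h3).exists
  exact hall (r n) ⟨hP, rfl⟩

lemma exists_max_freq (M : DetAuto α) (c : M.Q → ℕ) (u : ℕ → α) :
    ∃ m, (∃ᶠ n in atTop, c (M.run u n) = m) ∧
      (∀ m', (∃ᶠ n in atTop, c (M.run u n) = m') → m' ≤ m) ∧
      (∀ᶠ n in atTop, c (M.run u n) ≤ m) := by
  classical
  set g := fun n => c (M.run u n) with hg
  obtain ⟨q, hq⟩ := freq_fiber (M.run u) (fun _ => True) (by simp; exact Filter.atTop_neBot)
  set S : Finset ℕ := (Finset.univ.image c).filter (fun v => ∃ᶠ n in atTop, g n = v) with hS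
  have hqS : c q ∈ S := by
    refine Finset.mem_filter.mpr ⟨Finset.mem_image.mpr ⟨q, Finset.mem_univ q, rfl⟩, ?_⟩
    exact hq.mono fun n hn => by simp [hg, hn.2]
  have hne : S.Nonempty := ⟨c q, hqS⟩
  refine ⟨S.max' hne, ?_, ?_, ?_⟩
  · exact (Finset.mem_filter.mp (S.max'_mem hne)).2
  · intro m' hm'
    apply S.le_max'
    obtain ⟨n, hn⟩ := hm'.exists
    exact Finset.mem_filter.mpr ⟨Finset.mem_image.mpr ⟨M.run u n, Finset.mem_univ _, hn⟩, hm'⟩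
  · by_contra hev
    have hfreq : ∃ᶠ n in atTop, S.max' hne < g n := by
      simpa [not_le] using (Filter.not_eventually.mp hev)
    obtain ⟨q', hq'⟩ := freq_fiber (M.run u) _ hfreq
    have h1 : ∃ᶠ n in atTop, g n = c q' := hq'.mono fun n hn => by simp [hg, hn.2]
    have h2 : c q' ≤ S.max' hne := by
      apply S.le_max'
      exact Finset.mem_filter.mpr ⟨Finset.mem_image.mpr ⟨q', Finset.mem_univ _, rfl⟩, h1⟩
    obtain ⟨n, hlt, hr⟩ := hq'.exists
    rw [hg] at hlt
    simp only at hlt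
    rw [hr] at hlt
    omega

lemma exists_lasso (M : DetAuto α) (c : M.Q → ℕ) (u : ℕ → α) (n₀ : ℕ) :
    ∃ m i j, n₀ ≤ i ∧ i < j ∧ M.run u i = M.run u j ∧ c (M.run u i) = m ∧
      (∀ t, i ≤ t → c (M.run u t) ≤ m) ∧
      (∃ᶠ n in atTop, c (M.run u n) = m) ∧
      (∀ m', (∃ᶠ n in atTop, c (M.run u n) = m') → m' ≤ m) := by
  obtain ⟨m, hfreq, hmax, hev⟩ := exists_max_freq M c u
  obtain ⟨N, hN⟩ := Filter.eventually_atTop.mp hev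
  obtain ⟨q', hq'⟩ := freq_fiber (M.run u) _ hfreq
  rw [Filter.frequently_atTop] at hq'
  obtain ⟨i, hi, hci, hqi⟩ := hq' (max N n₀)
  obtain ⟨j, hj, hcj, hqj⟩ := hq' (i + 1)
  refine ⟨m, i, j, le_trans (le_max_right _ _) hi, by omega, by rw [hqi, hqj], hci, ?_, hfreq, hmax⟩
  intro t ht
  exact hN t (le_trans (le_max_left _ _) (le_trans hi ht))

lemma sega_wordOf_prefix [Inhabited α] (l : List α) (y : ℕ → α) :
    sega (wordOf l y) 0 l.length = l := by
  apply List.ext_getElem (by simp)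
  intro i h1 h2
  rw [sega_getElem _ _ _ _ (by simpa using h1)]
  simp only [Nat.zero_add]
  exact wordOf_lt l y i h2

lemma sega_wordOf_tail [Inhabited α] (l : List α) (y : ℕ → α) (t : ℕ) :
    sega (wordOf l y) l.length t = sega y 0 t := by
  apply List.ext_getElem (by simp)
  intro i h1 h2
  rw [sega_getElem _ _ _ _ (by simpa using h1), sega_getElem _ _ _ _ (by simpa using h2)]
  rw [wordOf_ge l y _ (by omega)]
  congr 1
  omega

lemma run_wordOf [Inhabited α] (M : DetAuto α) (l : List α) (y : ℕ → α) (t : ℕ) :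
    M.run (wordOf l y) (l.length + t) =
      (sega y 0 t).foldl M.δ (l.foldl M.δ M.init) := by
  rw [run_add, sega_wordOf_tail]
  congr 1
  rw [run_eq, sega_wordOf_prefix]

lemma sega_perWord_eq_d [Inhabited α] (d : List α) (hd : d ≠ []) :
    sega (perWord d) 0 d.length = d := by
  apply List.ext_getElem (by simp)
  intro i h1 h2
  rw [sega_getElem _ _ _ _ (by simpa using h1), perWord_eq d hd]
  congr 1
  simpa using Nat.mod_eq_of_lt h2

lemma sega_perWord_shift [Inhabited α] (d : List α) (t : ℕ) :
    sega (perWord d) d.length t = sega (perWord d) 0 t := by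
  apply List.ext_getElem (by simp)
  intro i h1 h2
  rw [sega_getElem _ _ _ _ (by simpa using h1), sega_getElem _ _ _ _ (by simpa using h2)]
  have : d.length + i = i + d.length := by omega
  rw [this, perWord_period]
  norm_num

lemma pw_foldl_mod [Inhabited α] (M : DetAuto α) (d : List α) (hd : d ≠ []) (q0 : M.Q)
    (hcyc : d.foldl M.δ q0 = q0) (t : ℕ) :
    (sega (perWord d) 0 t).foldl M.δ q0 =
      (sega (perWord d) 0 (t % d.length)).foldl M.δ q0 := by
  have hD : 0 < d.length := List.length_pos_iff.mpr hd
  have step : ∀ s, (sega (perWord d) 0 (d.length + s)).foldl M.δ q0 =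
      (sega (perWord d) 0 s).foldl M.δ q0 := by
    intro s
    rw [sega_add (perWord d) 0 d.length s, List.foldl_append]
    have h0 : (0 : ℕ) + d.length = d.length := by omega
    rw [h0, sega_perWord_shift, sega_perWord_eq_d d hd, hcyc]
  induction t using Nat.strong_induction_on with
  | _ t ih =>
    by_cases h : t < d.length
    · rw [Nat.mod_eq_of_lt h]
    · push_neg at h
      have h3 : d.length + (t - d.length) = t := by omega
      have h4 := step (t - d.length)
      rw [h3] at h4
      rw [h4, ih (t - d.length) (by omega), Nat.mod_eq_sub_mod h]

lemma canon_accept_iff [Inhabited α] (M : DetAuto α) (c : M.Q → ℕ) (P d : List α)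
    (hd : d ≠ []) (m : ℕ)
    (hcyc : d.foldl M.δ (P.foldl M.δ M.init) = P.foldl M.δ M.init)
    (hcol : ∀ t < d.length,
      c ((sega (perWord d) 0 t).foldl M.δ (P.foldl M.δ M.init)) ≤ m)
    (hm : c (P.foldl M.δ M.init) = m) :
    ParityAccept M c (wordOf P (perWord d)) ↔ Odd m := by
  have hD : 0 < d.length := List.length_pos_iff.mpr hd
  set q0 := P.foldl M.δ M.init with hq0
  set W := wordOf P (perWord d) with hW
  have key : ∀ t, M.run W (P.length + t) =
      (sega (perWord d) 0 (t % d.length)).foldl M.δ q0 := by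
    intro t
    rw [hW, run_wordOf, ← hq0, pw_foldl_mod M d hd q0 hcyc]
  have hub : ∀ n, P.length ≤ n → c (M.run W n) ≤ m := by
    intro n hn
    have h1 : n = P.length + (n - P.length) := by omega
    rw [h1, key]
    exact hcol _ (Nat.mod_lt _ hD)
  have hfr : ∃ᶠ n in atTop, c (M.run W n) = m := by
    rw [Filter.frequently_atTop]
    intro a
    refine ⟨P.length + a * d.length, by nlinarith, ?_⟩
    rw [key, Nat.mul_mod_left]
    simpa using hm
  constructor
  · rintro ⟨m', hodd, hfr', hmax'⟩
    have h1 : m' ≤ m := by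
      obtain ⟨n, hn, he⟩ := Filter.frequently_atTop.mp hfr' P.length
      rw [← he]
      exact hub n hn
    have h2 : m ≤ m' := hmax' m hfr
    have : m = m' := by omega
    rwa [this]
  · intro hodd
    refine ⟨m, hodd, hfr, ?_⟩
    intro m' hm'
    obtain ⟨n, hn, he⟩ := Filter.frequently_atTop.mp hm' P.length
    rw [← he]
    exact hub n hn

lemma foldl_flatten_replicate (M : DetAuto α) (b : List α) (q : M.Q)
    (hq : b.foldl M.δ q = q) (k : ℕ) :
    ((List.replicate k b).flatten).foldl M.δ q = q := by
  induction k with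
  | zero => simp
  | succ t ih => rw [List.replicate_succ, List.flatten_cons, List.foldl_append, hq, ih]

lemma sega_perWord_eq_sega [Inhabited α] (u : ℕ → α) (i len t : ℕ) (hlen : 0 < len)
    (ht : t ≤ len) :
    sega (perWord (sega u i len)) 0 t = sega u i t := by
  have hne : sega u i len ≠ [] := by
    intro h
    have := congrArg List.length h
    simp at this
    omega
  apply List.ext_getElem (by simp)
  intro j h1 h2
  have hj : j < t := by simpa using h2
  rw [sega_getElem _ _ _ _ hj, sega_getElem _ _ _ _ hj]
  rw [Nat.zero_add, perWord_eq _ hne]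
  have hmod : j % (sega u i len).length = j := by
    rw [sega_length]
    exact Nat.mod_eq_of_lt (by omega)
  simp only [hmod]
  rw [sega_getElem u i len j (by omega)]

lemma canonW_agree [Inhabited α] (a b z d : List α) (hb : b ≠ []) (k i : ℕ)
    (h : i < a.length + k * b.length) :
    canonW a b z d k i = wordOf a (perWord b) i := by
  have h2 : i < (a ++ (List.replicate k b).flatten ++ z).length := by
    simp only [List.length_append, flatten_replicate_length]; omega
  have h3 : i < (a ++ (List.replicate k b).flatten).length := by
    simp only [List.length_append, flatten_replicate_length]; omega
  rw [canonW, wordOf_lt _ _ _ h2, List.getElem_append_left h3]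
  by_cases hia : i < a.length
  · rw [List.getElem_append_left hia, wordOf_lt _ _ _ hia]
  · push_neg at hia
    rw [List.getElem_append_right (by simpa using hia), wordOf_ge _ _ _ hia, perWord_eq b hb]
    rw [flatten_replicate_getElem k b hb _ (by omega)]

lemma key_construction [Inhabited α] (M : DetAuto α) (c : M.Q → ℕ) (w u : ℕ → α)
    (n₀ n₁ : ℕ) (h01 : n₀ < n₁) (hqq : M.run w n₀ = M.run w n₁)
    (hagree : ∀ i < n₁, u i = w i) :
    ∃ (xh x : List α) (m : ℕ), x ≠ [] ∧
      (∃ᶠ n in atTop, c (M.run u n) = m) ∧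
      (∀ m', (∃ᶠ n in atTop, c (M.run u n) = m') → m' ≤ m) ∧
      ∀ k, (ParityAccept M c (canonW (sega w 0 n₀) (sega w n₀ (n₁ - n₀)) xh x k) ↔ Odd m) := by
  obtain ⟨m, i, j, hin₁, hij, hrr, hci, hub, hfreq, hmax⟩ := exists_lasso M c u n₁
  have hxne : sega u i (j - i) ≠ [] := by
    intro h
    have := congrArg List.length h
    simp at this
    omega
  refine ⟨sega u n₀ (i - n₀), sega u i (j - i), m, hxne, hfreq, hmax, ?_⟩
  intro k
  have hrun_un₀ : M.run u n₀ = M.run w n₀ :=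
    run_congr M hagree (by omega)
  have hrun_un₁ : M.run u n₁ = M.run w n₁ := run_congr M hagree le_rfl
  have hfold0 : (sega w 0 n₀).foldl M.δ M.init = M.run u n₀ := by
    rw [hrun_un₀, run_eq]
  have hx₀ : sega w n₀ (n₁ - n₀) = sega u n₀ (n₁ - n₀) :=
    sega_congr (fun i' h1 h2 => (hagree i' (by omega)).symm)
  have hcyc₀ : (sega w n₀ (n₁ - n₀)).foldl M.δ (M.run u n₀) = M.run u n₀ := by
    rw [hx₀]
    have hadd := run_add M u n₀ (n₁ - n₀)
    have he : n₀ + (n₁ - n₀) = n₁ := by omega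
    rw [he] at hadd
    rw [← hadd, hrun_un₁, ← hqq, ← hrun_un₀]
  set P := sega w 0 n₀ ++ (List.replicate k (sega w n₀ (n₁ - n₀))).flatten ++
      sega u n₀ (i - n₀) with hPdef
  have hP : P.foldl M.δ M.init = M.run u i := by
    rw [hPdef, List.foldl_append, List.foldl_append, hfold0,
      foldl_flatten_replicate M _ _ hcyc₀ k]
    have hadd := run_add M u n₀ (i - n₀)
    have he : n₀ + (i - n₀) = i := by omega
    rw [he] at hadd
    exact hadd.symm
  have hcycx : (sega u i (j - i)).foldl M.δ (P.foldl M.δ M.init) = P.foldl M.δ M.init := by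
    rw [hP]
    have hadd := run_add M u i (j - i)
    have he : i + (j - i) = j := by omega
    rw [he] at hadd
    rw [← hadd, ← hrr]
  have hcol : ∀ t < (sega u i (j - i)).length,
      c ((sega (perWord (sega u i (j - i))) 0 t).foldl M.δ (P.foldl M.δ M.init)) ≤ m := by
    intro t ht
    rw [sega_length] at ht
    rw [sega_perWord_eq_sega u i (j - i) t (by omega) (by omega), hP]
    have hadd := run_add M u i t
    rw [← hadd]
    exact hub _ (by omega)
  have hcm : c (P.foldl M.δ M.init) = m := by rw [hP]; exact hci
  have := canon_accept_iff M c P (sega u i (j - i)) hxne m hcycx hcol hcm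
  rw [canonW]
  exact this

end Aux

open Aux in
/-- An ω-regular `L` is not bounded iff there are `x̂₀, x̂₁, x̂₂ ∈ Σ*` and
`x₀, x₁, x₂ ∈ Σ⁺` with `x̂₀·x₀*·x̂₁·x₁^ω ⊆ L` and `x̂₀·x₀*·x̂₂·x₂^ω ∩ L = ∅`. -/
theorem stmt_18 {Sig : Type} [Fintype Sig] (L : Set (ℕ → Sig)) (hL : OmegaRegular L) :
    ¬ BoundedLang L ↔
      ∃ xh₀ xh₁ xh₂ x₀ x₁ x₂ : List Sig, x₀ ≠ [] ∧ x₁ ≠ [] ∧ x₂ ≠ [] ∧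
        LangStarOmega xh₀ x₀ xh₁ x₁ ⊆ L ∧
        LangStarOmega xh₀ x₀ xh₂ x₂ ∩ L = ∅ := by
  obtain ⟨M, c, hMc⟩ := hL
  rcases isEmpty_or_nonempty Sig with hemp | hne
  · have hB : BoundedLang L := fun w => (hemp.elim (w 0))
    have hR : ¬ ∃ xh₀ xh₁ xh₂ x₀ x₁ x₂ : List Sig, x₀ ≠ [] ∧ x₁ ≠ [] ∧ x₂ ≠ [] ∧
        LangStarOmega xh₀ x₀ xh₁ x₁ ⊆ L ∧ LangStarOmega xh₀ x₀ xh₂ x₂ ∩ L = ∅ := by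
      rintro ⟨_, _, _, x₀, _, _, h0, -⟩
      cases x₀ with
      | nil => exact h0 rfl
      | cons a _ => exact hemp.elim a
    exact iff_of_false (fun h => h hB) hR
  · have : Inhabited Sig := Classical.inhabited_of_nonempty hne
    constructor
    · intro hnb
      unfold BoundedLang at hnb
      push_neg at hnb
      obtain ⟨w, hw⟩ := hnb
      obtain ⟨q, hq⟩ := freq_fiber (M.run w) (fun _ => True)
        (by simp; exact Filter.atTop_neBot)
      rw [Filter.frequently_atTop] at hq
      obtain ⟨n₀, -, -, hq0⟩ := hq 0
      obtain ⟨n₁, hn₁, -, hq1⟩ := hq (n₀ + 1)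
      have hqq : M.run w n₀ = M.run w n₁ := by rw [hq0, hq1]
      have h01 : n₀ < n₁ := by omega
      obtain ⟨⟨w2, hw2a, hw2L⟩, ⟨w1, hw1a, hw1L⟩⟩ := hw n₁
      obtain ⟨xh1, x1, m1, hx1ne, hfr1, hmx1, hiff1⟩ :=
        key_construction M c w w1 n₀ n₁ h01 hqq hw1a
      obtain ⟨xh2, x2, m2, hx2ne, hfr2, hmx2, hiff2⟩ :=
        key_construction M c w w2 n₀ n₁ h01 hqq hw2a
      have hx0ne : sega w n₀ (n₁ - n₀) ≠ [] := by
        intro h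
        have := congrArg List.length h
        simp at this
        omega
      have hodd1 : Odd m1 := by
        obtain ⟨m', hodd', hfr', hmx'⟩ := (hMc w1).mp hw1L
        have hle1 : m' ≤ m1 := hmx1 m' hfr'
        have hle2 : m1 ≤ m' := hmx' m1 hfr1
        have : m1 = m' := by omega
        rwa [this]
      have hnodd2 : ¬ Odd m2 := fun h => hw2L ((hMc w2).mpr ⟨m2, h, hfr2, hmx2⟩)
      refine ⟨sega w 0 n₀, xh1, xh2, sega w n₀ (n₁ - n₀), x1, x2, hx0ne, hx1ne, hx2ne, ?_, ?_⟩
      · intro v hv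
        rw [mem_lso_iff _ _ _ _ hx1ne] at hv
        obtain ⟨k, rfl⟩ := hv
        exact (hMc _).mpr ((hiff1 k).mpr hodd1)
      · apply Set.eq_empty_iff_forall_notMem.mpr
        rintro v ⟨hv1, hv2⟩
        rw [mem_lso_iff _ _ _ _ hx2ne] at hv1
        obtain ⟨k, rfl⟩ := hv1
        exact hnodd2 ((hiff2 k).mp ((hMc _).mp hv2))
    · rintro ⟨xh0, xh1, xh2, x0, x1, x2, h0, h1, h2, hsub, hdis⟩ hB
      obtain ⟨n, hn⟩ := hB (wordOf xh0 (perWord x0))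
      have hD : 0 < x0.length := List.length_pos_iff.mpr h0
      have hle : n ≤ xh0.length + n * x0.length := by
        have := Nat.le_mul_of_pos_right n hD
        omega
      have hW1 : canonW xh0 x0 xh1 x1 n ∈ LangStarOmega xh0 x0 xh1 x1 :=
        (mem_lso_iff _ _ _ _ h1 _).mpr ⟨n, rfl⟩
      have hW2 : canonW xh0 x0 xh2 x2 n ∈ LangStarOmega xh0 x0 xh2 x2 :=
        (mem_lso_iff _ _ _ _ h2 _).mpr ⟨n, rfl⟩
      have hW2L : canonW xh0 x0 xh2 x2 n ∉ L := by
        intro hmem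
        have : canonW xh0 x0 xh2 x2 n ∈ (LangStarOmega xh0 x0 xh2 x2 ∩ L) := ⟨hW2, hmem⟩
        rw [hdis] at this
        exact this
      cases hn with
      | inl h =>
        exact hW2L (h _ (fun i hi => canonW_agree xh0 x0 xh2 x2 h0 n i (lt_of_lt_of_le hi hle)))
      | inr h =>
        exact (h _ (fun i hi => canonW_agree xh0 x0 xh1 x1 h0 n i (lt_of_lt_of_le hi hle)))
          (hsub hW1)
end
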